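/- arXiv:2108.00979 — 9 statements merged into one kernel-verified Lean document; each statement's English description precedes it below -/
import Mathlib

section
/- Let n ≥ 1 and let α₁ ≥ α₂ ≥ ⋯ ≥ αₙ ≥ 0 be real numbers, and set ᾱ = α₁ + ⋯ + αₙ. Define z_I for nonempty I ⊆ {1,…,n+1} by z_I = α_{n} + α_{n−1} + ⋯ + α_{n+2−|I|} (i.e., z_I = Σ_{i=1}^{|I|−1} α_{n+1−i}) if n+1 ∈ I, and z_I = 0 otherwise. Let Γ = {x ∈ ℝ^{n+1} : Σ_{i=1}^{n+1} x_i = ᾱ, and Σ_{i∈I} x_i ≤ ᾱ − z_{I^c} for every nonempty I ⊆ {1,…,n+1}}, where I^c = {1,…,n+1}∖I. Then the image of Γ under the orthogonal projection ℝ^{n+1} → ℝⁿ omitting the last coordinate equals the set {x ∈ ℝⁿ : x_i ≥ 0 for all i, and Σ_{i∈I} x_i ≤ α₁ + ⋯ + α_k for every subset I ⊆ {1,…,n} of cardinality k, for every k ≥ 1}. -/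
open Finset

/-- The value `z_I` from the specialization of Postnikov's construction:
`z_I = α_n + α_{n-1} + ⋯ + α_{n+2-|I|}` (1-indexed) if `n+1 ∈ I`, and `0` otherwise.
Here `α : Fin n → ℝ` is 0-indexed, so `α_k` (1-indexed) is `α ⟨k-1⟩`. -/
def zval {n : ℕ} (α : Fin n → ℝ) (I : Finset (Fin (n + 1))) : ℝ :=
  if Fin.last n ∈ I then
    ∑ j ∈ Finset.univ.filter (fun j : Fin n => n + 1 - I.card ≤ (j : ℕ)), α j
  else 0

lemma zval_compl_of_not_last {n : ℕ} (α : Fin n → ℝ) (I : Finset (Fin (n + 1)))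
    (h : Fin.last n ∉ I) :
    zval α Iᶜ = ∑ j ∈ Finset.univ.filter (fun j : Fin n => I.card ≤ (j : ℕ)), α j := by
  have hmem : Fin.last n ∈ Iᶜ := Finset.mem_compl.mpr h
  have hle : I.card ≤ n + 1 := by
    simpa using Finset.card_le_univ I
  rw [zval, if_pos hmem, Finset.card_compl, Fintype.card_fin, Nat.sub_sub_self hle]

lemma alpha_split {n : ℕ} (α : Fin n → ℝ) (k : ℕ) :
    (∑ j ∈ Finset.univ.filter (fun j : Fin n => (j : ℕ) < k), α j) +
      (∑ j ∈ Finset.univ.filter (fun j : Fin n => k ≤ (j : ℕ)), α j) = ∑ j, α j := by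
  have h : Finset.univ.filter (fun j : Fin n => k ≤ (j : ℕ)) =
      Finset.univ.filter (fun j : Fin n => ¬ ((j : ℕ) < k)) := by
    ext j; simp [Nat.not_lt]
  rw [h]
  exact Finset.sum_filter_add_sum_filter_not _ _ _

/-- the orthogonal projection of the polyhedron `Γ` (defined by the equality
`Σ x_i = ᾱ` and the inequalities `Σ_{i∈I} x_i ≤ ᾱ − z_{I^c}`) omitting the last coordinate
equals the SIM-body `Λ(α₁,…,αₙ)`. -/
theorem sim_body_projection (n : ℕ) (hn : 1 ≤ n) (α : Fin n → ℝ)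
    (hdec : ∀ i j : Fin n, i ≤ j → α j ≤ α i) (hnonneg : ∀ i, 0 ≤ α i) :
    (fun x : Fin (n + 1) → ℝ => x ∘ Fin.castSucc) ''
        {x : Fin (n + 1) → ℝ | (∑ i, x i) = (∑ i, α i) ∧
          ∀ I : Finset (Fin (n + 1)), I.Nonempty →
            ∑ i ∈ I, x i ≤ (∑ i, α i) - zval α Iᶜ} =
      {x : Fin n → ℝ | (∀ i, 0 ≤ x i) ∧
        ∀ I : Finset (Fin n), I.Nonempty →
          ∑ i ∈ I, x i ≤ ∑ j ∈ Finset.univ.filter (fun j : Fin n => (j : ℕ) < I.card), α j} := by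
  ext y
  simp only [Set.mem_image, Set.mem_setOf_eq]
  constructor
  · rintro ⟨x, ⟨hsum, hineq⟩, rfl⟩
    constructor
    · intro i
      have hne : (({Fin.castSucc i} : Finset (Fin (n + 1)))ᶜ).Nonempty :=
        ⟨Fin.last n, Finset.mem_compl.mpr (by simp [(Fin.castSucc_lt_last i).ne'])⟩
      have h1 := hineq _ hne
      rw [compl_compl] at h1
      have hz : zval α ({Fin.castSucc i} : Finset (Fin (n + 1))) = 0 := by
        rw [zval, if_neg]
        simp [(Fin.castSucc_lt_last i).ne']
      rw [hz] at h1
      have h2 : (∑ j ∈ ({Fin.castSucc i} : Finset (Fin (n + 1)))ᶜ, x j)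
          + ∑ j ∈ ({Fin.castSucc i} : Finset (Fin (n + 1))), x j = ∑ j, x j :=
        Finset.sum_compl_add_sum _ _
      simp only [Finset.sum_singleton] at h2
      simp only [Function.comp_apply]
      linarith
    · intro I₀ hI₀
      have h1 := hineq (I₀.image Fin.castSucc) (hI₀.image _)
      have hnl : Fin.last n ∉ I₀.image Fin.castSucc := by
        simp only [Finset.mem_image]
        rintro ⟨j, _, hj⟩
        exact Fin.ne_of_lt (Fin.castSucc_lt_last j) hj
      rw [zval_compl_of_not_last α _ hnl,
        Finset.card_image_of_injective _ (Fin.castSucc_injective n)] at h1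
      rw [Finset.sum_image (fun a _ b _ h => Fin.castSucc_injective n h)] at h1
      have := alpha_split α I₀.card
      simp only [Function.comp_apply]
      linarith
  · intro hy
    set x : Fin (n + 1) → ℝ := Fin.snoc y ((∑ i, α i) - ∑ i, y i) with hx
    have hsum : ∑ i, x i = ∑ i, α i := by
      rw [Fin.sum_univ_castSucc]
      simp [hx, Fin.snoc_castSucc, Fin.snoc_last]
    refine ⟨x, ⟨hsum, ?_⟩, ?_⟩
    · intro I hI
      by_cases hl : Fin.last n ∈ I
      · have hz : zval α Iᶜ = 0 := by
          rw [zval, if_neg (by simp [hl])]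
        rw [hz, sub_zero, ← hsum]
        apply Finset.sum_le_sum_of_subset_of_nonneg (Finset.subset_univ I)
        intro i _ hiI
        have hne : i ≠ Fin.last n := fun h => hiI (h ▸ hl)
        have h2 : x (Fin.castSucc (i.castPred hne)) = y (i.castPred hne) := by
          rw [hx]; exact Fin.snoc_castSucc _ _ _
        rw [Fin.castSucc_castPred] at h2
        rw [h2]
        exact hy.1 _
      · set I₀ : Finset (Fin n) := I.preimage Fin.castSucc
          ((Fin.castSucc_injective n).injOn) with hI₀def
        have hII : I₀.image Fin.castSucc = I := by
          ext a
          simp only [Finset.mem_image, hI₀def, Finset.mem_preimage]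
          constructor
          · rintro ⟨j, hj, rfl⟩; exact hj
          · intro ha
            have hane : a ≠ Fin.last n := fun h => hl (h ▸ ha)
            exact ⟨a.castPred hane, by rwa [Fin.castSucc_castPred],
              Fin.castSucc_castPred a hane⟩
        have hcard : I₀.card = I.card := by
          rw [← hII, Finset.card_image_of_injective _ (Fin.castSucc_injective n)]
        have hI₀ne : I₀.Nonempty := by
          rw [← hII] at hI
          exact hI.of_image
        have hb := hy.2 I₀ hI₀ne
        rw [zval_compl_of_not_last α _ hl, ← hII,
          Finset.sum_image (fun a _ b _ h => Fin.castSucc_injective n h)]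
        have hsx : ∀ j ∈ I₀, x (Fin.castSucc j) = y j := by
          intro j _; rw [hx, Fin.snoc_castSucc]
        rw [Finset.sum_congr rfl hsx, Finset.card_image_of_injective _
          (Fin.castSucc_injective n)]
        have := alpha_split α I₀.card
        linarith
    · funext i
      simp [hx, Fin.snoc_castSucc]
end

section
/- Let n ≥ 1 and let α₁ ≥ α₂ ≥ ⋯ ≥ αₙ ≥ 0 be real numbers. Then the SIM-body Λ(α₁,…,αₙ) equals the convex hull of the set of all points obtained by permuting the coordinates of one of the vectors (α₁,…,α_k,0,…,0) ∈ ℝⁿ for k = 0,1,…,n. Moreover, if α₁ > α₂ > ⋯ > αₙ > 0, then these points are pairwise distinct and each of them is an extreme point (vertex) of Λ(α₁,…,αₙ). -/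
open Finset

/-- The SIM-body `Λ(α₁,…,αₙ)` for parameters `α : Fin n → ℝ` (0-indexed). -/
def SIM {n : ℕ} (α : Fin n → ℝ) : Set (Fin n → ℝ) :=
  {x | (∀ i, 0 ≤ x i) ∧ ∀ I : Finset (Fin n), I.Nonempty →
    ∑ i ∈ I, x i ≤ ∑ j ∈ Finset.univ.filter (fun j : Fin n => (j : ℕ) < I.card), α j}

/-- The vector `(α₁, …, α_k, 0, …, 0)`. -/
def prefixVec {n : ℕ} (α : Fin n → ℝ) (k : ℕ) : Fin n → ℝ :=
  fun i => if (i : ℕ) < k then α i else 0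

namespace SIMAux
variable {n : ℕ}

/-- prefix sum -/
noncomputable def PS (x : Fin n → ℝ) (m : ℕ) : ℝ :=
  ∑ j ∈ Finset.univ.filter (fun j : Fin n => (j : ℕ) < m), x j

lemma mem_SIM_iff (α : Fin n → ℝ) (x : Fin n → ℝ) :
    x ∈ SIM α ↔ (∀ i, 0 ≤ x i) ∧ ∀ I : Finset (Fin n), I.Nonempty →
      ∑ i ∈ I, x i ≤ PS α I.card := Iff.rfl

lemma filter_lt_zero : (Finset.univ.filter (fun j : Fin n => (j : ℕ) < 0)) = ∅ := by
  ext j; simp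

lemma filter_lt_succ (m : ℕ) (h : m < n) :
    (Finset.univ.filter (fun j : Fin n => (j : ℕ) < m + 1)) =
      insert ⟨m, h⟩ (Finset.univ.filter (fun j : Fin n => (j : ℕ) < m)) := by
  ext j
  simp only [mem_filter, mem_univ, true_and, mem_insert, Fin.ext_iff]
  omega

lemma filter_lt_of_ge (m : ℕ) (h : n ≤ m) :
    (Finset.univ.filter (fun j : Fin n => (j : ℕ) < m)) = Finset.univ := by
  ext j; simp only [mem_filter, mem_univ, true_and, iff_true]; exact lt_of_lt_of_le j.isLt h

lemma PS_zero (x : Fin n → ℝ) : PS x 0 = 0 := by simp [PS, filter_lt_zero]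

lemma PS_succ (x : Fin n → ℝ) {m : ℕ} (h : m < n) :
    PS x (m + 1) = PS x m + x ⟨m, h⟩ := by
  rw [PS, PS, filter_lt_succ m h, Finset.sum_insert (by simp)]
  ring

lemma PS_stable (x : Fin n → ℝ) {m : ℕ} (h : n ≤ m) : PS x m = PS x n := by
  rw [PS, PS, filter_lt_of_ge m h, filter_lt_of_ge n le_rfl]

lemma card_filter_lt (m : ℕ) :
    (Finset.univ.filter (fun j : Fin n => (j : ℕ) < m)).card = min m n := by
  induction m with
  | zero => simp [filter_lt_zero]
  | succ m ih =>
    rcases lt_or_ge m n with h | h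
    · rw [filter_lt_succ m h, Finset.card_insert_of_notMem (by simp)]
      omega
    · rw [filter_lt_of_ge _ (le_trans h (Nat.le_succ m)), Finset.card_univ, Fintype.card_fin]
      omega

lemma card_filter_lt_of_le {m : ℕ} (h : m ≤ n) :
    (Finset.univ.filter (fun j : Fin n => (j : ℕ) < m)).card = m := by
  rw [card_filter_lt]; omega

lemma PS_mono {x : Fin n → ℝ} (hx : ∀ i, 0 ≤ x i) {m m' : ℕ} (h : m ≤ m') :
    PS x m ≤ PS x m' := by
  apply Finset.sum_le_sum_of_subset_of_nonneg
  · intro j hj; simp only [mem_filter, mem_univ, true_and] at hj ⊢; omega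
  · intro i _ _; exact hx i

/-- any `m` coordinates of a decreasing vector sum to at most the first `m`. -/
lemma sum_le_PS {x : Fin n → ℝ} (hxdec : ∀ i j : Fin n, i ≤ j → x j ≤ x i)
    (I : Finset (Fin n)) : ∑ i ∈ I, x i ≤ PS x I.card := by
  suffices H : ∀ m (I : Finset (Fin n)), I.card = m → ∑ i ∈ I, x i ≤ PS x m from
    H I.card I rfl
  intro m
  induction m with
  | zero =>
    intro I hI
    rw [Finset.card_eq_zero] at hI
    simp [hI, PS_zero]
  | succ m ih =>
    intro I hI
    have hne : I.Nonempty := by rw [← Finset.card_pos, hI]; omega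
    set M := I.max' hne with hM
    have hMI : M ∈ I := I.max'_mem hne
    have hcard : m ≤ (M : ℕ) := by
      have hsub : I ⊆ Finset.Iic M := fun j hj => by
        simp only [Finset.mem_Iic]; exact I.le_max' j hj
      have := Finset.card_le_card hsub
      rw [hI, Fin.card_Iic] at this
      omega
    have hmn : m < n := lt_of_le_of_lt hcard M.isLt
    have herase : (I.erase M).card = m := by rw [Finset.card_erase_of_mem hMI, hI]; omega
    have h1 : ∑ i ∈ I.erase M, x i ≤ PS x m := ih _ herase
    have h2 : x M ≤ x ⟨m, hmn⟩ := hxdec ⟨m, hmn⟩ M (by rw [Fin.le_def]; exact hcard)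
    have := Finset.add_sum_erase I x hMI
    rw [PS_succ x hmn]
    linarith
end SIMAux
namespace SIMAux
variable {n : ℕ}

lemma SIM_convex (α : Fin n → ℝ) : Convex ℝ (SIM α) := by
  intro x hx y hy a b ha hb hab
  constructor
  · intro i
    have := hx.1 i; have := hy.1 i
    have : 0 ≤ a * x i + b * y i := by positivity
    simpa using this
  · intro I hI
    have hx2 := hx.2 I hI
    have hy2 := hy.2 I hI
    have : ∑ i ∈ I, (a • x + b • y) i = a * ∑ i ∈ I, x i + b * ∑ i ∈ I, y i := by
      simp [Finset.mul_sum, Finset.sum_add_distrib]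
    rw [this]
    calc a * ∑ i ∈ I, x i + b * ∑ i ∈ I, y i
        ≤ a * PS α I.card + b * PS α I.card := by
          apply add_le_add (mul_le_mul_of_nonneg_left hx2 ha)
            (mul_le_mul_of_nonneg_left hy2 hb)
      _ = PS α I.card := by rw [← add_mul, hab, one_mul]

lemma SIM_isClosed (α : Fin n → ℝ) : IsClosed (SIM α) := by
  have h : SIM α = (⋂ i, {x : Fin n → ℝ | 0 ≤ x i}) ∩
      ⋂ I : Finset (Fin n), {x : Fin n → ℝ | I.Nonempty → ∑ i ∈ I, x i ≤ PS α I.card} := by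
    ext x
    simp only [SIM, Set.mem_setOf_eq, Set.mem_inter_iff, Set.mem_iInter]
    rfl
  rw [h]
  apply IsClosed.inter
  · exact isClosed_iInter fun i => isClosed_le continuous_const (continuous_apply i)
  · refine isClosed_iInter fun I => ?_
    by_cases hI : I.Nonempty
    · have : {x : Fin n → ℝ | I.Nonempty → ∑ i ∈ I, x i ≤ PS α I.card}
          = {x : Fin n → ℝ | ∑ i ∈ I, x i ≤ PS α I.card} := by
        ext x; simp [hI]
      rw [this]
      exact isClosed_le (by continuity) continuous_const
    · have : {x : Fin n → ℝ | I.Nonempty → ∑ i ∈ I, x i ≤ PS α I.card} = Set.univ := by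
        ext x; simp [hI]
      rw [this]; exact isClosed_univ

lemma SIM_isCompact (α : Fin n → ℝ) : IsCompact (SIM α) := by
  have hsub : SIM α ⊆ Set.pi Set.univ (fun _ : Fin n => Set.Icc (0:ℝ) (PS α 1)) := by
    intro x hx
    intro i _
    refine ⟨hx.1 i, ?_⟩
    have h := hx.2 {i} ⟨i, Finset.mem_singleton_self i⟩
    simpa [PS, Finset.card_singleton] using h
  exact IsCompact.of_isClosed_subset
    (isCompact_univ_pi fun _ => isCompact_Icc) (SIM_isClosed α) hsub

lemma sum_comp_perm (x : Fin n → ℝ) (σ : Equiv.Perm (Fin n)) (I : Finset (Fin n)) :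
    ∑ i ∈ I, x (σ i) = ∑ j ∈ I.image σ, x j := by
  rw [Finset.sum_image (fun a _ b _ h => σ.injective h)]

lemma SIM_perm {α x : Fin n → ℝ} (hx : x ∈ SIM α) (σ : Equiv.Perm (Fin n)) :
    x ∘ σ ∈ SIM α := by
  constructor
  · intro i; exact hx.1 (σ i)
  · intro I hI
    have hcard : (I.image σ).card = I.card :=
      Finset.card_image_of_injective I σ.injective
    have : ∑ i ∈ I, (x ∘ σ) i = ∑ j ∈ I.image σ, x j := sum_comp_perm x σ I
    rw [this, ← hcard] at *
    exact hx.2 (I.image σ) (hI.image σ)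

end SIMAux
namespace SIMAux
variable {n : ℕ}

lemma vertex_mem_SIM {α : Fin n → ℝ} (hdec : ∀ i j : Fin n, i ≤ j → α j ≤ α i)
    (hnonneg : ∀ i, 0 ≤ α i) (k : ℕ) (σ : Equiv.Perm (Fin n)) :
    prefixVec α k ∘ σ ∈ SIM α := by
  constructor
  · intro i
    by_cases h : ((σ i : ℕ) < k) <;> simp [prefixVec, h, hnonneg (σ i)]
  · intro I hI
    have h1 : ∑ i ∈ I, (prefixVec α k ∘ σ) i = ∑ j ∈ I.image σ, prefixVec α k j :=
      sum_comp_perm (prefixVec α k) σ I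
    have h2 : ∑ j ∈ I.image σ, prefixVec α k j
        = ∑ j ∈ (I.image σ).filter (fun j : Fin n => (j : ℕ) < k), α j := by
      rw [Finset.sum_filter]
      exact Finset.sum_congr rfl fun j _ => rfl
    set J := (I.image σ).filter (fun j : Fin n => (j : ℕ) < k) with hJ
    have h3 : ∑ j ∈ J, α j ≤ PS α J.card := sum_le_PS hdec J
    have h4 : J.card ≤ I.card := by
      calc J.card ≤ (I.image σ).card := Finset.card_filter_le _ _
        _ = I.card := Finset.card_image_of_injective I σ.injective
    calc ∑ i ∈ I, (prefixVec α k ∘ σ) i = ∑ j ∈ J, α j := by rw [h1, h2]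
      _ ≤ PS α J.card := h3
      _ ≤ PS α I.card := PS_mono hnonneg h4

lemma combo_eq {a b s₁ s₂ c : ℝ} (h : a * s₁ + b * s₂ = c) (h1 : s₁ ≤ c) (h2 : s₂ ≤ c)
    (ha : 0 < a) (hb : 0 < b) (hab : a + b = 1) : s₁ = c ∧ s₂ = c := by
  have key : a * c + b * c = c := by rw [← add_mul, hab, one_mul]
  constructor
  · by_contra h'
    have hlt : s₁ < c := lt_of_le_of_ne h1 h'
    have k1 : a * s₁ < a * c := mul_lt_mul_of_pos_left hlt ha
    have k2 : b * s₂ ≤ b * c := mul_le_mul_of_nonneg_left h2 hb.le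
    linarith
  · by_contra h'
    have hlt : s₂ < c := lt_of_le_of_ne h2 h'
    have k1 : b * s₂ < b * c := mul_lt_mul_of_pos_left hlt hb
    have k2 : a * s₁ ≤ a * c := mul_le_mul_of_nonneg_left h1 ha.le
    linarith

lemma vertex_extreme {α : Fin n → ℝ} (hdec : ∀ i j : Fin n, i ≤ j → α j ≤ α i)
    (hnonneg : ∀ i, 0 ≤ α i) (k : ℕ) (hk : k ≤ n) (σ : Equiv.Perm (Fin n)) :
    prefixVec α k ∘ σ ∈ Set.extremePoints ℝ (SIM α) := by
  set v := prefixVec α k ∘ σ with hv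
  have hvmem : v ∈ SIM α := vertex_mem_SIM hdec hnonneg k σ
  rw [mem_extremePoints]
  refine ⟨hvmem, ?_⟩
  intro y hy z hz hseg
  obtain ⟨a, b, ha, hb, hab, habv⟩ := hseg
  -- the tight prefix sets
  set I : ℕ → Finset (Fin n) := fun m => Finset.univ.filter (fun i => (σ i : ℕ) < m) with hIdef
  have hIimage : ∀ m, (I m).image σ = Finset.univ.filter (fun j : Fin n => (j : ℕ) < m) := by
    intro m
    ext j
    simp only [Finset.mem_image, hIdef, mem_filter, mem_univ, true_and]
    constructor
    · rintro ⟨i, hi, rfl⟩; exact hi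
    · intro hj; exact ⟨σ.symm j, by simpa using hj, by simp⟩
  have hIcard : ∀ m, m ≤ k → (I m).card = m := by
    intro m hm
    have : (I m).card = ((I m).image σ).card :=
      (Finset.card_image_of_injective _ σ.injective).symm
    rw [this, hIimage m, card_filter_lt_of_le (le_trans hm hk)]
  have hsumv : ∀ m, m ≤ k → ∑ i ∈ I m, v i = PS α m := by
    intro m hm
    have h1 : ∑ i ∈ I m, v i = ∑ j ∈ (I m).image σ, prefixVec α k j :=
      sum_comp_perm (prefixVec α k) σ (I m)
    rw [h1, hIimage m, PS]
    apply Finset.sum_congr rfl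
    intro j hj
    simp only [mem_filter, mem_univ, true_and] at hj
    exact if_pos (lt_of_lt_of_le hj hm)
  -- key: any w in SIM with the tight conditions equals v
  have main : ∀ w ∈ SIM α, (∀ m, 1 ≤ m → m ≤ k → ∑ i ∈ I m, w i = PS α m) →
      (∀ i, k ≤ (σ i : ℕ) → w i = 0) → w = v := by
    intro w hw htight hzero
    have htight0 : ∀ m, m ≤ k → ∑ i ∈ I m, w i = PS α m := by
      intro m hm
      rcases Nat.eq_zero_or_pos m with rfl | hm1
      · have : I 0 = ∅ := by ext i; simp [hIdef]
        simp [this, PS_zero]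
      · exact htight m hm1 hm
    funext i
    by_cases hik : (σ i : ℕ) < k
    · set m := (σ i : ℕ) with hmdef
      have hmn : m < n := (σ i).isLt
      have hinsert : I (m + 1) = insert i (I m) := by
        ext i'
        simp only [hIdef, mem_filter, mem_univ, true_and, Finset.mem_insert]
        constructor
        · intro h
          rcases Nat.lt_succ_iff_lt_or_eq.mp h with h | h
          · exact Or.inr h
          · left
            apply σ.injective
            exact Fin.ext h
        · rintro (rfl | h)
          · omega
          · omega
      have hni : i ∉ I m := by simp [hIdef, hmdef]
      have hsum : ∑ i' ∈ I (m+1), w i' = w i + ∑ i' ∈ I m, w i' := by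
        rw [hinsert, Finset.sum_insert hni]
      have e1 := htight0 (m+1) hik
      have e2 := htight0 m (le_of_lt hik)
      have e3 : PS α (m+1) = PS α m + α ⟨m, hmn⟩ := PS_succ α hmn
      have : w i = α ⟨m, hmn⟩ := by rw [hsum, e2] at e1; linarith
      rw [this, hv]
      simp only [Function.comp_apply, prefixVec, if_pos hik]
      exact (if_pos (show (σ i : ℕ) < k from hik)).symm
    · have h0 : w i = 0 := hzero i (le_of_not_gt hik)
      rw [h0, hv]
      simp [Function.comp_apply, prefixVec, hik]
  -- derive the tight conditions for y and z
  have htsums : ∀ m, 1 ≤ m → m ≤ k →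
      (∑ i ∈ I m, y i = PS α m ∧ ∑ i ∈ I m, z i = PS α m) := by
    intro m h1 hm
    have hne : (I m).Nonempty := by
      rw [← Finset.card_pos, hIcard m hm]; omega
    have hy2 : ∑ i ∈ I m, y i ≤ PS α m := by
      have := hy.2 (I m) hne; rwa [hIcard m hm] at this
    have hz2 : ∑ i ∈ I m, z i ≤ PS α m := by
      have := hz.2 (I m) hne; rwa [hIcard m hm] at this
    have hcombo : a * ∑ i ∈ I m, y i + b * ∑ i ∈ I m, z i = PS α m := by
      have : ∑ i ∈ I m, (a • y + b • z) i = PS α m := by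
        rw [habv]; exact hsumv m hm
      simpa [Finset.mul_sum, Finset.sum_add_distrib] using this
    exact combo_eq hcombo hy2 hz2 ha hb hab
  have hzeros : ∀ i, k ≤ (σ i : ℕ) → (y i = 0 ∧ z i = 0) := by
    intro i hi
    have hv0 : v i = 0 := by simp [hv, Function.comp_apply, prefixVec, not_lt.mpr hi]
    have hcombo : a * y i + b * z i = 0 := by
      have : (a • y + b • z) i = v i := by rw [habv]
      simpa [hv0] using this
    have hy0 := hy.1 i
    have hz0 := hz.1 i
    constructor <;> nlinarith
  constructor
  · exact main y hy (fun m h1 hm => (htsums m h1 hm).1) (fun i hi => (hzeros i hi).1)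
  · exact main z hz (fun m h1 hm => (htsums m h1 hm).2) (fun i hi => (hzeros i hi).2)

lemma sum_univ_vertex (α : Fin n → ℝ) (k : ℕ) (σ : Equiv.Perm (Fin n)) :
    ∑ i, (prefixVec α k ∘ σ) i = PS α k := by
  have h1 : ∑ i, (prefixVec α k ∘ σ) i = ∑ i, prefixVec α k i :=
    Equiv.sum_comp σ (prefixVec α k)
  rw [h1, PS, Finset.sum_filter]
  exact Finset.sum_congr rfl fun j _ => rfl

lemma PS_lt {α : Fin n → ℝ} (hpos : ∀ i, 0 < α i) {k l : ℕ} (h : k < l) (hl : l ≤ n) :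
    PS α k < PS α l := by
  obtain ⟨m, rfl⟩ : ∃ m, l = m + 1 := ⟨l - 1, by omega⟩
  have hmn : m < n := by omega
  rw [PS_succ α hmn]
  have h1 : PS α k ≤ PS α m := PS_mono (fun i => le_of_lt (hpos i)) (by omega)
  have := hpos ⟨m, hmn⟩
  linarith

lemma vertex_k_inj {α : Fin n → ℝ} (hpos : ∀ i, 0 < α i) (k l : ℕ) (hk : k ≤ n) (hl : l ≤ n)
    (σ τ : Equiv.Perm (Fin n)) (h : prefixVec α k ∘ σ = prefixVec α l ∘ τ) : k = l := by
  have hsum : PS α k = PS α l := by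
    rw [← sum_univ_vertex α k σ, ← sum_univ_vertex α l τ, h]
  rcases lt_trichotomy k l with hkl | hkl | hkl
  · exact absurd hsum (ne_of_lt (PS_lt hpos hkl hl))
  · exact hkl
  · exact absurd hsum.symm (ne_of_lt (PS_lt hpos hkl hk))

end SIMAux
namespace SIMAux
variable {n : ℕ}

lemma perturb {α x : Fin n → ℝ} (hdec : ∀ i j : Fin n, i ≤ j → α j ≤ α i)
    (hnonneg : ∀ i, 0 ≤ α i) (hx : x ∈ SIM α)
    (hxdec : ∀ i j : Fin n, i ≤ j → x j ≤ x i)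
    (hne : ∀ k ≤ n, x ≠ prefixVec α k) :
    ∃ d : Fin n → ℝ, d ≠ 0 ∧ x + d ∈ SIM α ∧ x - d ∈ SIM α := by
  have hx2 : ∀ I : Finset (Fin n), I.Nonempty → ∑ i ∈ I, x i ≤ PS α I.card := hx.2
  have Fg : ∀ m ≤ n, PS x m ≤ PS α m := by
    intro m hm
    rcases Nat.eq_zero_or_pos m with rfl | hm1
    · simp [PS_zero]
    · have hcard : (Finset.univ.filter (fun j : Fin n => (j : ℕ) < m)).card = m :=
        card_filter_lt_of_le hm
      have hne' : (Finset.univ.filter (fun j : Fin n => (j : ℕ) < m)).Nonempty := by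
        rw [← Finset.card_pos, hcard]; omega
      have := hx2 _ hne'
      rwa [hcard] at this
  have hex : ∃ i : Fin n, x i ≠ α i := by
    by_contra h
    push_neg at h
    apply hne n le_rfl
    funext i
    rw [h i, prefixVec, if_pos i.isLt]
  obtain ⟨i0, hi0⟩ := hex
  set F := Finset.univ.filter (fun i : Fin n => x i ≠ α i) with hF
  have hFne : F.Nonempty := ⟨i0, by simp [hF, hi0]⟩
  set t := F.min' hFne with ht
  have hxtne : x t ≠ α t := (Finset.mem_filter.mp (F.min'_mem hFne)).2
  have F0 : ∀ i : Fin n, i < t → x i = α i := by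
    intro i hi
    by_contra hne'
    have : t ≤ i := F.min'_le i (by simp [hF, hne'])
    exact absurd hi (not_lt.mpr this)
  have F1 : ∀ m, m ≤ (t : ℕ) → PS x m = PS α m := by
    intro m
    induction m with
    | zero => intro _; simp [PS_zero]
    | succ m ih =>
      intro h
      have hmn : m < n := by have := t.isLt; omega
      have heq : x ⟨m, hmn⟩ = α ⟨m, hmn⟩ :=
        F0 ⟨m, hmn⟩ (by rw [Fin.lt_def]; exact Nat.lt_of_succ_le h)
      rw [PS_succ x hmn, PS_succ α hmn, ih (by omega), heq]
  have hxt_lt : x t < α t := by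
    have h1 := Fg ((t : ℕ) + 1) t.isLt
    rw [PS_succ x t.isLt, PS_succ α t.isLt, F1 (t : ℕ) le_rfl] at h1
    simp only [Fin.eta] at h1
    exact lt_of_le_of_ne (by linarith) hxtne
  have hxt_pos : 0 < x t := by
    rcases lt_or_ge 0 (x t) with h | h
    · exact h
    · exfalso
      apply hne (t : ℕ) (le_of_lt t.isLt)
      funext i
      rcases lt_or_ge (i : ℕ) (t : ℕ) with hi | hi
      · rw [prefixVec, if_pos hi]; exact F0 i (by rwa [Fin.lt_def])
      · rw [prefixVec, if_neg (not_lt.mpr hi)]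
        have h1 : x i ≤ x t := hxdec t i (by rwa [Fin.le_def])
        have h2 : 0 ≤ x i := hx.1 i
        linarith
  by_cases hB : ∃ m, (t : ℕ) < m ∧ m ≤ n ∧ PS x m = PS α m
  · -- Case B : there is a tight prefix after t
    classical
    set mstar := Nat.find hB with hmstar
    obtain ⟨htm, hmn, heq⟩ := Nat.find_spec hB
    rw [← hmstar] at htm hmn heq
    have hstrict : ∀ m, (t : ℕ) < m → m < mstar → PS x m < PS α m := by
      intro m h1 h2
      have h3 : m ≤ n := le_trans (le_of_lt h2) hmn
      have h4 := Nat.find_min hB (hmstar ▸ h2)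
      push_neg at h4
      exact lt_of_le_of_ne (Fg m h3) (h4 h1 h3)
    have G1 : (t : ℕ) + 2 ≤ mstar := by
      have hlt : PS x ((t : ℕ) + 1) < PS α ((t : ℕ) + 1) := by
        rw [PS_succ x t.isLt, PS_succ α t.isLt, F1 (t : ℕ) le_rfl]
        simp only [Fin.eta]
        linarith
      rcases Nat.lt_or_ge mstar ((t : ℕ) + 2) with h | h
      · exfalso
        have heqt : mstar = (t : ℕ) + 1 := by omega
        rw [heqt] at heq
        linarith
      · exact h
    have hj_lt : mstar - 1 < n := by omega
    set j : Fin n := ⟨mstar - 1, hj_lt⟩ with hj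
    have hjval : (j : ℕ) = mstar - 1 := rfl
    have htj : (t : ℕ) < (j : ℕ) := by rw [hjval]; omega
    have htjF : t < j := by rwa [Fin.lt_def]
    have htjle : t ≤ j := le_of_lt htjF
    have hsucc : mstar - 1 + 1 = mstar := by omega
    have G2 : α j < x j := by
      have e1 : PS x (mstar - 1 + 1) = PS x (mstar - 1) + x j := PS_succ x hj_lt
      have e2 : PS α (mstar - 1 + 1) = PS α (mstar - 1) + α j := PS_succ α hj_lt
      rw [hsucc] at e1 e2
      have e3 : PS x (mstar - 1) < PS α (mstar - 1) := hstrict _ (by omega) (by omega)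
      rw [e1, e2] at heq
      linarith
    have hxj_pos : 0 < x j := lt_of_le_of_lt (hnonneg j) G2
    have hxj_le_xt : x j ≤ x t := hxdec t j htjle
    have G4 : ∀ (m : ℕ) (h : m < n), mstar ≤ m → x ⟨m, h⟩ < x j := by
      intro m h hm
      have hmsn : mstar < n := lt_of_le_of_lt hm h
      have k1 : x ⟨m, h⟩ ≤ x ⟨mstar, hmsn⟩ :=
        hxdec ⟨mstar, hmsn⟩ ⟨m, h⟩ (by rw [Fin.le_def]; exact hm)
      have k2 : x ⟨mstar, hmsn⟩ ≤ α ⟨mstar, hmsn⟩ := by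
        have := Fg (mstar + 1) (by omega)
        rw [PS_succ x hmsn, PS_succ α hmsn, heq] at this
        linarith
      have k3 : α ⟨mstar, hmsn⟩ ≤ α j :=
        hdec j ⟨mstar, hmsn⟩ (by rw [Fin.le_def]; exact Nat.sub_le mstar 1)
      linarith
    have slack : ∀ I : Finset (Fin n), ((t ∈ I ∧ j ∉ I) ∨ (j ∈ I ∧ t ∉ I)) →
        ∑ i ∈ I, x i < PS α I.card := by
      intro I hI
      have hcI : t ∈ I ∨ j ∈ I := by tauto
      have hm1 : 1 ≤ I.card := by
        rcases hcI with h | h <;> exact Finset.card_pos.mpr ⟨_, h⟩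
      have hmn' : I.card ≤ n := by
        have := Finset.card_le_univ I
        rwa [Fintype.card_fin] at this
      set m := I.card with hm
      rcases le_or_gt m ((t : ℕ) + 1) with hcase | hcase
      · obtain ⟨m', hm'⟩ : ∃ m', m = m' + 1 := ⟨m - 1, by omega⟩
        have hm't : m' ≤ (t : ℕ) := by omega
        have hm'n : m' < n := by have := t.isLt; omega
        obtain ⟨c, hcI', hcle⟩ : ∃ c, c ∈ I ∧ x c ≤ x t := by
          rcases hI with ⟨h1, _⟩ | ⟨h1, _⟩
          · exact ⟨t, h1, le_rfl⟩
          · exact ⟨j, h1, hxj_le_xt⟩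
        have e1 : x c + ∑ i ∈ I.erase c, x i = ∑ i ∈ I, x i := Finset.add_sum_erase I x hcI'
        have e2 : ∑ i ∈ I.erase c, x i ≤ PS x m' := by
          have hc : (I.erase c).card = m' := by
            rw [Finset.card_erase_of_mem hcI', ← hm, hm']; omega
          rw [← hc]
          exact sum_le_PS hxdec _
        have e3 : PS x m' = PS α m' := F1 m' hm't
        have e4 : α t ≤ α ⟨m', hm'n⟩ := hdec ⟨m', hm'n⟩ t (by rw [Fin.le_def]; exact hm't)
        have e5 : PS α m = PS α m' + α ⟨m', hm'n⟩ := by rw [hm', PS_succ α hm'n]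
        rw [← e1, e5]
        linarith
      · rcases lt_or_ge m mstar with hcase2 | hcase2
        · have h1 := sum_le_PS hxdec I
          have h2 := hstrict m (by omega) hcase2
          rw [← hm] at h1
          linarith
        · obtain ⟨c, o, hcI', hoI', hco, hxo⟩ : ∃ c o, c ∈ I ∧ o ∉ I ∧ (o : ℕ) < mstar ∧
              x j ≤ x o := by
            rcases hI with ⟨h1, h2⟩ | ⟨h1, h2⟩
            · refine ⟨t, j, h1, h2, ?_, le_rfl⟩
              rw [hjval]; omega
            · exact ⟨j, t, h1, h2, by omega, hxj_le_xt⟩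
          have hmn2 : m < n := by
            rcases lt_or_ge m n with h | h
            · exact h
            · exfalso
              have hIuniv : I = Finset.univ := Finset.eq_univ_of_card I (by
                rw [← hm, Fintype.card_fin]; omega)
              rw [hIuniv] at hoI'
              exact hoI' (Finset.mem_univ o)
          have e1 : ∑ i ∈ insert o I, x i ≤ PS x (m + 1) := by
            have hcard : (insert o I).card = m + 1 := by
              rw [Finset.card_insert_of_notMem hoI', hm]
            rw [← hcard]
            exact sum_le_PS hxdec _
          have e2 : ∑ i ∈ insert o I, x i = x o + ∑ i ∈ I, x i :=
            Finset.sum_insert hoI'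
          have e3 : PS x (m + 1) = PS x m + x ⟨m, hmn2⟩ := PS_succ x hmn2
          have e4 : PS x m ≤ PS α m := Fg m hmn'
          have e5 : x ⟨m, hmn2⟩ < x j := G4 m hmn2 hcase2
          rw [e2, e3] at e1
          linarith
    set T := (Finset.univ : Finset (Finset (Fin n))).filter
      (fun I => (t ∈ I ∧ j ∉ I) ∨ (j ∈ I ∧ t ∉ I)) with hT
    have hjt_ne : (t : Fin n) ≠ j := ne_of_lt htjF
    have hTne : T.Nonempty := ⟨{t}, by
      simp only [hT, Finset.mem_filter, Finset.mem_univ, true_and]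
      left
      refine ⟨Finset.mem_singleton_self t, ?_⟩
      rw [Finset.mem_singleton]
      exact fun h => hjt_ne h.symm⟩
    set s : Finset (Fin n) → ℝ := fun I => PS α I.card - ∑ i ∈ I, x i with hs
    set εs := T.inf' hTne s with hεs
    have hεs_pos : 0 < εs := by
      rw [hεs, Finset.lt_inf'_iff]
      intro I hI
      rw [hT, Finset.mem_filter] at hI
      have h2 := slack I hI.2
      show (0:ℝ) < PS α I.card - ∑ i ∈ I, x i
      linarith
    set ε := min (min (x t) (x j)) εs with hε
    have hε_pos : 0 < ε := lt_min (lt_min hxt_pos hxj_pos) hεs_pos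
    have hε_xt : ε ≤ x t := le_trans (min_le_left _ _) (min_le_left _ _)
    have hε_xj : ε ≤ x j := le_trans (min_le_left _ _) (min_le_right _ _)
    have hε_slack : ∀ I ∈ T, ε ≤ PS α I.card - ∑ i ∈ I, x i := fun I hI =>
      le_trans (min_le_right _ _) (Finset.inf'_le s hI)
    set d : Fin n → ℝ := (fun i => if i = t then ε else 0) + (fun i => if i = j then -ε else 0)
      with hd
    have hdi : ∀ i, d i = (if i = t then ε else 0) + (if i = j then -ε else 0) := fun i => rfl
    have hdt : d t = ε := by
      rw [hdi t, if_pos rfl, if_neg hjt_ne]; ring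
    have hsumd : ∀ I : Finset (Fin n),
        ∑ i ∈ I, d i = (if t ∈ I then ε else 0) + (if j ∈ I then -ε else 0) := by
      intro I
      calc ∑ i ∈ I, d i
          = ∑ i ∈ I, ((if i = t then ε else 0) + (if i = j then -ε else 0)) := by
            exact Finset.sum_congr rfl fun i _ => hdi i
        _ = (if t ∈ I then ε else 0) + (if j ∈ I then -ε else 0) := by
            rw [Finset.sum_add_distrib, Finset.sum_ite_eq' I t (fun _ => ε),
              Finset.sum_ite_eq' I j (fun _ => -ε)]
    refine ⟨d, ?_, ?_, ?_⟩
    · intro h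
      have h0 : d t = 0 := by rw [h]; rfl
      rw [hdt] at h0
      linarith
    · rw [mem_SIM_iff]
      constructor
      · intro i
        have hx1 := hx.1 i
        have e0 : (x + d) i = x i + ((if i = t then ε else 0) + (if i = j then -ε else 0)) := by
          rw [Pi.add_apply, hdi i]
        rw [e0]
        by_cases h1 : i = t
        · subst h1
          rw [if_pos rfl, if_neg hjt_ne]
          linarith
        · by_cases h2 : i = j
          · subst h2
            rw [if_neg h1, if_pos rfl]
            linarith
          · rw [if_neg h1, if_neg h2]
            linarith
      · intro I hIne
        have e0 : ∑ i ∈ I, (x + d) i = ∑ i ∈ I, x i + ∑ i ∈ I, d i := by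
          simp [Finset.sum_add_distrib]
        rw [e0, hsumd I]
        have hxI := hx2 I hIne
        by_cases h1 : t ∈ I <;> by_cases h2 : j ∈ I
        · rw [if_pos h1, if_pos h2]; linarith
        · rw [if_pos h1, if_neg h2]
          have hIT : I ∈ T := by
            rw [hT, Finset.mem_filter]
            exact ⟨Finset.mem_univ I, Or.inl ⟨h1, h2⟩⟩
          have := hε_slack I hIT
          linarith
        · rw [if_neg h1, if_pos h2]; linarith
        · rw [if_neg h1, if_neg h2]; linarith
    · rw [mem_SIM_iff]
      constructor
      · intro i
        have hx1 := hx.1 i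
        have e0 : (x - d) i = x i - ((if i = t then ε else 0) + (if i = j then -ε else 0)) := by
          rw [Pi.sub_apply, hdi i]
        rw [e0]
        by_cases h1 : i = t
        · subst h1
          rw [if_pos rfl, if_neg hjt_ne]
          linarith
        · by_cases h2 : i = j
          · subst h2
            rw [if_neg h1, if_pos rfl]
            linarith
          · rw [if_neg h1, if_neg h2]
            linarith
      · intro I hIne
        have e0 : ∑ i ∈ I, (x - d) i = ∑ i ∈ I, x i - ∑ i ∈ I, d i := by
          simp [Finset.sum_sub_distrib]
        rw [e0, hsumd I]
        have hxI := hx2 I hIne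
        by_cases h1 : t ∈ I <;> by_cases h2 : j ∈ I
        · rw [if_pos h1, if_pos h2]; linarith
        · rw [if_pos h1, if_neg h2]; linarith
        · rw [if_neg h1, if_pos h2]
          have hIT : I ∈ T := by
            rw [hT, Finset.mem_filter]
            exact ⟨Finset.mem_univ I, Or.inr ⟨h2, h1⟩⟩
          have := hε_slack I hIT
          linarith
        · rw [if_neg h1, if_neg h2]; linarith
  · -- Case A : no tight prefix after t
    push_neg at hB
    have claimA : ∀ I : Finset (Fin n), t ∈ I → ∑ i ∈ I, x i < PS α I.card := by
      intro I htI
      have hm1 : 1 ≤ I.card := Finset.card_pos.mpr ⟨t, htI⟩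
      have hmn' : I.card ≤ n := by
        have := Finset.card_le_univ I
        rwa [Fintype.card_fin] at this
      set m := I.card with hm
      rcases le_or_gt m ((t : ℕ) + 1) with hcase | hcase
      · obtain ⟨m', hm'⟩ : ∃ m', m = m' + 1 := ⟨m - 1, by omega⟩
        have hm't : m' ≤ (t : ℕ) := by omega
        have hm'n : m' < n := by have := t.isLt; omega
        have e1 : x t + ∑ i ∈ I.erase t, x i = ∑ i ∈ I, x i := Finset.add_sum_erase I x htI
        have e2 : ∑ i ∈ I.erase t, x i ≤ PS x m' := by
          have hc : (I.erase t).card = m' := by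
            rw [Finset.card_erase_of_mem htI, ← hm, hm']; omega
          rw [← hc]
          exact sum_le_PS hxdec _
        have e3 : PS x m' = PS α m' := F1 m' hm't
        have e4 : α t ≤ α ⟨m', hm'n⟩ := hdec ⟨m', hm'n⟩ t (by rw [Fin.le_def]; exact hm't)
        have e5 : PS α m = PS α m' + α ⟨m', hm'n⟩ := by rw [hm', PS_succ α hm'n]
        rw [← e1, e5]
        linarith
      · have h1 := sum_le_PS hxdec I
        have h2 : PS x m < PS α m :=
          lt_of_le_of_ne (Fg m hmn') (hB m (by omega) hmn')
        rw [← hm] at h1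
        linarith
    set T := (Finset.univ : Finset (Finset (Fin n))).filter (fun I => t ∈ I) with hT
    have hTne : T.Nonempty := ⟨{t}, by simp [hT]⟩
    set s : Finset (Fin n) → ℝ := fun I => PS α I.card - ∑ i ∈ I, x i with hs
    set εs := T.inf' hTne s with hεs
    have hεs_pos : 0 < εs := by
      rw [hεs, Finset.lt_inf'_iff]
      intro I hI
      rw [hT, Finset.mem_filter] at hI
      have h2 := claimA I hI.2
      show (0:ℝ) < PS α I.card - ∑ i ∈ I, x i
      linarith
    set ε := min (x t) εs with hε
    have hε_pos : 0 < ε := lt_min hxt_pos hεs_pos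
    have hε_xt : ε ≤ x t := min_le_left _ _
    have hε_slack : ∀ I ∈ T, ε ≤ PS α I.card - ∑ i ∈ I, x i := fun I hI =>
      le_trans (min_le_right _ _) (Finset.inf'_le s hI)
    set d : Fin n → ℝ := fun i => if i = t then ε else 0 with hd
    have hdi : ∀ i, d i = if i = t then ε else 0 := fun i => rfl
    have hdt : d t = ε := by rw [hdi t, if_pos rfl]
    have hsumd : ∀ I : Finset (Fin n), ∑ i ∈ I, d i = if t ∈ I then ε else 0 := by
      intro I
      calc ∑ i ∈ I, d i = ∑ i ∈ I, (if i = t then ε else 0) :=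
            Finset.sum_congr rfl fun i _ => hdi i
        _ = if t ∈ I then ε else 0 := Finset.sum_ite_eq' I t (fun _ => ε)
    refine ⟨d, ?_, ?_, ?_⟩
    · intro h
      have h0 : d t = 0 := by rw [h]; rfl
      rw [hdt] at h0
      linarith
    · rw [mem_SIM_iff]
      constructor
      · intro i
        have hx1 := hx.1 i
        have e0 : (x + d) i = x i + (if i = t then ε else 0) := by
          rw [Pi.add_apply, hdi i]
        rw [e0]
        by_cases h1 : i = t
        · subst h1; rw [if_pos rfl]; linarith
        · rw [if_neg h1]; linarith
      · intro I hIne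
        have e0 : ∑ i ∈ I, (x + d) i = ∑ i ∈ I, x i + ∑ i ∈ I, d i := by
          simp [Finset.sum_add_distrib]
        rw [e0, hsumd I]
        have hxI := hx2 I hIne
        by_cases h1 : t ∈ I
        · rw [if_pos h1]
          have hIT : I ∈ T := by
            rw [hT, Finset.mem_filter]
            exact ⟨Finset.mem_univ I, h1⟩
          have := hε_slack I hIT
          linarith
        · rw [if_neg h1]; linarith
    · rw [mem_SIM_iff]
      constructor
      · intro i
        have hx1 := hx.1 i
        have e0 : (x - d) i = x i - (if i = t then ε else 0) := by
          rw [Pi.sub_apply, hdi i]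
        rw [e0]
        by_cases h1 : i = t
        · subst h1; rw [if_pos rfl]; linarith
        · rw [if_neg h1]; linarith
      · intro I hIne
        have e0 : ∑ i ∈ I, (x - d) i = ∑ i ∈ I, x i - ∑ i ∈ I, d i := by
          simp [Finset.sum_sub_distrib]
        rw [e0, hsumd I]
        have hxI := hx2 I hIne
        by_cases h1 : t ∈ I
        · rw [if_pos h1]; linarith
        · rw [if_neg h1]; linarith

end SIMAux
namespace SIMAux
variable {n : ℕ}

lemma extremePoints_subset_V {α : Fin n → ℝ} (hdec : ∀ i j : Fin n, i ≤ j → α j ≤ α i)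
    (hnonneg : ∀ i, 0 ≤ α i) :
    Set.extremePoints ℝ (SIM α) ⊆
      {x : Fin n → ℝ | ∃ k ≤ n, ∃ σ : Equiv.Perm (Fin n), x = prefixVec α k ∘ σ} := by
  intro e he
  rw [mem_extremePoints] at he
  obtain ⟨heS, hext⟩ := he
  set σ := Tuple.sort (fun i => -e i) with hσ
  have hmono : Monotone ((fun i => -e i) ∘ σ) := Tuple.monotone_sort _
  set y := e ∘ σ with hy
  have hydec : ∀ i j : Fin n, i ≤ j → y j ≤ y i := by
    intro i j hij
    have h1 := hmono hij
    simp only [Function.comp_apply] at h1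
    simp only [hy, Function.comp_apply]
    linarith
  have hyS : y ∈ SIM α := SIM_perm heS σ
  by_cases hcase : ∀ k ≤ n, y ≠ prefixVec α k
  · exfalso
    obtain ⟨d, hd0, hd1, hd2⟩ := perturb hdec hnonneg hyS hydec hcase
    set d' : Fin n → ℝ := d ∘ ⇑σ⁻¹ with hd'
    have hcomp1 : (y + d) ∘ ⇑σ⁻¹ = e + d' := by
      funext i
      simp only [Function.comp_apply, Pi.add_apply, hy, hd', Function.comp_apply]
      simp
    have hcomp2 : (y - d) ∘ ⇑σ⁻¹ = e - d' := by
      funext i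
      simp only [Function.comp_apply, Pi.sub_apply, hy, hd', Function.comp_apply]
      simp
    have h1 : e + d' ∈ SIM α := by
      rw [← hcomp1]; exact SIM_perm hd1 σ⁻¹
    have h2 : e - d' ∈ SIM α := by
      rw [← hcomp2]; exact SIM_perm hd2 σ⁻¹
    have hseg : e ∈ openSegment ℝ (e - d') (e + d') := by
      refine ⟨1/2, 1/2, by norm_num, by norm_num, by norm_num, ?_⟩
      funext i
      simp only [Pi.add_apply, Pi.smul_apply, Pi.sub_apply, smul_eq_mul]
      ring
    have hconc := hext _ h2 _ h1 hseg
    apply hd0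
    have hd'0 : d' = 0 := by
      have := hconc.1
      have h3 : e - d' = e := this
      funext i
      have := congrFun h3 i
      simp only [Pi.sub_apply] at this
      simp only [Pi.zero_apply]
      linarith
    funext i
    have : d' (σ i) = 0 := by rw [hd'0]; rfl
    simpa [hd'] using this
  · push_neg at hcase
    obtain ⟨k, hk, hky⟩ := hcase
    refine ⟨k, hk, σ⁻¹, ?_⟩
    funext i
    have : y (σ⁻¹ i) = prefixVec α k (σ⁻¹ i) := by rw [hky]
    simpa [hy] using this

lemma V_finite (α : Fin n → ℝ) :
    Set.Finite {x : Fin n → ℝ | ∃ k ≤ n, ∃ σ : Equiv.Perm (Fin n), x = prefixVec α k ∘ σ} := by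
  apply Set.Finite.subset (Set.finite_range
    (fun p : Fin (n+1) × Equiv.Perm (Fin n) => prefixVec α (p.1 : ℕ) ∘ p.2))
  rintro x ⟨k, hk, σ, rfl⟩
  exact ⟨(⟨k, by omega⟩, σ), rfl⟩

end SIMAux

open SIMAux in
/-- the SIM-body is the convex hull of all coordinate permutations of the vectors
`(α₁,…,α_k,0,…,0)` for `k = 0,…,n`; moreover, for strictly decreasing positive parameters these
points are pairwise distinct (in particular, points coming from different `k` are distinct)
and each of them is an extreme point of the SIM-body. -/
theorem sim_body_vertices (n : ℕ) (hn : 1 ≤ n) (α : Fin n → ℝ)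
    (hdec : ∀ i j : Fin n, i ≤ j → α j ≤ α i) (hnonneg : ∀ i, 0 ≤ α i) :
    SIM α = convexHull ℝ
        {x : Fin n → ℝ | ∃ k ≤ n, ∃ σ : Equiv.Perm (Fin n), x = prefixVec α k ∘ σ} ∧
      ((∀ i j : Fin n, i < j → α j < α i) → (∀ i, 0 < α i) →
        (∀ k l : ℕ, k ≤ n → l ≤ n → ∀ σ τ : Equiv.Perm (Fin n),
            prefixVec α k ∘ σ = prefixVec α l ∘ τ → k = l) ∧
        (∀ k ≤ n, ∀ σ : Equiv.Perm (Fin n),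
            prefixVec α k ∘ σ ∈ Set.extremePoints ℝ (SIM α))) := by
  set V := {x : Fin n → ℝ | ∃ k ≤ n, ∃ σ : Equiv.Perm (Fin n), x = prefixVec α k ∘ σ} with hV
  constructor
  · apply Set.Subset.antisymm
    · have hKM := closure_convexHull_extremePoints (SIM_isCompact α) (SIM_convex α)
      have h1 : convexHull ℝ (Set.extremePoints ℝ (SIM α)) ⊆ convexHull ℝ V :=
        convexHull_mono (extremePoints_subset_V hdec hnonneg)
      have h2 : closure (convexHull ℝ (Set.extremePoints ℝ (SIM α)))
          ⊆ closure (convexHull ℝ V) := closure_mono h1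
      have h3 : closure (convexHull ℝ V) = convexHull ℝ V :=
        IsClosed.closure_eq ((V_finite α).isClosed_convexHull ℝ)
      calc SIM α = closure (convexHull ℝ (Set.extremePoints ℝ (SIM α))) := hKM.symm
        _ ⊆ closure (convexHull ℝ V) := h2
        _ = convexHull ℝ V := h3
    · apply convexHull_min ?_ (SIM_convex α)
      rintro x ⟨k, hk, σ, rfl⟩
      exact vertex_mem_SIM hdec hnonneg k σ
  · intro hstrict hpos
    exact ⟨fun k l hk hl σ τ h => vertex_k_inj hpos k l hk hl σ τ h,
      fun k hk σ => vertex_extreme hdec hnonneg k hk σ⟩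
end

section
/- Let α₁ ≥ ⋯ ≥ αₙ ≥ 0 be real numbers. Then the SIM-body Λ(α₁,…,αₙ) is a bounded (hence compact) subset of ℝⁿ, and every extreme point of Λ(α₁,…,αₙ) has all coordinates in ℤ if and only if all the parameters α₁,…,αₙ are integers. -/
open Finset

namespace SIMaux

variable {n : ℕ} (α : Fin n → ℝ)

/-- Partial sum bound function. -/
noncomputable def Fb (k : ℕ) : ℝ :=
  ∑ j ∈ Finset.univ.filter (fun j : Fin n => (j : ℕ) < k), α j

/-- Extension of `α` to `ℕ` by zero. -/
noncomputable def gb (j : ℕ) : ℝ := if h : j < n then α ⟨j, h⟩ else 0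

lemma mem_SIM_iff (x : Fin n → ℝ) :
    x ∈ SIM α ↔ (∀ i, 0 ≤ x i) ∧ ∀ I : Finset (Fin n), I.Nonempty →
      ∑ i ∈ I, x i ≤ Fb α I.card := Iff.rfl

lemma Fb_eq (k : ℕ) : Fb α k = ∑ j ∈ Finset.range k, gb α j := by
  classical
  rw [Fb, ← Finset.sum_filter_of_ne (s := Finset.range k) (f := gb α)
    (p := fun j => j < n) (by
      intro j hj h
      by_contra hn
      exact h (by simp [gb, hn]))]
  refine Finset.sum_bij' (fun (j : Fin n) _ => (j : ℕ))
    (fun (m : ℕ) hm => ⟨m, (Finset.mem_filter.1 hm).2⟩) ?_ ?_ ?_ ?_ ?_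
  · intro a ha
    simp only [Finset.mem_filter, Finset.mem_univ, true_and] at ha
    simp [Finset.mem_filter, Finset.mem_range, ha, a.isLt]
  · intro m hm
    simp only [Finset.mem_filter, Finset.mem_range] at hm
    simp [hm.1]
  · intro a ha; rfl
  · intro m hm; rfl
  · intro a ha
    simp [gb, a.isLt]

lemma gb_nonneg (hnonneg : ∀ i, 0 ≤ α i) (j : ℕ) : 0 ≤ gb α j := by
  unfold gb; split
  · exact hnonneg _
  · exact le_rfl


lemma gb_anti (hdec : ∀ i j : Fin n, i ≤ j → α j ≤ α i) (hnonneg : ∀ i, 0 ≤ α i)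
    {a b : ℕ} (hab : a ≤ b) : gb α b ≤ gb α a := by
  unfold gb
  split
  · next hb =>
      have ha : a < n := lt_of_le_of_lt hab hb
      simp only [ha, dif_pos]
      exact hdec ⟨a, ha⟩ ⟨b, hb⟩ hab
  · split
    · exact hnonneg _
    · exact le_rfl

lemma Fb_mono (hnonneg : ∀ i, 0 ≤ α i) {a b : ℕ} (hab : a ≤ b) : Fb α a ≤ Fb α b := by
  rw [Fb_eq, Fb_eq]
  exact Finset.sum_le_sum_of_subset_of_nonneg (Finset.range_subset_range.2 hab)
    (fun j _ _ => gb_nonneg α hnonneg j)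

lemma Fb_nonneg (hnonneg : ∀ i, 0 ≤ α i) (k : ℕ) : 0 ≤ Fb α k := by
  have := Fb_mono α hnonneg (Nat.zero_le k)
  simpa [Fb] using this

lemma Fb_concave (hdec : ∀ i j : Fin n, i ≤ j → α j ≤ α i) (hnonneg : ∀ i, 0 ≤ α i)
    {a b c d : ℕ} (hda : d ≤ a) (hdb : d ≤ b) (habcd : a + b = c + d) :
    Fb α c + Fb α d ≤ Fb α a + Fb α b := by
  have hbc : b ≤ c := by omega
  have hca : c - b = a - d := by omega
  rw [Fb_eq, Fb_eq, Fb_eq, Fb_eq]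
  have h1 : ∑ j ∈ Finset.range c, gb α j
      = ∑ j ∈ Finset.range b, gb α j + ∑ j ∈ Finset.Ico b c, gb α j := by
    simp only [Finset.range_eq_Ico]
    exact (Finset.sum_Ico_consecutive _ (Nat.zero_le b) hbc).symm
  have h2 : ∑ j ∈ Finset.range a, gb α j
      = ∑ j ∈ Finset.range d, gb α j + ∑ j ∈ Finset.Ico d a, gb α j := by
    simp only [Finset.range_eq_Ico]
    exact (Finset.sum_Ico_consecutive _ (Nat.zero_le d) hda).symm
  have h3 : ∑ j ∈ Finset.Ico b c, gb α j ≤ ∑ j ∈ Finset.Ico d a, gb α j := by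
    rw [Finset.sum_Ico_eq_sum_range, Finset.sum_Ico_eq_sum_range, hca]
    exact Finset.sum_le_sum fun i _ => gb_anti α hdec hnonneg (by omega)
  linarith

lemma sum_int {ι : Type*} (s : Finset ι) (f : ι → ℝ) (h : ∀ i ∈ s, ∃ m : ℤ, f i = m) :
    ∃ m : ℤ, ∑ i ∈ s, f i = m := by
  classical
  induction s using Finset.induction_on with
  | empty => exact ⟨0, by simp⟩
  | insert a s hx ih =>
      next =>
        obtain ⟨m, hm⟩ := h a (Finset.mem_insert_self a s)
        obtain ⟨M, hM⟩ := ih fun i hi => h i (Finset.mem_insert_of_mem hi)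
        exact ⟨m + M, by rw [Finset.sum_insert hx, hm, hM]; push_cast; ring⟩

lemma le_apply_of_strictMono {k : ℕ} (f : Fin k → ℕ) (hf : StrictMono f) (i : Fin k) :
    (i : ℕ) ≤ f i := by
  have H : ∀ m : ℕ, ∀ i : Fin k, (i : ℕ) = m → m ≤ f i := by
    intro m
    induction m with
    | zero => intro i _; exact Nat.zero_le _
    | succ m ih =>
        intro i h
        have hm : m < k := by omega
        have h1 : m ≤ f ⟨m, hm⟩ := ih ⟨m, hm⟩ rfl
        have h2 : f ⟨m, hm⟩ < f i := hf (by simp only [Fin.lt_def]; omega)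
        omega
  exact H _ i rfl

lemma sum_le_Fb (hdec : ∀ i j : Fin n, i ≤ j → α j ≤ α i) (hnonneg : ∀ i, 0 ≤ α i)
    (I : Finset (Fin n)) : ∑ i ∈ I, α i ≤ Fb α I.card := by
  classical
  set k := I.card with hk
  have hkn : k ≤ n := by
    have := Finset.card_le_univ I
    simpa [hk] using this
  let σ := I.orderIsoOfFin hk.symm
  have hσ : StrictMono fun i : Fin k => (((σ i : {x // x ∈ I}) : Fin n) : ℕ) := by
    intro a b hab
    exact σ.strictMono hab
  have h1 : ∑ i ∈ I, α i = ∑ i : Fin k, α ((σ i : {x // x ∈ I}) : Fin n) := by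
    rw [← Finset.sum_attach I α]
    exact (Equiv.sum_comp σ.toEquiv (fun a => α a.1)).symm
  have h2 : Fb α k = ∑ i : Fin k, gb α (i : ℕ) := by
    rw [Fb_eq]
    exact (Fin.sum_univ_eq_sum_range (fun j => gb α j) k).symm
  rw [h1, h2]
  refine Finset.sum_le_sum fun i _ => ?_
  have hik : (i : ℕ) < n := lt_of_lt_of_le i.isLt hkn
  have hle : (i : ℕ) ≤ (((σ i : {x // x ∈ I}) : Fin n) : ℕ) := le_apply_of_strictMono _ hσ i
  have : gb α (i : ℕ) = α ⟨(i : ℕ), hik⟩ := by simp [gb, hik]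
  rw [this]
  exact hdec _ _ hle

/-- The initial segment `{0,…,k-1}` as a finset of `Fin n`. -/
def Ik (n k : ℕ) : Finset (Fin n) := Finset.univ.filter (fun j : Fin n => (j : ℕ) < k)

lemma Fb_eq_sum_Ik (k : ℕ) : Fb α k = ∑ j ∈ Ik n k, α j := rfl

lemma card_Ik {k : ℕ} (hk : k ≤ n) : (Ik n k).card = k := by
  classical
  have : Ik n k = (Finset.range k).attachFin (fun m hm => by
      simp only [Finset.mem_range] at hm; omega) := by
    ext a
    simp [Ik, Finset.mem_attachFin]
  rw [this, Finset.card_attachFin, Finset.card_range]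

lemma Ik_succ {k : ℕ} (hk : k < n) : Ik n (k + 1) = insert ⟨k, hk⟩ (Ik n k) := by
  ext a
  simp only [Ik, Finset.mem_filter, Finset.mem_univ, true_and, Finset.mem_insert, Fin.ext_iff]
  omega

lemma not_mem_Ik {k : ℕ} (hk : k < n) : (⟨k, hk⟩ : Fin n) ∉ Ik n k := by
  simp [Ik]

lemma alpha_mem (hdec : ∀ i j : Fin n, i ≤ j → α j ≤ α i) (hnonneg : ∀ i, 0 ≤ α i) :
    α ∈ SIM α :=
  ⟨hnonneg, fun I _ => sum_le_Fb α hdec hnonneg I⟩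

lemma alpha_extreme (hdec : ∀ i j : Fin n, i ≤ j → α j ≤ α i) (hnonneg : ∀ i, 0 ≤ α i) :
    α ∈ Set.extremePoints ℝ (SIM α) := by
  refine ⟨alpha_mem α hdec hnonneg, ?_⟩
  intro y hy z hz hseg
  obtain ⟨a, b, ha, hb, hab, hsum⟩ := hseg
  have key : ∀ w ∈ SIM α, ∀ u ∈ SIM α, ∀ c e : ℝ, 0 < c → 0 < e → c + e = 1 →
      c • w + e • u = α → w = α := by
    intro w hw u hu c e hc he hce hsumw
    have tight : ∀ k, k ≤ n → ∑ j ∈ Ik n k, w j = Fb α k := by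
      intro k hk
      rcases Nat.eq_zero_or_pos k with rfl | hkpos
      · simp [Ik, Fb]
      · have hne : (Ik n k).Nonempty := ⟨⟨k - 1, by omega⟩, by simp [Ik]; omega⟩
        have hcw : ∑ j ∈ Ik n k, w j ≤ Fb α k := by
          have := hw.2 _ hne
          rwa [card_Ik hk] at this
        have hcu : ∑ j ∈ Ik n k, u j ≤ Fb α k := by
          have := hu.2 _ hne
          rwa [card_Ik hk] at this
        have hsk : c * (∑ j ∈ Ik n k, w j) + e * (∑ j ∈ Ik n k, u j) = Fb α k := by
          rw [Finset.mul_sum, Finset.mul_sum, ← Finset.sum_add_distrib, Fb_eq_sum_Ik]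
          refine Finset.sum_congr rfl fun j _ => ?_
          have := congrFun hsumw j
          simpa using this
        by_contra hlt
        have hWlt : ∑ j ∈ Ik n k, w j < Fb α k := lt_of_le_of_ne hcw hlt
        have hF : (c + e) * Fb α k = Fb α k := by rw [hce, one_mul]
        nlinarith [mul_pos hc (sub_pos.2 hWlt), mul_nonneg he.le (sub_nonneg.2 hcu), hF]
    funext i
    have h1 : ∑ j ∈ Ik n (↑i + 1), w j = Fb α (↑i + 1) := tight _ i.isLt
    have h0 : ∑ j ∈ Ik n ↑i, w j = Fb α ↑i := tight _ (le_of_lt i.isLt)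
    have hw1 : ∑ j ∈ Ik n (↑i + 1), w j = w i + ∑ j ∈ Ik n ↑i, w j := by
      rw [Ik_succ i.isLt, Finset.sum_insert (not_mem_Ik i.isLt)]
    have hα1 : Fb α (↑i + 1) = α i + Fb α ↑i := by
      rw [Fb_eq_sum_Ik, Fb_eq_sum_Ik, Ik_succ i.isLt,
        Finset.sum_insert (not_mem_Ik i.isLt)]
    have : w i = α i := by linarith
    exact this
  have hy' : y = α := key y hy z hz a b ha hb hab hsum
  exact hy'

lemma pert (x d : Fin n → ℝ) (hx : x ∈ SIM α)
    (hd : ∀ i, d i ≠ 0 → 0 < x i)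
    (ht : ∀ I : Finset (Fin n), I.Nonempty → ∑ i ∈ I, x i = Fb α I.card → ∑ i ∈ I, d i = 0)
    (i₀ : Fin n) :
    ∃ ε : ℝ, 0 < ε ∧ x + ε • d ∈ SIM α ∧ x - ε • d ∈ SIM α := by
  classical
  set B : ℝ := 1 + ∑ i, |d i| with hB
  have hBpos : 0 < B := by positivity
  have hdB : ∀ i, |d i| ≤ B := by
    intro i
    have h1 : |d i| ≤ ∑ i, |d i| :=
      Finset.single_le_sum (f := fun i => |d i|) (fun i _ => abs_nonneg _) (Finset.mem_univ i)
    linarith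
  have hsumB : ∀ I : Finset (Fin n), |∑ i ∈ I, d i| ≤ B := by
    intro I
    calc |∑ i ∈ I, d i| ≤ ∑ i ∈ I, |d i| := Finset.abs_sum_le_sum_abs _ _
      _ ≤ ∑ i, |d i| := Finset.sum_le_sum_of_subset_of_nonneg
          (Finset.subset_univ I) (fun i _ _ => abs_nonneg _)
      _ ≤ B := by linarith
  set P := Finset.univ.powerset.filter
    (fun I : Finset (Fin n) => ∑ i ∈ I, x i < Fb α I.card) with hP
  set δ : ℝ := if h : P.Nonempty then P.inf' h (fun I => Fb α I.card - ∑ i ∈ I, x i) else 1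
    with hδ
  have hδpos : 0 < δ := by
    rw [hδ]
    split
    · next h =>
        rw [Finset.lt_inf'_iff]
        intro I hI
        have := (Finset.mem_filter.1 hI).2
        linarith
    · exact one_pos
  have hδle : ∀ I : Finset (Fin n), ∑ i ∈ I, x i < Fb α I.card →
      δ ≤ Fb α I.card - ∑ i ∈ I, x i := by
    intro I hI
    have hmem : I ∈ P := Finset.mem_filter.2 ⟨Finset.mem_powerset.2 (Finset.subset_univ I), hI⟩
    rw [hδ, dif_pos ⟨I, hmem⟩]
    exact Finset.inf'_le _ hmem
  set m : ℝ := Finset.univ.inf' (Finset.univ_nonempty_iff.2 ⟨i₀⟩)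
    (fun i => if d i = 0 then 1 else x i) with hm
  have hmpos : 0 < m := by
    rw [hm, Finset.lt_inf'_iff]
    intro i _
    split
    · exact one_pos
    · next h => exact hd i h
  have hmle : ∀ i, d i ≠ 0 → m ≤ x i := by
    intro i hi
    have h2 := Finset.inf'_le (f := fun i => if d i = 0 then 1 else x i) (Finset.mem_univ i)
    rw [if_neg hi] at h2
    exact le_trans (le_of_eq (by rw [hm])) h2
  set ε : ℝ := min m δ / B with hε
  have hεpos : 0 < ε := by positivity
  have hεB1 : ε * B ≤ m := by
    rw [hε, div_mul_cancel₀ _ (ne_of_gt hBpos)]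
    exact min_le_left _ _
  have hεB2 : ε * B ≤ δ := by
    rw [hε, div_mul_cancel₀ _ (ne_of_gt hBpos)]
    exact min_le_right _ _
  have main : ∀ c : ℝ, |c| ≤ ε → x + c • d ∈ SIM α := by
    intro c hc
    constructor
    · intro i
      simp only [Pi.add_apply, Pi.smul_apply, smul_eq_mul]
      by_cases hdi : d i = 0
      · simpa [hdi] using hx.1 i
      · have h1 : |c * d i| ≤ ε * B := by
          rw [abs_mul]
          exact mul_le_mul hc (hdB i) (abs_nonneg _) (le_of_lt hεpos)
        have h2 := hmle i hdi
        have h3 := neg_abs_le (c * d i)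
        linarith
    · intro I hI
      have hxI : ∑ i ∈ I, x i ≤ Fb α I.card := hx.2 I hI
      have hsum : ∑ i ∈ I, (x + c • d) i = ∑ i ∈ I, x i + c * ∑ i ∈ I, d i := by
        simp [Finset.sum_add_distrib, Finset.mul_sum]
      show ∑ i ∈ I, (x + c • d) i ≤ Fb α I.card
      rcases eq_or_lt_of_le hxI with heq | hlt
      · rw [hsum, ht I hI heq, mul_zero, add_zero]
        exact hxI
      · have h1 : |c * ∑ i ∈ I, d i| ≤ ε * B := by
          rw [abs_mul]
          exact mul_le_mul hc (hsumB I) (abs_nonneg _) (le_of_lt hεpos)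
        have h3 := hδle I hlt
        have h4 := le_abs_self (c * ∑ i ∈ I, d i)
        rw [hsum]
        linarith
  refine ⟨ε, hεpos, main ε (by rw [abs_of_pos hεpos]), ?_⟩
  have h := main (-ε) (by rw [abs_neg, abs_of_pos hεpos])
  have heq : x - ε • d = x + (-ε) • d := by module
  rw [heq]
  exact h

/-- No nonzero perturbation direction at an extreme point. -/
lemma extreme_dir (x d : Fin n → ℝ) (hx : x ∈ Set.extremePoints ℝ (SIM α))
    (hd : ∀ i, d i ≠ 0 → 0 < x i)
    (ht : ∀ I : Finset (Fin n), I.Nonempty → ∑ i ∈ I, x i = Fb α I.card → ∑ i ∈ I, d i = 0)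
    (j : Fin n) (hj : d j ≠ 0) : False := by
  obtain ⟨ε, hεpos, hy, hz⟩ := pert α x d hx.1 hd ht j
  have hseg : x ∈ openSegment ℝ (x + ε • d) (x - ε • d) := by
    refine ⟨1/2, 1/2, by norm_num, by norm_num, by norm_num, ?_⟩
    module
  have hpair := hx.2 hy hz hseg
  have hcontra := congrFun hpair j
  simp only [Pi.add_apply, Pi.smul_apply, smul_eq_mul] at hcontra
  have : ε * d j = 0 := by linarith
  rcases mul_eq_zero.1 this with h | h
  · exact absurd h (ne_of_gt hεpos)
  · exact hj h

lemma inf'_closed {γ β : Type*} [SemilatticeInf β] {s : Finset γ} (hs : s.Nonempty) (f : γ → β)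
    (p : β → Prop) (hp : ∀ a b, p a → p b → p (a ⊓ b)) :
    (∀ a ∈ s, p (f a)) → p (s.inf' hs f) := by
  induction hs using Finset.Nonempty.cons_induction with
  | singleton a => intro h; simpa using h a (by simp)
  | cons a s ha hs ih =>
      intro h
      rw [Finset.inf'_cons hs]
      exact hp _ _ (h a (Finset.mem_cons_self a s))
        (ih fun b hb => h b (Finset.mem_cons_of_mem hb))

lemma tight_inter (hdec : ∀ i j : Fin n, i ≤ j → α j ≤ α i) (hnonneg : ∀ i, 0 ≤ α i)
    (x : Fin n → ℝ) (hx : x ∈ SIM α) {I J : Finset (Fin n)}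
    (hIJ : (I ∩ J).Nonempty)
    (htI : ∑ i ∈ I, x i = Fb α I.card) (htJ : ∑ i ∈ J, x i = Fb α J.card) :
    ∑ i ∈ I ∩ J, x i = Fb α (I ∩ J).card := by
  classical
  have hIne : I.Nonempty := hIJ.mono Finset.inter_subset_left
  have hu : ∑ i ∈ I ∪ J, x i ≤ Fb α (I ∪ J).card :=
    hx.2 _ (hIne.mono Finset.subset_union_left)
  have hi : ∑ i ∈ I ∩ J, x i ≤ Fb α (I ∩ J).card := hx.2 _ hIJ
  have hcard : I.card + J.card = (I ∪ J).card + (I ∩ J).card :=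
    (Finset.card_union_add_card_inter I J).symm
  have hconc := Fb_concave α hdec hnonneg
    (Finset.card_le_card (Finset.inter_subset_left (s₁ := I) (s₂ := J)))
    (Finset.card_le_card (Finset.inter_subset_right (s₁ := I) (s₂ := J))) hcard
  have hsum := Finset.sum_union_inter (s₁ := I) (s₂ := J) (f := x)
  linarith

lemma extreme_integral (hdec : ∀ i j : Fin n, i ≤ j → α j ≤ α i) (hnonneg : ∀ i, 0 ≤ α i)
    (hint : ∀ i, ∃ m : ℤ, α i = m)
    (x : Fin n → ℝ) (hx : x ∈ Set.extremePoints ℝ (SIM α)) (i : Fin n) :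
    ∃ m : ℤ, x i = m := by
  classical
  by_contra hxi
  have hxS : x ∈ SIM α := hx.1
  set S : Finset (Fin n) := Finset.univ.filter (fun j => ¬∃ m : ℤ, x j = m) with hS
  have hiS : i ∈ S := by simp [hS]; exact fun m hm => hxi ⟨m, hm⟩
  have hSpos : ∀ j ∈ S, 0 < x j := by
    intro j hj
    rcases lt_or_eq_of_le (hxS.1 j) with h | h
    · exact h
    · exfalso
      simp only [hS, Finset.mem_filter, Finset.mem_univ, true_and] at hj
      exact hj ⟨0, by simp [← h]⟩
  have hnotS : ∀ j, j ∉ S → ∃ m : ℤ, x j = m := by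
    intro j hj
    by_contra h
    exact hj (by simp [hS]; exact fun m hm => h ⟨m, hm⟩)
  have hintF : ∀ k, ∃ m : ℤ, Fb α k = m := fun k => sum_int _ _ (fun j _ => hint j)
  have hexists : ∀ j ∈ S, ∃ I : Finset (Fin n), j ∈ I ∧ ∑ i' ∈ I, x i' = Fb α I.card := by
    intro j hj
    by_contra hno
    push_neg at hno
    refine extreme_dir α x (fun i' => if i' = j then 1 else 0) hx ?_ ?_ j (by simp)
    · intro i' hi'
      have : i' = j := by by_contra h; simp [h] at hi'
      subst this
      exact hSpos _ hj
    · intro I hI htI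
      have hjI : j ∉ I := fun hjI => hno I hjI htI
      rw [Finset.sum_ite_eq' I j (fun _ => (1 : ℝ))]
      simp [hjI]
  set 𝒯 : Fin n → Finset (Finset (Fin n)) := fun j =>
    Finset.univ.powerset.filter (fun I => j ∈ I ∧ ∑ i' ∈ I, x i' = Fb α I.card) with h𝒯
  have h𝒯mem : ∀ j (I : Finset (Fin n)), I ∈ 𝒯 j ↔ (j ∈ I ∧ ∑ i' ∈ I, x i' = Fb α I.card) := by
    intro j I
    simp [h𝒯, Finset.mem_filter, Finset.mem_powerset, Finset.subset_univ]
  have h𝒯ne : ∀ j ∈ S, (𝒯 j).Nonempty := by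
    intro j hj
    obtain ⟨I, hjI, htI⟩ := hexists j hj
    exact ⟨I, (h𝒯mem j I).2 ⟨hjI, htI⟩⟩
  set T : Fin n → Finset (Fin n) := fun j =>
    if h : (𝒯 j).Nonempty then (𝒯 j).inf' h id else ∅ with hT
  have hTprop : ∀ j ∈ S, j ∈ T j ∧ ∑ i' ∈ T j, x i' = Fb α (T j).card := by
    intro j hj
    rw [hT]
    simp only [dif_pos (h𝒯ne j hj)]
    refine inf'_closed (h𝒯ne j hj) id
      (fun I => j ∈ I ∧ ∑ i' ∈ I, x i' = Fb α I.card) ?_ ?_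
    · intro a b ha hb
      have hab : (a ∩ b).Nonempty := ⟨j, Finset.mem_inter.2 ⟨ha.1, hb.1⟩⟩
      exact ⟨Finset.mem_inter.2 ⟨ha.1, hb.1⟩,
        tight_inter α hdec hnonneg x hxS hab ha.2 hb.2⟩
    · intro I hI
      exact (h𝒯mem j I).1 hI
  have hTle : ∀ j ∈ S, ∀ I ∈ 𝒯 j, T j ⊆ I := by
    intro j hj I hI
    rw [hT]
    simp only [dif_pos (h𝒯ne j hj)]
    exact Finset.inf'_le id hI
  obtain ⟨j, hjS, hjmin⟩ := S.exists_min_image (fun j => (T j).card) ⟨i, hiS⟩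
  obtain ⟨hjT, htT⟩ := hTprop j hjS
  have hsplit : ∑ i' ∈ T j ∩ S, x i' + ∑ i' ∈ T j \ S, x i' = ∑ i' ∈ T j, x i' :=
    Finset.sum_inter_add_sum_sdiff _ _ _
  obtain ⟨M1, hM1⟩ : ∃ m : ℤ, ∑ i' ∈ T j \ S, x i' = m :=
    sum_int _ _ (fun a ha => hnotS a (Finset.mem_sdiff.1 ha).2)
  obtain ⟨M2, hM2⟩ := hintF (T j).card
  have hint2 : ∃ m : ℤ, ∑ i' ∈ T j ∩ S, x i' = m :=
    ⟨M2 - M1, by push_cast; linarith⟩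
  have hjTS : j ∈ T j ∩ S := Finset.mem_inter.2 ⟨hjT, hjS⟩
  have hk : ∃ k ∈ T j ∩ S, k ≠ j := by
    by_contra hcon
    push_neg at hcon
    have hsing : T j ∩ S = {j} :=
      Finset.eq_singleton_iff_unique_mem.2 ⟨hjTS, fun k hk => hcon k hk⟩
    rw [hsing, Finset.sum_singleton] at hint2
    simp only [hS, Finset.mem_filter, Finset.mem_univ, true_and] at hjS
    exact hjS hint2
  obtain ⟨k, hkTS, hkj⟩ := hk
  have hkT := (Finset.mem_inter.1 hkTS).1
  have hkS := (Finset.mem_inter.1 hkTS).2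
  have hTj𝒯k : T j ∈ 𝒯 k := (h𝒯mem k (T j)).2 ⟨hkT, htT⟩
  have hsub : T k ⊆ T j := hTle k hkS _ hTj𝒯k
  have heqT : T k = T j := Finset.eq_of_subset_of_card_le hsub (hjmin k hkS)
  have hiff : ∀ I : Finset (Fin n), ∑ i' ∈ I, x i' = Fb α I.card → (j ∈ I ↔ k ∈ I) := by
    intro I htI
    constructor
    · intro hjI
      exact hTle j hjS I ((h𝒯mem j I).2 ⟨hjI, htI⟩) hkT
    · intro hkI
      have hsub2 : T k ⊆ I := hTle k hkS I ((h𝒯mem k I).2 ⟨hkI, htI⟩)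
      rw [heqT] at hsub2
      exact hsub2 hjT
  set d : Fin n → ℝ :=
    fun i' => (if i' = j then (1 : ℝ) else 0) + (if i' = k then (-1 : ℝ) else 0) with hd
  refine extreme_dir α x d hx ?_ ?_ j ?_
  · intro i' hi'
    have : i' = j ∨ i' = k := by
      by_contra h
      push_neg at h
      simp [hd, h.1, h.2] at hi'
    rcases this with rfl | rfl
    · exact hSpos _ hjS
    · exact hSpos _ hkS
  · intro I hI htI
    have hjk := hiff I htI
    rw [hd]
    rw [Finset.sum_add_distrib, Finset.sum_ite_eq' I j (fun _ => (1 : ℝ)),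
      Finset.sum_ite_eq' I k (fun _ => (-1 : ℝ))]
    by_cases hjI : j ∈ I
    · simp [hjI, hjk.1 hjI]
    · have hkI : k ∉ I := fun hkI => hjI (hjk.2 hkI)
      simp [hjI, hkI]
  · have hne : k ≠ j := hkj
    simp only [hd]
    rw [if_neg (fun h : j = k => hne h.symm)]
    norm_num

lemma SIM_bounded (hnonneg : ∀ i, 0 ≤ α i) : Bornology.IsBounded (SIM α) := by
  have hC : 0 ≤ Fb α 1 := Fb_nonneg α hnonneg 1
  refine (Metric.isBounded_closedBall (x := (0 : Fin n → ℝ)) (r := Fb α 1)).subset ?_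
  intro x hxS
  rw [Metric.mem_closedBall, dist_pi_le_iff hC]
  intro i
  have h1 : ∑ i' ∈ ({i} : Finset (Fin n)), x i' ≤ Fb α ({i} : Finset (Fin n)).card :=
    hxS.2 _ ⟨i, Finset.mem_singleton_self i⟩
  rw [Finset.sum_singleton, Finset.card_singleton] at h1
  have h0 := hxS.1 i
  rw [Pi.zero_apply, Real.dist_eq, sub_zero, abs_of_nonneg h0]
  exact h1

lemma SIM_closed : IsClosed (SIM α) := by
  have hrw : SIM α = (⋂ i, {x : Fin n → ℝ | 0 ≤ x i}) ∩
      ⋂ I ∈ {I : Finset (Fin n) | I.Nonempty}, {x : Fin n → ℝ | ∑ i ∈ I, x i ≤ Fb α I.card} := by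
    ext x
    simp only [Set.mem_inter_iff, Set.mem_iInter, Set.mem_setOf_eq]
    exact ⟨fun h => ⟨h.1, fun I hI => h.2 I hI⟩, fun h => ⟨h.1, fun I hI => h.2 I hI⟩⟩
  rw [hrw]
  refine IsClosed.inter (isClosed_iInter fun i => ?_) (isClosed_biInter fun I _ => ?_)
  · exact isClosed_le continuous_const (continuous_apply i)
  · exact isClosed_le (continuous_finset_sum I fun i _ => continuous_apply i) continuous_const

end SIMaux

/-- the SIM-body is bounded (hence compact), and all its extreme points have
integer coordinates if and only if all the parameters are integers. -/
theorem sim_body_bounded_integral (n : ℕ) (α : Fin n → ℝ)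
    (hdec : ∀ i j : Fin n, i ≤ j → α j ≤ α i) (hnonneg : ∀ i, 0 ≤ α i) :
    Bornology.IsBounded (SIM α) ∧ IsCompact (SIM α) ∧
      ((∀ x ∈ Set.extremePoints ℝ (SIM α), ∀ i, ∃ m : ℤ, x i = m) ↔
        ∀ i, ∃ m : ℤ, α i = m) := by
  have hb := SIMaux.SIM_bounded α hnonneg
  have hc : IsCompact (SIM α) :=
    Metric.isCompact_of_isClosed_isBounded (SIMaux.SIM_closed α) hb
  refine ⟨hb, hc, ?_, ?_⟩
  · intro h i
    exact h α (SIMaux.alpha_extreme α hdec hnonneg) i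
  · intro h x hx i
    exact SIMaux.extreme_integral α hdec hnonneg h x hx i
end

section
/- Let n ≥ 1 and let Λₙ = Λ(n, n−1, …, 1) ⊆ ℝⁿ be the regular SIM-body, i.e., the SIM-body with parameters α_k = n − k + 1 for k = 1,…,n. Then the set of extreme points of Λₙ is finite and has cardinality Σ_{k=0}^{n} n!/k!. -/
open Finset

namespace RegSIM

/-- partial sum of the α's : `Ar n m = n + (n-1) + ⋯ + (n-m+1)`. -/
noncomputable def Ar (n m : ℕ) : ℝ := ∑ j ∈ range m, ((n : ℝ) - j)

lemma Ar_zero (n : ℕ) : Ar n 0 = 0 := by simp [Ar]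

lemma Ar_succ (n m : ℕ) : Ar n (m + 1) = Ar n m + ((n : ℝ) - m) := by
  simp only [Ar, Finset.sum_range_succ]

lemma Ar_le {n p q : ℕ} (h : p ≤ q) (hq : q ≤ n) : Ar n p ≤ Ar n q := by
  induction q with
  | zero => interval_cases p; exact le_refl _
  | succ m ih =>
    rcases Nat.lt_or_ge p (m+1) with hp | hp
    · have h1 : Ar n p ≤ Ar n m := ih (by omega) (by omega)
      have h2 : (0:ℝ) ≤ (n:ℝ) - m := by
        have : (m:ℝ) ≤ n := by exact_mod_cast (by omega : m ≤ n)
        linarith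
      rw [Ar_succ]; linarith
    · have : p = m + 1 := by omega
      subst this; exact le_refl _

lemma Ar_lt {n p q : ℕ} (h : p < q) (hq : q ≤ n) : Ar n p < Ar n q := by
  obtain ⟨m, rfl⟩ : ∃ m, q = m + 1 := ⟨q - 1, by omega⟩
  have h1 : Ar n p ≤ Ar n m := Ar_le (by omega) (by omega)
  have h2 : (0:ℝ) < (n:ℝ) - m := by
    have : (m:ℝ) < n := by exact_mod_cast (by omega : m < n)
    linarith
  rw [Ar_succ]; linarith

lemma Ar_sub {n p q : ℕ} (h : p ≤ q) : Ar n q - Ar n p = ∑ j ∈ Ico p q, ((n:ℝ) - j) := by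
  have := Finset.sum_Ico_consecutive (fun j => ((n:ℝ) - j)) (Nat.zero_le p) h
  simp only [Ar, Finset.range_eq_Ico]
  linarith [this]

/-- strict concavity-type inequality. -/
lemma Ar_concave {n p a b q : ℕ} (hpa : p < a) (hab : a ≤ b) (hbq : b < q)
    (hsum : p + q = a + b) (hq : q ≤ n) : Ar n p + Ar n q < Ar n a + Ar n b := by
  have h1 : Ar n a - Ar n p = ∑ j ∈ Ico p a, ((n:ℝ) - j) := Ar_sub (by omega)
  have h2 : Ar n q - Ar n b = ∑ j ∈ Ico b q, ((n:ℝ) - j) := Ar_sub (by omega)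
  have hc1 : (Ico p a).card = a - p := Nat.card_Ico p a
  have hc2 : (Ico b q).card = q - b := Nat.card_Ico b q
  have hlow : ((a - p : ℕ) : ℝ) * ((n:ℝ) - a + 1) ≤ Ar n a - Ar n p := by
    rw [h1]
    have := Finset.card_nsmul_le_sum (Ico p a) (fun j => ((n:ℝ) - j)) ((n:ℝ) - a + 1)
      (fun j hj => by
        have hj' : j < a := (Finset.mem_Ico.mp hj).2
        have h3 : (j:ℝ) + 1 ≤ (a:ℝ) := by exact_mod_cast (by omega : j + 1 ≤ a)
        show (n:ℝ) - a + 1 ≤ (n:ℝ) - j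
        linarith)
    rwa [hc1, nsmul_eq_mul] at this
  have hhigh : Ar n q - Ar n b ≤ ((q - b : ℕ) : ℝ) * ((n:ℝ) - b) := by
    rw [h2]
    have := Finset.sum_le_card_nsmul (Ico b q) (fun j => ((n:ℝ) - j)) ((n:ℝ) - b)
      (fun j hj => by
        have hj' : b ≤ j := (Finset.mem_Ico.mp hj).1
        have h3 : (b:ℝ) ≤ (j:ℝ) := by exact_mod_cast hj'
        show (n:ℝ) - j ≤ (n:ℝ) - b
        linarith)
    rwa [hc2, nsmul_eq_mul] at this
  have heq : (a - p : ℕ) = (q - b : ℕ) := by omega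
  have ht : 1 ≤ a - p := by omega
  have htR : (1:ℝ) ≤ ((a - p : ℕ) : ℝ) := by exact_mod_cast ht
  have hv : (n:ℝ) - b < (n:ℝ) - a + 1 := by
    have : (a:ℝ) ≤ (b:ℝ) := by exact_mod_cast hab
    linarith
  have : ((q - b : ℕ) : ℝ) * ((n:ℝ) - b) < ((a - p : ℕ) : ℝ) * ((n:ℝ) - a + 1) := by
    rw [← heq]; nlinarith
  linarith

/-- Converting filtered `Fin` sums to `range` sums. -/
lemma filter_sum' {M : Type*} [AddCommMonoid M] (k m : ℕ) (hm : m ≤ k) (g : ℕ → M) :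
    ∑ j ∈ Finset.univ.filter (fun j : Fin k => (j : ℕ) < m), g (j : ℕ) =
      ∑ j ∈ range m, g j := by
  rw [Finset.sum_filter, Fin.sum_univ_eq_sum_range (fun j => if j < m then g j else 0),
    ← Finset.sum_filter]
  congr 1
  ext j
  simp only [Finset.mem_filter, Finset.mem_range]
  omega

lemma card_filter_lt (k m : ℕ) (hm : m ≤ k) :
    (Finset.univ.filter (fun j : Fin k => (j : ℕ) < m)).card = m := by
  rw [Finset.card_eq_sum_ones, filter_sum' k m hm (fun _ => 1)]
  simp

lemma mem_iff {n : ℕ} {x : Fin n → ℝ} :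
    x ∈ SIM (fun i : Fin n => (n : ℝ) - (i : ℕ)) ↔
      (∀ i, 0 ≤ x i) ∧ ∀ I : Finset (Fin n), ∑ i ∈ I, x i ≤ Ar n I.card := by
  constructor
  · rintro ⟨h1, h2⟩
    refine ⟨h1, fun I => ?_⟩
    rcases I.eq_empty_or_nonempty with rfl | hne
    · simp [Ar_zero]
    · have hcard : I.card ≤ n := by
        simpa using Finset.card_le_univ I
      have := h2 I hne
      rwa [filter_sum' n I.card hcard (fun j => (n:ℝ) - j)] at this
  · rintro ⟨h1, h2⟩
    refine ⟨h1, fun I _ => ?_⟩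
    have hcard : I.card ≤ n := by simpa using Finset.card_le_univ I
    rw [filter_sum' n I.card hcard (fun j => (n:ℝ) - j)]
    exact h2 I

/-- `I` is a tight set for `x`. The empty set is always tight. -/
def Tight (n : ℕ) (x : Fin n → ℝ) (I : Finset (Fin n)) : Prop :=
  ∑ i ∈ I, x i = Ar n I.card

lemma tight_chain {n : ℕ} {x : Fin n → ℝ}
    (hx : x ∈ SIM (fun i : Fin n => (n : ℝ) - (i : ℕ)))
    {I J : Finset (Fin n)} (hI : Tight n x I) (hJ : Tight n x J) : I ⊆ J ∨ J ⊆ I := by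
  classical
  by_contra h
  push_neg at h
  obtain ⟨hIJ, hJI⟩ := h
  rw [mem_iff] at hx
  have hIc : (I ∩ J) ⊂ I := ⟨Finset.inter_subset_left, fun hs => hIJ (fun i hi =>
    (Finset.mem_inter.mp (hs (by exact hi))).2)⟩
  have hJc : (I ∩ J) ⊂ J := ⟨Finset.inter_subset_right, fun hs => hJI (fun i hi =>
    (Finset.mem_inter.mp (hs (by exact hi))).1)⟩
  have hp1 : (I ∩ J).card < I.card := Finset.card_lt_card hIc
  have hp2 : (I ∩ J).card < J.card := Finset.card_lt_card hJc
  have hcards : (I ∪ J).card + (I ∩ J).card = I.card + J.card :=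
    Finset.card_union_add_card_inter I J
  have hqn : (I ∪ J).card ≤ n := by simpa using Finset.card_le_univ (I ∪ J)
  have hsums : (∑ i ∈ I ∪ J, x i) + ∑ i ∈ I ∩ J, x i = Ar n I.card + Ar n J.card := by
    rw [Finset.sum_union_inter, hI, hJ]
  have hle1 : ∑ i ∈ I ∩ J, x i ≤ Ar n (I ∩ J).card := hx.2 _
  have hle2 : ∑ i ∈ I ∪ J, x i ≤ Ar n (I ∪ J).card := hx.2 _
  have hkey : Ar n (I ∩ J).card + Ar n (I ∪ J).card < Ar n I.card + Ar n J.card := by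
    rcases le_total I.card J.card with hab | hab
    · exact Ar_concave hp1 hab (by omega) (by omega) hqn
    · have := Ar_concave hp2 hab (by omega) (by omega) hqn
      linarith
  linarith

/-- The perturbation lemma: an extreme point admits no nonzero perturbation direction
supported on positive coordinates that is orthogonal to all tight constraints. -/
lemma pert {n : ℕ} {x : Fin n → ℝ}
    (hx : x ∈ Set.extremePoints ℝ (SIM (fun i : Fin n => (n : ℝ) - (i : ℕ))))
    (d : Fin n → ℝ) (hd : d ≠ 0)
    (hdx : ∀ i, d i ≠ 0 → 0 < x i)
    (hdt : ∀ I : Finset (Fin n), Tight n x I → ∑ i ∈ I, d i = 0) : False := by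
  classical
  rw [mem_extremePoints] at hx
  obtain ⟨hxS, hext⟩ := hx
  obtain ⟨hx0, hcon⟩ := mem_iff.mp hxS
  obtain ⟨i₀, hi₀⟩ := Function.ne_iff.mp hd
  set D : ℝ := ∑ i, |d i| with hD_def
  have hD : 0 < D := Finset.sum_pos' (fun i _ => abs_nonneg _)
    ⟨i₀, Finset.mem_univ _, abs_pos.mpr hi₀⟩
  set s : Finset ℝ :=
    ((Finset.univ : Finset (Finset (Fin n))).filter (fun I => ¬ Tight n x I)).image
        (fun I => Ar n I.card - ∑ i ∈ I, x i) ∪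
      (Finset.univ.filter (fun i => d i ≠ 0)).image x with hs_def
  have hx_mem : x i₀ ∈ s := Finset.mem_union_right _
    (Finset.mem_image_of_mem x (Finset.mem_filter.mpr ⟨Finset.mem_univ _, hi₀⟩))
  have hs_ne : s.Nonempty := ⟨x i₀, hx_mem⟩
  set m : ℝ := s.min' hs_ne with hm_def
  have hm_pos : 0 < m := by
    rw [hm_def, Finset.lt_min'_iff]
    intro y hy
    rcases Finset.mem_union.mp hy with hy | hy
    · obtain ⟨I, hI, rfl⟩ := Finset.mem_image.mp hy
      have hIn := (Finset.mem_filter.mp hI).2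
      have := hcon I
      have hne : ∑ i ∈ I, x i ≠ Ar n I.card := hIn
      have : ∑ i ∈ I, x i < Ar n I.card := lt_of_le_of_ne this hne
      linarith
    · obtain ⟨i, hi, rfl⟩ := Finset.mem_image.mp hy
      exact hdx i (Finset.mem_filter.mp hi).2
  set ε : ℝ := m / D with hε_def
  have hε : 0 < ε := div_pos hm_pos hD
  have hεD : ε * D = m := div_mul_cancel₀ m (ne_of_gt hD)
  -- membership of the perturbed points
  have hmem : ∀ c : ℝ, |c| ≤ ε → x + c • d ∈ SIM (fun i : Fin n => (n : ℝ) - (i : ℕ)) := by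
    intro c hc
    rw [mem_iff]
    constructor
    · intro i
      rcases eq_or_ne (d i) 0 with h0 | h0
      · simp [h0, hx0 i]
      · have hxi : x i ∈ s := Finset.mem_union_right _
          (Finset.mem_image_of_mem x (Finset.mem_filter.mpr ⟨Finset.mem_univ _, h0⟩))
        have hxm : m ≤ x i := Finset.min'_le s _ hxi
        have hdD : |d i| ≤ D := Finset.single_le_sum (fun i _ => abs_nonneg (d i))
          (Finset.mem_univ i)
        have h1 : |c * d i| ≤ ε * D := by
          rw [abs_mul]
          exact mul_le_mul hc hdD (abs_nonneg _) (le_of_lt hε)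
        have h2 : -(c * d i) ≤ |c * d i| := neg_le_abs _
        have : (x + c • d) i = x i + c * d i := rfl
        rw [this]
        linarith
    · intro I
      have hsum : ∑ i ∈ I, (x + c • d) i = (∑ i ∈ I, x i) + c * ∑ i ∈ I, d i := by
        rw [Finset.mul_sum, ← Finset.sum_add_distrib]
        rfl
      by_cases ht : Tight n x I
      · rw [hsum, hdt I ht, mul_zero, add_zero, ht]
      · have hslack : Ar n I.card - ∑ i ∈ I, x i ∈ s := Finset.mem_union_left _
          (Finset.mem_image_of_mem _ (Finset.mem_filter.mpr ⟨Finset.mem_univ _, ht⟩))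
        have hsm : m ≤ Ar n I.card - ∑ i ∈ I, x i := Finset.min'_le s _ hslack
        have habs : |∑ i ∈ I, d i| ≤ D := by
          calc |∑ i ∈ I, d i| ≤ ∑ i ∈ I, |d i| := Finset.abs_sum_le_sum_abs _ _
            _ ≤ D := Finset.sum_le_sum_of_subset_of_nonneg (Finset.subset_univ I)
                (fun i _ _ => abs_nonneg _)
        have h1 : c * ∑ i ∈ I, d i ≤ |c * ∑ i ∈ I, d i| := le_abs_self _
        have h2 : |c * ∑ i ∈ I, d i| ≤ ε * D := by
          rw [abs_mul]
          exact mul_le_mul hc habs (abs_nonneg _) (le_of_lt hε)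
        rw [hsum]
        linarith
  have h1 : x + ε • d ∈ SIM (fun i : Fin n => (n : ℝ) - (i : ℕ)) :=
    hmem ε (by rw [abs_of_pos hε])
  have h2 : x + (-ε) • d ∈ SIM (fun i : Fin n => (n : ℝ) - (i : ℕ)) :=
    hmem (-ε) (by rw [abs_neg, abs_of_pos hε])
  have hseg : x ∈ openSegment ℝ (x + ε • d) (x + (-ε) • d) := by
    refine ⟨1/2, 1/2, by norm_num, by norm_num, by norm_num, ?_⟩
    funext i
    simp only [Pi.add_apply, Pi.smul_apply, smul_eq_mul]
    ring
  have := (hext _ h1 _ h2 hseg).1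
  have hεd : ε • d = 0 := by
    have : x + ε • d = x + 0 := by rw [add_zero]; exact this
    exact add_left_cancel this
  exact hd (by simpa [smul_eq_zero, ne_of_gt hε] using hεd)

/-- the sum of `c` distinct naturals is at least `0+1+⋯+(c-1)`. -/
lemma sum_range_card_le (J : Finset ℕ) : ∑ l ∈ range J.card, l ≤ ∑ j ∈ J, j := by
  classical
  induction J using Finset.strongInduction with
  | _ J ih =>
    rcases J.eq_empty_or_nonempty with rfl | hne
    · simp
    · set M := J.max' hne with hM
      have hMJ : M ∈ J := J.max'_mem hne
      have hsub : J.erase M ⊂ J := Finset.erase_ssubset hMJ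
      have hcard : (J.erase M).card = J.card - 1 := Finset.card_erase_of_mem hMJ
      have hc1 : 1 ≤ J.card := Finset.card_pos.mpr hne
      have hcM : J.card ≤ M + 1 := by
        have : J ⊆ range (M + 1) := fun j hj =>
          Finset.mem_range.mpr (Nat.lt_succ_of_le (J.le_max' j hj))
        simpa using Finset.card_le_card this
      have hrange : ∑ l ∈ range J.card, l = (∑ l ∈ range (J.card - 1), l) + (J.card - 1) := by
        conv_lhs => rw [show J.card = (J.card - 1) + 1 by omega, Finset.sum_range_succ]
      have hih := ih (J.erase M) hsub
      rw [hcard] at hih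
      have hsum : ∑ j ∈ J.erase M, j + M = ∑ j ∈ J, j := Finset.sum_erase_add J _ hMJ
      omega

/-- key inequality: sum of `n - j` over distinct indices `j` is at most `Ar n c`. -/
lemma sum_vals_le {n k : ℕ} (hk : k ≤ n) (J : Finset (Fin k)) :
    ∑ j ∈ J, ((n:ℝ) - (j:ℕ)) ≤ Ar n J.card := by
  classical
  set J' : Finset ℕ := J.image (fun j : Fin k => (j : ℕ)) with hJ'
  have hinj : Function.Injective (fun j : Fin k => (j : ℕ)) := Fin.val_injective
  have hcard : J'.card = J.card := Finset.card_image_of_injective J hinj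
  have h1 : ∑ j ∈ J, ((n:ℝ) - (j:ℕ)) = ∑ j ∈ J', ((n:ℝ) - j) := by
    rw [hJ', Finset.sum_image (fun a _ b _ h => hinj h)]
  have h2 : ∑ l ∈ range J.card, l ≤ ∑ j ∈ J', j := by
    rw [← hcard]; exact sum_range_card_le J'
  have h2' : (∑ l ∈ range J.card, (l:ℝ)) ≤ ∑ j ∈ J', (j:ℝ) := by
    calc (∑ l ∈ range J.card, (l:ℝ)) = ((∑ l ∈ range J.card, l : ℕ) : ℝ) := by push_cast; rfl
      _ ≤ ((∑ j ∈ J', j : ℕ) : ℝ) := by exact_mod_cast h2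
      _ = ∑ j ∈ J', (j:ℝ) := by push_cast; rfl
  rw [h1, Ar]
  rw [Finset.sum_sub_distrib, Finset.sum_sub_distrib]
  have : ∑ _j ∈ J', (n:ℝ) = ∑ _l ∈ range J.card, (n:ℝ) := by
    rw [Finset.sum_const, Finset.sum_const, hcard, Finset.card_range]
  linarith

/-- The candidate vertex attached to a partial injection `f`. -/
noncomputable def cand (n k : ℕ) (f : Fin k → Fin n) : Fin n → ℝ :=
  fun a => ∑ j : Fin k, if f j = a then ((n : ℝ) - (j : ℕ)) else 0

lemma cand_apply_mem {n k : ℕ} {f : Fin k → Fin n} (hf : Function.Injective f) (j : Fin k) :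
    cand n k f (f j) = (n : ℝ) - (j : ℕ) := by
  rw [cand, Finset.sum_eq_single j]
  · simp
  · intro j' _ hj'
    have : f j' ≠ f j := fun h => hj' (hf h)
    simp [this]
  · intro h; exact absurd (Finset.mem_univ j) h

lemma cand_apply_notMem {n k : ℕ} {f : Fin k → Fin n} {a : Fin n} (h : ∀ j, f j ≠ a) :
    cand n k f a = 0 := by
  rw [cand]
  exact Finset.sum_eq_zero (fun j _ => by simp [h j])

lemma cand_sum {n k : ℕ} (f : Fin k → Fin n) (I : Finset (Fin n)) :
    ∑ a ∈ I, cand n k f a =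
      ∑ j ∈ Finset.univ.filter (fun j : Fin k => f j ∈ I), ((n:ℝ) - (j:ℕ)) := by
  classical
  simp only [cand]
  rw [Finset.sum_comm]
  rw [Finset.sum_filter]
  refine Finset.sum_congr rfl (fun j _ => ?_)
  rw [Finset.sum_ite_eq I (f j) (fun _ => (n:ℝ) - (j:ℕ))]


lemma cand_mem {n k : ℕ} (hk : k ≤ n) {f : Fin k → Fin n} (hf : Function.Injective f) :
    cand n k f ∈ SIM (fun i : Fin n => (n : ℝ) - (i : ℕ)) := by
  classical
  rw [mem_iff]
  constructor
  · intro a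
    refine Finset.sum_nonneg (fun j _ => ?_)
    have : (j:ℝ) ≤ (n:ℝ) - 1 := by
      have : (j:ℕ) ≤ n - 1 := by omega
      calc (j:ℝ) ≤ ((n-1:ℕ):ℝ) := by exact_mod_cast this
        _ ≤ (n:ℝ) - 1 := by
          have : (1:ℕ) ≤ n := by omega
          push_cast [Nat.cast_sub this]
          linarith
    split <;> [linarith; exact le_refl _]
  · intro I
    rw [cand_sum]
    set J := Finset.univ.filter (fun j : Fin k => f j ∈ I) with hJ
    have h1 : ∑ j ∈ J, ((n:ℝ) - (j:ℕ)) ≤ Ar n J.card := sum_vals_le hk J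
    have h2 : J.card ≤ I.card := by
      apply Finset.card_le_card_of_injOn f
      · intro j hj; exact (Finset.mem_filter.mp hj).2
      · intro a _ b _ h; exact hf h
    have hIcard : I.card ≤ n := by simpa using Finset.card_le_univ I
    exact le_trans h1 (Ar_le h2 hIcard)

/-- prefix set of a partial injection -/
def pre {n k : ℕ} (f : Fin k → Fin n) (m : ℕ) : Finset (Fin n) :=
  (Finset.univ.filter (fun l : Fin k => (l : ℕ) < m)).image f

lemma pre_card {n k : ℕ} {f : Fin k → Fin n} (hf : Function.Injective f) {m : ℕ}
    (hm : m ≤ k) : (pre f m).card = m := by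
  rw [pre, Finset.card_image_of_injective _ hf, card_filter_lt k m hm]

lemma pre_succ {n k : ℕ} {f : Fin k → Fin n} (hf : Function.Injective f) (l : Fin k) :
    pre f ((l : ℕ) + 1) = insert (f l) (pre f (l : ℕ)) := by
  classical
  ext a
  simp only [pre, Finset.mem_insert, Finset.mem_image, Finset.mem_filter, Finset.mem_univ,
    true_and]
  constructor
  · rintro ⟨l', hl', rfl⟩
    rcases Nat.lt_or_ge (l' : ℕ) (l : ℕ) with h | h
    · exact Or.inr ⟨l', h, rfl⟩
    · have : l' = l := Fin.ext (by omega)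
      subst this; exact Or.inl rfl
  · rintro (rfl | ⟨l', hl', rfl⟩)
    · exact ⟨l, by omega, rfl⟩
    · exact ⟨l', by omega, rfl⟩

lemma notMem_pre {n k : ℕ} {f : Fin k → Fin n} (hf : Function.Injective f) (l : Fin k) :
    f l ∉ pre f (l : ℕ) := by
  simp only [pre, Finset.mem_image, Finset.mem_filter, Finset.mem_univ, true_and]
  rintro ⟨l', hl', heq⟩
  have := hf heq
  subst this
  omega

lemma cand_sum_pre {n k : ℕ} {f : Fin k → Fin n} (hf : Function.Injective f) {m : ℕ}
    (hm : m ≤ k) : ∑ a ∈ pre f m, cand n k f a = Ar n m := by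
  classical
  rw [pre, Finset.sum_image (fun a _ b _ h => hf h)]
  have : ∀ l ∈ Finset.univ.filter (fun l : Fin k => (l : ℕ) < m),
      cand n k f (f l) = (n:ℝ) - (l:ℕ) := fun l _ => cand_apply_mem hf l
  rw [Finset.sum_congr rfl this, filter_sum' k m hm (fun j => (n:ℝ) - j)]
  rfl

lemma comb_eq {u v p q m : ℝ} (hu : 0 < u) (hv : 0 < v) (hp : p ≤ m) (hq : q ≤ m)
    (h : u * p + v * q = u * m + v * m) : p = m ∧ q = m := by
  have h2 : 0 ≤ u * (m - p) := mul_nonneg hu.le (by linarith)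
  have h3 : 0 ≤ v * (m - q) := mul_nonneg hv.le (by linarith)
  have h4 : u * (m - p) = 0 := by nlinarith
  have h5 : v * (m - q) = 0 := by nlinarith
  constructor
  · rcases mul_eq_zero.mp h4 with h | h
    · exact absurd h (ne_of_gt hu)
    · linarith
  · rcases mul_eq_zero.mp h5 with h | h
    · exact absurd h (ne_of_gt hv)
    · linarith

lemma cand_extreme {n k : ℕ} (hk : k ≤ n) {f : Fin k → Fin n} (hf : Function.Injective f) :
    cand n k f ∈ Set.extremePoints ℝ (SIM (fun i : Fin n => (n : ℝ) - (i : ℕ))) := by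
  classical
  rw [mem_extremePoints]
  refine ⟨cand_mem hk hf, ?_⟩
  intro y hy z hz hseg
  obtain ⟨u, v, hu, hv, huv, heq⟩ := hseg
  obtain ⟨hy0, hycon⟩ := mem_iff.mp hy
  obtain ⟨hz0, hzcon⟩ := mem_iff.mp hz
  have hpt : ∀ i, u * y i + v * z i = cand n k f i := fun i => congrFun heq i
  -- a generic claim
  have key : ∀ w : Fin n → ℝ, (∀ i, 0 ≤ w i) →
      (∀ I : Finset (Fin n), ∑ i ∈ I, w i ≤ Ar n I.card) →
      (∀ i, (∀ j, f j ≠ i) → w i = 0) →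
      (∀ m, m ≤ k → ∑ a ∈ pre f m, w a = Ar n m) → w = cand n k f := by
    intro w hw0 hwcon hwzero hwpre
    funext i
    by_cases hi : ∃ j, f j = i
    · obtain ⟨j, rfl⟩ := hi
      have h1 : ∑ a ∈ pre f ((j:ℕ)+1), w a = Ar n ((j:ℕ)+1) := hwpre _ (by omega)
      have h2 : ∑ a ∈ pre f (j:ℕ), w a = Ar n (j:ℕ) := hwpre _ (by omega)
      rw [pre_succ hf j, Finset.sum_insert (notMem_pre hf j)] at h1
      rw [cand_apply_mem hf j, Ar_succ] at *
      linarith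
    · push_neg at hi
      rw [hwzero i hi, cand_apply_notMem hi]
  -- derive prefix equalities for y and z
  have hforced : ∀ m, m ≤ k → (∑ a ∈ pre f m, y a = Ar n m) ∧ (∑ a ∈ pre f m, z a = Ar n m) := by
    intro m hm
    have hcard : (pre f m).card = m := pre_card hf hm
    have hy' : ∑ a ∈ pre f m, y a ≤ Ar n m := by
      have := hycon (pre f m); rwa [hcard] at this
    have hz' : ∑ a ∈ pre f m, z a ≤ Ar n m := by
      have := hzcon (pre f m); rwa [hcard] at this
    have hcomb : u * (∑ a ∈ pre f m, y a) + v * (∑ a ∈ pre f m, z a) = Ar n m := by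
      rw [Finset.mul_sum, Finset.mul_sum, ← Finset.sum_add_distrib,
        Finset.sum_congr rfl (fun a _ => hpt a)]
      exact cand_sum_pre hf hm
    have hm' : u * Ar n m + v * Ar n m = Ar n m := by rw [← add_mul, huv, one_mul]
    exact comb_eq hu hv hy' hz' (by linarith)
  have hzero : ∀ i, (∀ j, f j ≠ i) → y i = 0 ∧ z i = 0 := by
    intro i hi
    have h0 : cand n k f i = 0 := cand_apply_notMem hi
    have hcomb := hpt i
    rw [h0] at hcomb
    have h2 : 0 ≤ u * y i := mul_nonneg hu.le (hy0 i)
    have h3 : 0 ≤ v * z i := mul_nonneg hv.le (hz0 i)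
    have h4 : u * y i = 0 := by linarith
    have h5 : v * z i = 0 := by linarith
    constructor
    · rcases mul_eq_zero.mp h4 with h | h
      · exact absurd h (ne_of_gt hu)
      · exact h
    · rcases mul_eq_zero.mp h5 with h | h
      · exact absurd h (ne_of_gt hv)
      · exact h
  constructor
  · exact key y hy0 hycon (fun i hi => (hzero i hi).1) (fun m hm => (hforced m hm).1)
  · exact key z hz0 hzcon (fun i hi => (hzero i hi).2) (fun m hm => (hforced m hm).2)

lemma extreme_eq_cand {n : ℕ} {x : Fin n → ℝ}
    (hx : x ∈ Set.extremePoints ℝ (SIM (fun i : Fin n => (n : ℝ) - (i : ℕ)))) :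
    ∃ (k : ℕ) (f : Fin k → Fin n), k ≤ n ∧ Function.Injective f ∧ x = cand n k f := by
  classical
  have hxS := hx.1
  obtain ⟨hx0, hcon⟩ := mem_iff.mp hxS
  -- every element of a tight set has positive coordinate
  have H2 : ∀ I : Finset (Fin n), Tight n x I → ∀ i ∈ I, 0 < x i := by
    intro I hI i hi
    have hc1 : 1 ≤ I.card := Finset.card_pos.mpr ⟨i, hi⟩
    have hcn : I.card ≤ n := by simpa using Finset.card_le_univ I
    have herase : ∑ a ∈ I.erase i, x a + x i = ∑ a ∈ I, x a := Finset.sum_erase_add I x hi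
    have hcard : (I.erase i).card = I.card - 1 := Finset.card_erase_of_mem hi
    have hle : ∑ a ∈ I.erase i, x a ≤ Ar n (I.card - 1) := by
      have := hcon (I.erase i); rwa [hcard] at this
    have hAr : Ar n I.card = Ar n (I.card - 1) + ((n:ℝ) - (I.card - 1 : ℕ)) := by
      conv_lhs => rw [show I.card = (I.card - 1) + 1 by omega]
      exact Ar_succ n _
    have hval : (1:ℝ) ≤ (n:ℝ) - ((I.card - 1 : ℕ) : ℝ) := by
      have : ((I.card - 1 : ℕ) : ℝ) ≤ ((n - 1 : ℕ) : ℝ) := by exact_mod_cast (by omega : I.card - 1 ≤ n - 1)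
      have h1 : ((n-1:ℕ):ℝ) = (n:ℝ) - 1 := by
        push_cast [Nat.cast_sub (by omega : 1 ≤ n)]; ring
      linarith [this, h1.le]
    rw [Tight] at hI
    linarith [hI ▸ herase]
  -- every positive coordinate lies in some tight set
  have H3 : ∀ i, 0 < x i → ∃ I, Tight n x I ∧ i ∈ I := by
    intro i hi
    by_contra h
    push_neg at h
    refine pert hx (fun a => if a = i then 1 else 0) ?_ ?_ ?_
    · intro hzero
      have := congrFun hzero i
      simp at this
    · intro a ha
      have : a = i := by by_contra hne; simp [hne] at ha
      subst this; exact hi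
    · intro I hI
      rw [Finset.sum_ite_eq' I i (fun _ => (1:ℝ))]
      simp [h I hI]
  -- minimal tight sets
  have H3' : ∀ i, 0 < x i → ∃ S, Tight n x S ∧ i ∈ S ∧ ∀ I, Tight n x I → i ∈ I → S ⊆ I := by
    intro i hi
    obtain ⟨I₀, hI₀, hiI₀⟩ := H3 i hi
    obtain ⟨S, hSmem, hSmin⟩ := Finset.exists_min_image
      (Finset.univ.filter (fun I => Tight n x I ∧ i ∈ I)) Finset.card
      ⟨I₀, Finset.mem_filter.mpr ⟨Finset.mem_univ _, hI₀, hiI₀⟩⟩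
    obtain ⟨-, hST, hiS⟩ := Finset.mem_filter.mp hSmem
    refine ⟨S, hST, hiS, fun I hI hiI => ?_⟩
    rcases tight_chain hxS hST hI with h | h
    · exact h
    · have hcard : S.card ≤ I.card := hSmin I (Finset.mem_filter.mpr ⟨Finset.mem_univ _, hI, hiI⟩)
      rw [Finset.eq_of_subset_of_card_le h hcard]
  choose! S hS1 hS2 hS3 using H3'
  -- injectivity of minimal tight sets
  have H4 : ∀ a b, 0 < x a → 0 < x b → S a = S b → a = b := by
    intro a b ha hb hSab
    by_contra hne
    refine pert hx (fun i => if i = a then 1 else if i = b then -1 else 0) ?_ ?_ ?_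
    · intro hzero
      have := congrFun hzero a
      simp at this
    · intro i hi
      rcases eq_or_ne i a with rfl | hia
      · exact ha
      · rcases eq_or_ne i b with rfl | hib
        · exact hb
        · simp [hia, hib] at hi
    · intro I hI
      have hsplit : ∑ i ∈ I, (if i = a then (1:ℝ) else if i = b then -1 else 0) =
          (if a ∈ I then (1:ℝ) else 0) + (if b ∈ I then (-1:ℝ) else 0) := by
        have : ∀ i, (if i = a then (1:ℝ) else if i = b then -1 else 0) =
            (if i = a then (1:ℝ) else 0) + (if i = b then (-1:ℝ) else 0) := by
          intro i
          rcases eq_or_ne i a with rfl | hia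
          · simp [hne]
          · simp [hia]
        rw [Finset.sum_congr rfl (fun i _ => this i), Finset.sum_add_distrib,
          Finset.sum_ite_eq' I a (fun _ => (1:ℝ)), Finset.sum_ite_eq' I b (fun _ => (-1:ℝ))]
      rw [hsplit]
      have hiff : a ∈ I ↔ b ∈ I := by
        rcases tight_chain hxS (hS1 a ha) hI with h | h
        · constructor <;> intro _
          · exact h (hSab ▸ hS2 b hb)
          · exact h (hS2 a ha)
        · rcases eq_or_ne I (S a) with rfl | hper
          · constructor <;> intro _
            · exact hSab ▸ hS2 b hb
            · exact hS2 a ha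
          · have hss : I ⊂ S a := ⟨h, fun h2 => hper (Finset.Subset.antisymm h h2)⟩
            constructor <;> intro hmem
            · exact absurd (hS3 a ha I hI hmem) (fun hs => hper (Finset.Subset.antisymm h hs))
            · exact absurd (hS3 b hb I hI hmem) (fun hs => hper (Finset.Subset.antisymm h (hSab ▸ hs)))
      rcases eq_or_ne (a ∈ I : Prop) True with h | h
      · simp only [hiff.mp (of_eq_true h), of_eq_true h, if_true]; ring
      · have ha' : a ∉ I := by simpa using h
        have hb' : b ∉ I := fun hbI => ha' (hiff.mpr hbI)
        simp [ha', hb']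
    -- the predecessor tight set and the value equation
  have HT : ∀ a, 0 < x a → ∃ c : ℕ, c + 1 = (S a).card ∧ x a = (n:ℝ) - c := by
    intro a ha
    -- family of tight proper subsets of S a
    have hfam : (∅ : Finset (Fin n)) ∈
        (Finset.univ : Finset (Finset (Fin n))).filter (fun I => Tight n x I ∧ I ⊂ S a) := by
      refine Finset.mem_filter.mpr ⟨Finset.mem_univ _, ?_, ?_⟩
      · simp [Tight, Ar_zero]
      · exact Finset.empty_ssubset.mpr ⟨a, hS2 a ha⟩
    obtain ⟨T, hTmem, hTmax⟩ := Finset.exists_max_image _ Finset.card ⟨∅, hfam⟩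
    obtain ⟨-, hTt, hTs⟩ := Finset.mem_filter.mp hTmem
    have hTall : ∀ I, Tight n x I → I ⊂ S a → I ⊆ T := by
      intro I hI hIs
      rcases tight_chain hxS hI hTt with h | h
      · exact h
      · have : I.card ≤ T.card := hTmax I
          (Finset.mem_filter.mpr ⟨Finset.mem_univ _, hI, hIs⟩)
        rw [Finset.eq_of_subset_of_card_le h this]
    have haT : a ∉ T := by
      intro haT
      exact absurd (hS3 a ha T hTt haT) (fun hs => hTs.2 hs)
    have hSeq : S a = insert a T := by
      apply Finset.Subset.antisymm
      · intro b hb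
        rcases eq_or_ne b a with rfl | hba
        · exact Finset.mem_insert_self _ _
        · have hxb : 0 < x b := H2 (S a) (hS1 a ha) b hb
          have hSb : S b ⊆ S a := hS3 b hxb (S a) (hS1 a ha) hb
          have hSne : S b ≠ S a := fun h => hba (H4 b a hxb ha h)
          have : S b ⊆ T := hTall (S b) (hS1 b hxb) ⟨hSb, fun h => hSne (Finset.Subset.antisymm hSb h)⟩
          exact Finset.mem_insert_of_mem (this (hS2 b hxb))
      · intro b hb
        rcases Finset.mem_insert.mp hb with hba | hbT
        · rw [hba]; exact hS2 a ha
        · exact hTs.1 hbT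
    refine ⟨T.card, ?_, ?_⟩
    · rw [hSeq, Finset.card_insert_of_notMem haT]
    · have hsum : x a + ∑ i ∈ T, x i = ∑ i ∈ S a, x i := by
        rw [hSeq, Finset.sum_insert haT]
      have h1 : ∑ i ∈ S a, x i = Ar n (S a).card := hS1 a ha
      have h2 : ∑ i ∈ T, x i = Ar n T.card := hTt
      have h3 : (S a).card = T.card + 1 := by rw [hSeq, Finset.card_insert_of_notMem haT]
      rw [h1, h2, h3, Ar_succ] at hsum
      linarith
  choose! r hr1 hr2 using HT
  -- support and its cardinality
  set supp : Finset (Fin n) := Finset.univ.filter (fun i => 0 < x i) with hsupp_def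
  set k : ℕ := supp.card with hk_def
  have hkn : k ≤ n := by
    rw [hk_def]
    simpa using Finset.card_le_univ supp
  have hS_supp : ∀ a, 0 < x a → S a ⊆ supp := by
    intro a ha b hb
    exact Finset.mem_filter.mpr ⟨Finset.mem_univ _, H2 (S a) (hS1 a ha) b hb⟩
  have hrk : ∀ a, 0 < x a → r a < k := by
    intro a ha
    have h1 : (S a).card ≤ k := by
      rw [hk_def]; exact Finset.card_le_card (hS_supp a ha)
    have := hr1 a ha
    omega
  have hrinj : ∀ a b, 0 < x a → 0 < x b → r a = r b → a = b := by
    intro a b ha hb hab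
    apply H4 a b ha hb
    have hcard : (S a).card = (S b).card := by
      have := hr1 a ha; have := hr1 b hb; omega
    rcases tight_chain hxS (hS1 a ha) (hS1 b hb) with h | h
    · exact Finset.eq_of_subset_of_card_le h (le_of_eq hcard.symm)
    · exact (Finset.eq_of_subset_of_card_le h (le_of_eq hcard)).symm
  -- the image of r on supp is range k
  have himage : supp.image r = range k := by
    apply Finset.eq_of_subset_of_card_le
    · intro j hj
      obtain ⟨a, ha, rfl⟩ := Finset.mem_image.mp hj
      exact Finset.mem_range.mpr (hrk a (Finset.mem_filter.mp ha).2)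
    · rw [Finset.card_range, Finset.card_image_of_injOn
        (fun a ha b hb h => hrinj a b (Finset.mem_filter.mp ha).2 (Finset.mem_filter.mp hb).2 h)]
  have hsurj : ∀ j : Fin k, ∃ a, 0 < x a ∧ r a = (j : ℕ) := by
    intro j
    have : (j : ℕ) ∈ range k := Finset.mem_range.mpr j.isLt
    rw [← himage] at this
    obtain ⟨a, ha, heq⟩ := Finset.mem_image.mp this
    exact ⟨a, (Finset.mem_filter.mp ha).2, heq⟩
  choose f hf1 hf2 using hsurj
  have hfx : ∀ j : Fin k, x (f j) = (n:ℝ) - (j:ℕ) := by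
    intro j
    rw [hr2 (f j) (hf1 j), hf2 j]
  have hfinj : Function.Injective f := by
    intro j j' h
    apply Fin.ext
    have := hf2 j; have h2 := hf2 j'
    rw [← this, ← h2, h]
  refine ⟨k, f, hkn, hfinj, ?_⟩
  funext a
  rcases (hx0 a).lt_or_eq with ha | ha
  · -- positive coordinate
    have hak : r a < k := hrk a ha
    set j₀ : Fin k := ⟨r a, hak⟩ with hj₀
    have hfj₀ : f j₀ = a := by
      apply hrinj (f j₀) a (hf1 j₀) ha
      rw [hf2 j₀]
    rw [← hfj₀, cand_apply_mem hfinj j₀, hfx j₀]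
  · -- zero coordinate
    rw [← ha]
    symm
    apply cand_apply_notMem
    intro j hj
    have := hfx j
    rw [hj, ← ha] at this
    have hjn : (j:ℕ) < n := by omega
    have : ((j:ℕ):ℝ) = (n:ℝ) := by linarith
    have : (j:ℕ) = n := by exact_mod_cast this
    omega

lemma cand_total {n k : ℕ} (hk : k ≤ n) (f : Fin k → Fin n) :
    ∑ a, cand n k f a = Ar n k := by
  rw [cand_sum f Finset.univ]
  have h1 : Finset.univ.filter (fun j : Fin k => f j ∈ Finset.univ) = Finset.univ := by
    simp
  rw [h1, Fin.sum_univ_eq_sum_range (fun j => (n:ℝ) - j)]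
  rfl

lemma cand_inj_k {n k k' : ℕ} (hk : k ≤ n) (hk' : k' ≤ n) {f : Fin k → Fin n}
    {f' : Fin k' → Fin n} (h : cand n k f = cand n k' f') : k = k' := by
  have h1 : Ar n k = Ar n k' := by
    rw [← cand_total hk f, ← cand_total hk' f', h]
  by_contra hne
  rcases Nat.lt_or_ge k k' with hlt | hge
  · exact absurd h1 (ne_of_lt (Ar_lt hlt hk'))
  · have : k' < k := by omega
    exact absurd h1.symm (ne_of_lt (Ar_lt this hk))

lemma cand_inj_f {n k : ℕ} (hk : k ≤ n) {f f' : Fin k → Fin n}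
    (hf : Function.Injective f) (hf' : Function.Injective f')
    (h : cand n k f = cand n k f') : f = f' := by
  funext j
  have h1 : cand n k f' (f j) = (n:ℝ) - (j:ℕ) := by
    rw [← h, cand_apply_mem hf]
  have hpos : (0:ℝ) < (n:ℝ) - (j:ℕ) := by
    have : (j:ℕ) < n := by omega
    have : ((j:ℕ):ℝ) < (n:ℝ) := by exact_mod_cast this
    linarith
  by_cases hex : ∃ j', f' j' = f j
  · obtain ⟨j', hj'⟩ := hex
    rw [← hj', cand_apply_mem hf'] at h1
    have : (j':ℕ) = (j:ℕ) := by
      have : ((j':ℕ):ℝ) = ((j:ℕ):ℝ) := by linarith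
      exact_mod_cast this
    rw [← hj', Fin.ext this]
  · push_neg at hex
    rw [cand_apply_notMem hex] at h1
    linarith

end RegSIM

open RegSIM in
/-- the regular SIM-body `Λₙ = Λ(n, n−1, …, 1)` has exactly `Σ_{k=0}^n n!/k!`
extreme points. -/
theorem regular_sim_body_vertex_count (n : ℕ) (hn : 1 ≤ n) :
    (Set.extremePoints ℝ (SIM (fun i : Fin n => (n : ℝ) - (i : ℕ)))).Finite ∧
      (Set.extremePoints ℝ (SIM (fun i : Fin n => (n : ℝ) - (i : ℕ)))).ncard =
        ∑ k ∈ Finset.range (n + 1), n.factorial / k.factorial := by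
  classical
  set Φ : (Σ k : Fin (n+1), (Fin (k:ℕ) ↪ Fin n)) → (Fin n → ℝ) :=
    fun p => cand n (p.1 : ℕ) p.2 with hΦ
  have hrange : Set.extremePoints ℝ (SIM (fun i : Fin n => (n : ℝ) - (i : ℕ))) =
      Set.range Φ := by
    apply Set.Subset.antisymm
    · intro x hx
      obtain ⟨k, f, hkn, hfinj, rfl⟩ := extreme_eq_cand hx
      exact ⟨⟨⟨k, by omega⟩, ⟨f, hfinj⟩⟩, rfl⟩
    · rintro x ⟨⟨k, f⟩, rfl⟩
      exact cand_extreme (by omega) f.injective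
  have hinj : Function.Injective Φ := by
    rintro ⟨k, f⟩ ⟨k', f'⟩ h
    simp only [hΦ] at h
    have hkk : (k : ℕ) = (k' : ℕ) := cand_inj_k (by omega) (by omega) h
    have hk2 : k = k' := Fin.ext hkk
    subst hk2
    have hff : (f : Fin (k:ℕ) → Fin n) = (f' : Fin (k:ℕ) → Fin n) :=
      cand_inj_f (by omega) f.injective f'.injective h
    have : f = f' := Function.Embedding.coe_injective hff
    rw [this]
  constructor
  · rw [hrange]; exact Set.finite_range Φ
  · rw [hrange, ← Set.image_univ, Set.ncard_image_of_injective _ hinj, Set.ncard_univ,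
      Nat.card_eq_fintype_card, Fintype.card_sigma]
    have hterm : ∀ k : Fin (n+1), Fintype.card (Fin (k:ℕ) ↪ Fin n) = n.descFactorial (k:ℕ) := by
      intro k
      rw [Fintype.card_embedding_eq, Fintype.card_fin, Fintype.card_fin]
    rw [Finset.sum_congr rfl (fun k _ => hterm k),
      Fin.sum_univ_eq_sum_range (fun k => n.descFactorial k) (n+1)]
    rw [← Finset.sum_range_reflect (fun k => n.factorial / k.factorial) (n+1)]
    apply Finset.sum_congr rfl
    intro j hj
    have hjn : j ≤ n := by
      have := Finset.mem_range.mp hj; omega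
    rw [Nat.descFactorial_eq_div hjn]
    congr 2
end

section
/- Let α₁ > α₂ > ⋯ > αₙ > 0 be real numbers and let Λ = Λ(α₁,…,αₙ) be the corresponding proper SIM-body. Then for every extreme point v of Λ, the total number of defining constraints of Λ that are tight at v equals exactly n; that is, the number of indices i ∈ {1,…,n} with v_i = 0 plus the number of nonempty subsets I ⊆ {1,…,n} with Σ_{i∈I} v_i = α₁ + ⋯ + α_{|I|} equals n. (In particular, the proper SIM-body is a simple polytope.) -/
open Finset

section Aux
variable {n : ℕ} (α : Fin n → ℝ)

noncomputable def simF (k : ℕ) : ℝ :=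
  ∑ j ∈ Finset.univ.filter (fun j : Fin n => (j : ℕ) < k), α j

noncomputable def alN (j : ℕ) : ℝ := if h : j < n then α ⟨j, h⟩ else 0

lemma simF_eq_range (k : ℕ) (hk : k ≤ n) : simF α k = ∑ j ∈ Finset.range k, alN α j := by
  rw [simF, Finset.sum_filter]
  have h1 : ∀ a : Fin n, (if (a:ℕ) < k then α a else 0)
      = (fun j => if j < k then alN α j else 0) (a : ℕ) := by
    intro a; simp only [alN, a.isLt, dif_pos]
  rw [Finset.sum_congr rfl (fun a _ => h1 a),
    Fin.sum_univ_eq_sum_range (fun j => if j < k then alN α j else 0), ← Finset.sum_filter]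
  have : Finset.filter (fun j => j < k) (Finset.range n) = Finset.range k := by
    ext j; simp only [Finset.mem_filter, Finset.mem_range]; omega
  rw [this]

lemma alN_pos (hpos : ∀ i, 0 < α i) {j : ℕ} (hj : j < n) : 0 < alN α j := by
  simp [alN, hj, hpos]

lemma simF_zero : simF α 0 = 0 := by simp [simF]

lemma simF_strictMono (hpos : ∀ i, 0 < α i) {p q : ℕ} (hpq : p < q) (hq : q ≤ n) :
    simF α p < simF α q := by
  rw [simF_eq_range α p (le_trans hpq.le hq), simF_eq_range α q hq]
  apply Finset.sum_lt_sum_of_subset (Finset.range_subset_range.2 hpq.le)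
    (i := p) (by simp [hpq]) (by simp)
  · exact alN_pos α hpos (lt_of_lt_of_le hpq hq)
  · intro j hj _; exact (alN_pos α hpos (lt_of_lt_of_le (Finset.mem_range.1 hj) hq)).le

lemma simF_concave (hdec : ∀ i j : Fin n, i < j → α j < α i)
    {p a b q : ℕ} (hsum : p + q = a + b) (hpa : p < a) (hpb : p < b) (hq : q ≤ n) (haq : a ≤ q) :
    simF α p + simF α q < simF α a + simF α b := by
  have hbq : b ≤ q := by omega
  have hbn : b ≤ n := hbq.trans hq
  have han : a ≤ n := haq.trans hq
  have hpn : p ≤ n := hpa.le.trans han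
  rw [simF_eq_range α p hpn, simF_eq_range α q hq, simF_eq_range α a han, simF_eq_range α b hbn]
  have key : ∑ j ∈ Finset.Ico b q, alN α j < ∑ j ∈ Finset.Ico p a, alN α j := by
    rw [Finset.sum_Ico_eq_sum_range, Finset.sum_Ico_eq_sum_range]
    have hm : q - b = a - p := by omega
    rw [hm]
    apply Finset.sum_lt_sum_of_nonempty (by simp; omega)
    intro k hk
    rw [Finset.mem_range] at hk
    have h1 : p + k < n := by omega
    have h2 : b + k < n := by omega
    have : α (⟨b + k, h2⟩ : Fin n) < α ⟨p + k, h1⟩ := by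
      apply hdec; simp [Fin.lt_def]; omega
    simpa [alN, h1, h2] using this
  have e1 : ∑ j ∈ Finset.range q, alN α j
      = ∑ j ∈ Finset.range b, alN α j + ∑ j ∈ Finset.Ico b q, alN α j := by
    rw [Finset.range_eq_Ico, Finset.range_eq_Ico]
    exact (Finset.sum_Ico_consecutive _ (Nat.zero_le _) hbq).symm
  have e2 : ∑ j ∈ Finset.range a, alN α j
      = ∑ j ∈ Finset.range p, alN α j + ∑ j ∈ Finset.Ico p a, alN α j := by
    rw [Finset.range_eq_Ico, Finset.range_eq_Ico]
    exact (Finset.sum_Ico_consecutive _ (Nat.zero_le _) hpa.le).symm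
  linarith

lemma tight_chain (hdec : ∀ i j : Fin n, i < j → α j < α i) {v : Fin n → ℝ}
    (hv : v ∈ SIM α) {I J : Finset (Fin n)} (hI : I.Nonempty) (hJ : J.Nonempty)
    (htI : ∑ i ∈ I, v i = simF α I.card) (htJ : ∑ i ∈ J, v i = simF α J.card) :
    I ⊆ J ∨ J ⊆ I := by
  classical
  by_contra h
  push_neg at h
  obtain ⟨hIJ, hJI⟩ := h
  have hpa : (I ∩ J).card < I.card :=
    Finset.card_lt_card (Finset.ssubset_iff_of_subset Finset.inter_subset_left |>.2
      (by obtain ⟨x, hxI, hxJ⟩ := Finset.not_subset.1 hIJ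
          exact ⟨x, hxI, fun hx => hxJ (Finset.mem_inter.1 hx).2⟩))
  have hpb : (I ∩ J).card < J.card :=
    Finset.card_lt_card (Finset.ssubset_iff_of_subset Finset.inter_subset_right |>.2
      (by obtain ⟨x, hxJ, hxI⟩ := Finset.not_subset.1 hJI
          exact ⟨x, hxJ, fun hx => hxI (Finset.mem_inter.1 hx).1⟩))
  have hsum : (I ∩ J).card + (I ∪ J).card = I.card + J.card :=
    Finset.card_inter_add_card_union I J
  have hq : (I ∪ J).card ≤ n := le_trans (Finset.card_le_univ _) (by simp)
  have haq : I.card ≤ (I ∪ J).card := Finset.card_le_card Finset.subset_union_left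
  have h1 : ∑ i ∈ I ∪ J, v i ≤ simF α (I ∪ J).card := hv.2 _ (hI.mono Finset.subset_union_left)
  have h2 : ∑ i ∈ I ∩ J, v i ≤ simF α (I ∩ J).card := by
    rcases Finset.eq_empty_or_nonempty (I ∩ J) with he | hne
    · simp [he, simF_zero]
    · exact hv.2 _ hne
  have h3 : ∑ i ∈ I ∪ J, v i + ∑ i ∈ I ∩ J, v i = ∑ i ∈ I, v i + ∑ i ∈ J, v i :=
    Finset.sum_union_inter
  have h4 := simF_concave α hdec hsum hpa hpb hq haq
  rw [htI, htJ] at h3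
  linarith

end Aux

/-- a proper SIM-body is simple: at each extreme point `v`, the number of
nonnegativity constraints tight at `v` plus the number of subset-sum constraints tight at `v`
equals exactly `n`. -/
theorem proper_sim_body_simple (n : ℕ) (hn : 1 ≤ n) (α : Fin n → ℝ)
    (hdec : ∀ i j : Fin n, i < j → α j < α i) (hpos : ∀ i, 0 < α i) :
    ∀ v ∈ Set.extremePoints ℝ (SIM α),
      {i : Fin n | v i = 0}.ncard +
          {I : Finset (Fin n) | I.Nonempty ∧
            ∑ i ∈ I, v i =
              ∑ j ∈ Finset.univ.filter (fun j : Fin n => (j : ℕ) < I.card), α j}.ncard = n := by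
  classical
  intro v hvext
  obtain ⟨hv, hext⟩ := mem_extremePoints.1 hvext
  set W : Finset (Fin n) := Finset.univ.filter (fun i => v i = 0) with hWdef
  set T : Finset (Finset (Fin n)) :=
    Finset.univ.filter (fun I => I.Nonempty ∧ ∑ i ∈ I, v i = simF α I.card) with hTdef
  have hWmem : ∀ i : Fin n, i ∈ W ↔ v i = 0 := by intro i; simp [hWdef]
  have hTmem : ∀ I : Finset (Fin n), I ∈ T ↔ I.Nonempty ∧ ∑ i ∈ I, v i = simF α I.card := by
    intro I; simp [hTdef]
  -- rewrite goal as card count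
  have hgoal1 : {i : Fin n | v i = 0}.ncard = W.card := by
    rw [show {i : Fin n | v i = 0} = ↑W by ext i; simp [hWmem]]
    exact Set.ncard_coe_finset _
  have hgoal2 : {I : Finset (Fin n) | I.Nonempty ∧
      ∑ i ∈ I, v i = ∑ j ∈ Finset.univ.filter (fun j : Fin n => (j : ℕ) < I.card), α j}.ncard
      = T.card := by
    rw [show {I : Finset (Fin n) | I.Nonempty ∧
        ∑ i ∈ I, v i = ∑ j ∈ Finset.univ.filter (fun j : Fin n => (j : ℕ) < I.card), α j}
        = ↑T by ext I; simp [hTmem, simF]]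
    exact Set.ncard_coe_finset _
  rw [hgoal1, hgoal2]
  -- chain property
  have hchain : ∀ I ∈ T, ∀ J ∈ T, I ⊆ J ∨ J ⊆ I := by
    intro I hI J hJ
    rw [hTmem] at hI hJ
    exact tight_chain α hdec hv hI.1 hJ.1 hI.2 hJ.2
  have hcardn : ∀ I : Finset (Fin n), I.card ≤ n := fun I =>
    le_trans (Finset.card_le_univ _) (by simp)
  -- layer lemma
  have hlayer : ∀ I ∈ T, ∃ i ∈ I, v i ≠ 0 ∧ ∀ J ∈ T, (i ∈ J ↔ I ⊆ J) := by
    intro I hIT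
    obtain ⟨hInon, hItight⟩ := (hTmem I).1 hIT
    have key : ∃ P : Finset (Fin n), P ⊂ I ∧ (∀ J ∈ T, J ⊂ I → J ⊆ P) ∧
        ∑ i ∈ P, v i ≤ simF α P.card := by
      by_cases hC : (T.filter (fun J => J ⊂ I)).Nonempty
      · obtain ⟨P, hPmem, hPmax⟩ := Finset.exists_max_image _ Finset.card hC
        rw [Finset.mem_filter] at hPmem
        obtain ⟨hPT, hPI⟩ := hPmem
        refine ⟨P, hPI, ?_, le_of_eq ((hTmem P).1 hPT).2⟩
        intro J hJT hJI
        rcases hchain J hJT P hPT with h | h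
        · exact h
        · have := hPmax J (Finset.mem_filter.2 ⟨hJT, hJI⟩)
          rw [Finset.eq_of_subset_of_card_le h this]
      · refine ⟨∅, ?_, ?_, by simp [simF_zero]⟩
        · exact Finset.empty_ssubset.2 hInon
        · intro J hJT hJI
          exact absurd ⟨J, Finset.mem_filter.2 ⟨hJT, hJI⟩⟩ hC
    obtain ⟨P, hPI, hPsub, hPsum⟩ := key
    have hi : ∃ i ∈ I \ P, v i ≠ 0 := by
      by_contra hcon
      push_neg at hcon
      have hz : ∑ i ∈ I \ P, v i = 0 := Finset.sum_eq_zero hcon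
      have hsplit : ∑ i ∈ I \ P, v i + ∑ i ∈ P, v i = ∑ i ∈ I, v i :=
        Finset.sum_sdiff hPI.subset
      have hlt : simF α P.card < simF α I.card :=
        simF_strictMono α hpos (Finset.card_lt_card hPI) (hcardn I)
      rw [hz, zero_add, hItight] at hsplit
      linarith
    obtain ⟨i, hiIP, hiv⟩ := hi
    rw [Finset.mem_sdiff] at hiIP
    refine ⟨i, hiIP.1, hiv, ?_⟩
    intro J hJT
    constructor
    · intro hiJ
      rcases hchain I hIT J hJT with h | h
      · exact h
      · rcases eq_or_ne J I with rfl | hne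
        · exact subset_rfl
        · exact absurd (hPsub J hJT (Finset.ssubset_iff_subset_ne.2 ⟨h, hne⟩) hiJ) hiIP.2
    · intro hIJ; exact hIJ hiIP.1
  -- the linear map θ : coefficients → ℝⁿ
  set u : ({i // i ∈ W} ⊕ {I // I ∈ T}) → (Fin n → ℝ) := fun s =>
    Sum.rec (fun w i => if i = w.1 then (1:ℝ) else 0)
      (fun J i => if i ∈ J.1 then (1:ℝ) else 0) s with hudef
  set θ : (({i // i ∈ W} ⊕ {I // I ∈ T}) → ℝ) →ₗ[ℝ] (Fin n → ℝ) :=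
    ∑ s : ({i // i ∈ W} ⊕ {I // I ∈ T}), (LinearMap.proj s).smulRight (u s) with hθdef
  have hθapp : ∀ g i, θ g i = ∑ s : ({i // i ∈ W} ⊕ {I // I ∈ T}), g s * u s i := by
    intro g i
    rw [hθdef]
    simp [LinearMap.sum_apply, Finset.sum_apply, LinearMap.smulRight_apply,
      LinearMap.proj_apply]
  have hθinj : Function.Injective θ := by
    rw [← LinearMap.ker_eq_bot, LinearMap.ker_eq_bot']
    intro g hg
    set c : Fin n → ℝ := fun i => if h : i ∈ W then g (Sum.inl ⟨i, h⟩) else 0 with hcdef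
    set G : Finset (Fin n) → ℝ := fun J => if h : J ∈ T then g (Sum.inr ⟨J, h⟩) else 0 with hGdef
    have hEq : ∀ i : Fin n,
        (if i ∈ W then c i else 0) + ∑ J ∈ T.filter (fun J => i ∈ J), G J = 0 := by
      intro i
      have h0 : θ g i = 0 := by rw [hg]; rfl
      rw [hθapp, Fintype.sum_sum_type] at h0
      have e1 : ∑ w : {x // x ∈ W}, g (Sum.inl w) * u (Sum.inl w) i
          = if i ∈ W then c i else 0 := by
        have estep : ∀ w : {x // x ∈ W}, g (Sum.inl w) * u (Sum.inl w) i
            = if i = (w : Fin n) then c (w : Fin n) else 0 := by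
          intro w
          have hc : c (w : Fin n) = g (Sum.inl w) := by
            rw [hcdef]; simp only [dif_pos w.2]
          rw [hudef, hc]
          simp [mul_ite]
        rw [Finset.sum_congr rfl (fun w _ => estep w),
          Finset.sum_coe_sort W (fun x => if i = x then c x else 0), Finset.sum_ite_eq]
      have e2 : ∑ J : {I // I ∈ T}, g (Sum.inr J) * u (Sum.inr J) i
          = ∑ J ∈ T.filter (fun J => i ∈ J), G J := by
        have estep : ∀ J : {I // I ∈ T}, g (Sum.inr J) * u (Sum.inr J) i
            = if i ∈ (J : Finset (Fin n)) then G (J : Finset (Fin n)) else 0 := by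
          intro J
          have hc : G (J : Finset (Fin n)) = g (Sum.inr J) := by
            rw [hGdef]; simp only [dif_pos J.2]
          rw [hudef, hc]
          simp [mul_ite]
        rw [Finset.sum_congr rfl (fun J _ => estep J),
          Finset.sum_coe_sort T (fun J => if i ∈ J then G J else 0), ← Finset.sum_filter]
      rw [e1, e2] at h0
      exact h0
    have hS : ∀ I ∈ T, ∑ J ∈ T.filter (fun J => I ⊆ J), G J = 0 := by
      intro I hIT
      obtain ⟨i, hiI, hiv, hiff⟩ := hlayer I hIT
      have hiW : i ∉ W := by rw [hWmem]; exact hiv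
      have h := hEq i
      rw [if_neg hiW, zero_add] at h
      rw [← h]
      apply Finset.sum_congr _ (fun _ _ => rfl)
      ext J
      simp only [Finset.mem_filter]
      exact and_congr_right fun hJ => ⟨fun hIJ => (hiff J hJ).2 hIJ, fun hiJ => (hiff J hJ).1 hiJ⟩
    have hG0 : ∀ I ∈ T, G I = 0 := by
      intro I hIT
      have hsplit : T.filter (fun J => I ⊆ J) = insert I (T.filter (fun J => I ⊂ J)) := by
        ext J
        simp only [Finset.mem_insert, Finset.mem_filter]
        constructor
        · rintro ⟨hJT, hIJ⟩
          rcases eq_or_ne J I with rfl | hne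
          · exact Or.inl rfl
          · exact Or.inr ⟨hJT, Finset.ssubset_iff_subset_ne.2 ⟨hIJ, hne.symm⟩⟩
        · rintro (rfl | ⟨hJT, hIJ⟩)
          · exact ⟨hIT, subset_rfl⟩
          · exact ⟨hJT, hIJ.subset⟩
      have hnotmem : I ∉ T.filter (fun J => I ⊂ J) := by
        simp only [Finset.mem_filter]; exact fun h => absurd h.2 (lt_irrefl I)
      have h1 := hS I hIT
      rw [hsplit, Finset.sum_insert hnotmem] at h1
      have h2 : ∑ J ∈ T.filter (fun J => I ⊂ J), G J = 0 := by
        by_cases hC : (T.filter (fun J => I ⊂ J)).Nonempty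
        · obtain ⟨I', hI'mem, hI'min⟩ := Finset.exists_min_image _ Finset.card hC
          rw [Finset.mem_filter] at hI'mem
          obtain ⟨hI'T, hII'⟩ := hI'mem
          have hfe : T.filter (fun J => I ⊂ J) = T.filter (fun J => I' ⊆ J) := by
            ext J
            simp only [Finset.mem_filter]
            refine and_congr_right fun hJT => ⟨fun hIJ => ?_, fun h => hII'.trans_subset h⟩
            rcases hchain J hJT I' hI'T with h | h
            · have hcard := hI'min J (Finset.mem_filter.2 ⟨hJT, hIJ⟩)
              rw [Finset.eq_of_subset_of_card_le h hcard]
            · exact h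
          rw [hfe]
          exact hS I' hI'T
        · rw [Finset.not_nonempty_iff_eq_empty.1 hC, Finset.sum_empty]
      rw [h2, add_zero] at h1
      exact h1
    funext s
    rcases s with w | J
    · have h := hEq w.1
      rw [if_pos w.2] at h
      have hsum0 : ∑ J ∈ T.filter (fun J => (w : Fin n) ∈ J), G J = 0 :=
        Finset.sum_eq_zero (fun J hJ => hG0 J (Finset.mem_filter.1 hJ).1)
      rw [hsum0, add_zero] at h
      have hc : c (w : Fin n) = g (Sum.inl w) := by
        rw [hcdef]; simp only [dif_pos w.2]
      rw [hc] at h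
      simpa using h
    · have h := hG0 J.1 J.2
      have hc : G (J : Finset (Fin n)) = g (Sum.inr J) := by
        rw [hGdef]; simp only [dif_pos J.2]
      rw [hc] at h
      simpa using h
  -- the linear map ψ : ℝⁿ → constraint values
  set ψ : (Fin n → ℝ) →ₗ[ℝ] (({i // i ∈ W} ⊕ {I // I ∈ T}) → ℝ) :=
    LinearMap.pi (fun s => Sum.rec (fun w => LinearMap.proj w.1)
      (fun J => ∑ j ∈ J.1, LinearMap.proj j) s) with hψdef
  have hψinj : Function.Injective ψ := by
    rw [← LinearMap.ker_eq_bot, LinearMap.ker_eq_bot']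
    intro d hd
    have hdW : ∀ x ∈ W, d x = 0 := by
      intro x hx
      have h := congrFun hd (Sum.inl ⟨x, hx⟩)
      simpa [hψdef, LinearMap.pi_apply, LinearMap.proj_apply] using h
    have hdT : ∀ I ∈ T, ∑ j ∈ I, d j = 0 := by
      intro I hI
      have h := congrFun hd (Sum.inr ⟨I, hI⟩)
      simpa [hψdef, LinearMap.pi_apply, LinearMap.sum_apply, LinearMap.proj_apply] using h
    by_contra hd0
    set N : Finset (Finset (Fin n)) := Finset.univ.filter (fun I => I.Nonempty ∧ I ∉ T)
      with hNdef
    set Δ : Finset ℝ := insert 1 (((Finset.univ \ W).image v) ∪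
      N.image (fun I => simF α I.card - ∑ i ∈ I, v i)) with hΔdef
    have hΔne : Δ.Nonempty := ⟨1, Finset.mem_insert_self _ _⟩
    set δ : ℝ := Δ.min' hΔne with hδdef
    have hδpos : 0 < δ := by
      rw [hδdef, Finset.lt_min'_iff]
      intro y hy
      rw [hΔdef] at hy
      rcases Finset.mem_insert.1 hy with rfl | hy
      · norm_num
      rcases Finset.mem_union.1 hy with hy | hy
      · obtain ⟨i, hi, rfl⟩ := Finset.mem_image.1 hy
        rw [Finset.mem_sdiff, hWmem] at hi
        exact lt_of_le_of_ne (hv.1 i) (Ne.symm hi.2)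
      · obtain ⟨I, hI, rfl⟩ := Finset.mem_image.1 hy
        rw [hNdef, Finset.mem_filter] at hI
        obtain ⟨-, hInon, hIT⟩ := hI
        have hle : ∑ i ∈ I, v i ≤ simF α I.card := hv.2 I hInon
        have hne : ∑ i ∈ I, v i ≠ simF α I.card := fun h => hIT ((hTmem I).2 ⟨hInon, h⟩)
        have := lt_of_le_of_ne hle hne
        linarith
    have hδv : ∀ i : Fin n, i ∉ W → δ ≤ v i := by
      intro i hi
      apply Finset.min'_le
      rw [hΔdef]
      exact Finset.mem_insert_of_mem (Finset.mem_union_left _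
        (Finset.mem_image_of_mem v (Finset.mem_sdiff.2 ⟨Finset.mem_univ i, hi⟩)))
    have hδI : ∀ I : Finset (Fin n), I.Nonempty → I ∉ T →
        δ ≤ simF α I.card - ∑ i ∈ I, v i := by
      intro I h1 h2
      apply Finset.min'_le
      rw [hΔdef]
      exact Finset.mem_insert_of_mem (Finset.mem_union_right _
        (Finset.mem_image_of_mem _ (by rw [hNdef]; simp [h1, h2])))
    set C : ℝ := (∑ i, |d i|) + 1 with hCdef
    have hC1 : 1 ≤ C := by
      rw [hCdef]
      have : 0 ≤ ∑ i, |d i| := Finset.sum_nonneg (fun i _ => abs_nonneg _)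
      linarith
    have hC0 : 0 < C := lt_of_lt_of_le one_pos hC1
    have hCi : ∀ i, |d i| ≤ C := by
      intro i
      rw [hCdef]
      have := Finset.single_le_sum (f := fun i => |d i|) (fun i _ => abs_nonneg _)
        (Finset.mem_univ i)
      linarith
    have hCI : ∀ I : Finset (Fin n), |∑ j ∈ I, d j| ≤ C := by
      intro I
      calc |∑ j ∈ I, d j| ≤ ∑ j ∈ I, |d j| := Finset.abs_sum_le_sum_abs _ _
        _ ≤ ∑ j, |d j| := Finset.sum_le_sum_of_subset_of_nonneg (Finset.subset_univ I)
            (fun i _ _ => abs_nonneg _)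
        _ ≤ C := by rw [hCdef]; linarith
    set ε : ℝ := δ / C with hεdef
    have hεpos : 0 < ε := div_pos hδpos hC0
    have hmem : ∀ t : ℝ, |t| ≤ ε → (v + t • d) ∈ SIM α := by
      intro t ht
      have habs : ∀ x : ℝ, |x| ≤ C → |t * x| ≤ δ := by
        intro x hx
        rw [abs_mul]
        calc |t| * |x| ≤ ε * C := mul_le_mul ht hx (abs_nonneg _) hεpos.le
          _ = δ := by rw [hεdef]; field_simp
      constructor
      · intro i
        have happ : (v + t • d) i = v i + t * d i := rfl
        rw [happ]
        by_cases hi : i ∈ W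
        · rw [(hWmem i).1 hi, hdW i hi]; norm_num
        · have h1 := habs (d i) (hCi i)
          have h2 := hδv i hi
          have := neg_abs_le (t * d i)
          linarith
      · intro I hInon
        have hsum : ∑ i ∈ I, (v + t • d) i = ∑ i ∈ I, v i + t * ∑ j ∈ I, d j := by
          simp [Finset.sum_add_distrib, Finset.mul_sum]
        show ∑ i ∈ I, (v + t • d) i ≤ simF α I.card
        rw [hsum]
        by_cases hI : I ∈ T
        · rw [hdT I hI, mul_zero, add_zero]
          exact le_of_eq ((hTmem I).1 hI).2
        · have h1 := habs _ (hCI I)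
          have h2 := hδI I hInon hI
          have := le_abs_self (t * ∑ j ∈ I, d j)
          linarith
    have hx := hmem ε (by rw [abs_of_pos hεpos])
    have hy := hmem (-ε) (by rw [abs_neg, abs_of_pos hεpos])
    have hseg : v ∈ openSegment ℝ (v + ε • d) (v + (-ε) • d) := by
      refine ⟨1/2, 1/2, by norm_num, by norm_num, by norm_num, ?_⟩
      module
    have heq := (hext _ hx _ hy hseg).1
    have hεd : ε • d = 0 := by
      have h2 : ε • d = (v + ε • d) - v := by abel
      rw [h2, heq]; abel
    rcases smul_eq_zero.1 hεd with h | h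
    · exact absurd h (ne_of_gt hεpos)
    · exact hd0 h
  -- counting
  have hfin1 : Fintype.card ({i // i ∈ W} ⊕ {I // I ∈ T}) ≤ n := by
    have h1 := LinearMap.finrank_le_finrank_of_injective hθinj
    rwa [Module.finrank_fintype_fun_eq_card, Module.finrank_fintype_fun_eq_card,
      Fintype.card_fin] at h1
  have hfin2 : n ≤ Fintype.card ({i // i ∈ W} ⊕ {I // I ∈ T}) := by
    have h1 := LinearMap.finrank_le_finrank_of_injective hψinj
    rwa [Module.finrank_fintype_fun_eq_card, Module.finrank_fintype_fun_eq_card,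
      Fintype.card_fin] at h1
  have hcount : Fintype.card ({i // i ∈ W} ⊕ {I // I ∈ T}) = W.card + T.card := by
    rw [Fintype.card_sum, Fintype.card_coe, Fintype.card_coe]
  omega
end

section
/- Let α₁ ≥ ⋯ ≥ αₙ ≥ 0 be real numbers, set ᾱ = α₁ + ⋯ + αₙ, and let Γ ⊆ ℝ^{n+1} be the homogeneous SIM-body, namely the image of the SIM-body Λ(α₁,…,αₙ) under the map x ↦ (x₁,…,xₙ, ᾱ − Σ_{i=1}^{n} x_i). Then every edge of Γ is parallel to the difference of two standard basis vectors: if v ≠ w are points of Γ such that the segment [v,w] is a face of Γ, then there exist indices i ≠ j in {1,…,n+1} and a scalar c ∈ ℝ with v − w = c·(e_i − e_j), where e_i denotes the i-th standard basis vector of ℝ^{n+1}. (Equivalently, Γ is a generalized permutahedron.) -/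
open Finset

/-- The homogeneous SIM-body `Γ(α₁,…,αₙ) ⊆ ℝ^{n+1}`: the image of `Λ(α₁,…,αₙ)` under
`x ↦ (x₁,…,xₙ, ᾱ − Σᵢ xᵢ)`. -/
def homSIM {n : ℕ} (α : Fin n → ℝ) : Set (Fin (n + 1) → ℝ) :=
  (fun x : Fin n → ℝ => Fin.snoc x ((∑ i, α i) - ∑ i, x i)) '' SIM α

noncomputable def gfun {n : ℕ} (α : Fin n → ℝ) (k : ℕ) : ℝ :=
  ∑ j ∈ Finset.univ.filter (fun j : Fin n => (j : ℕ) < k), α j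

noncomputable def astep {n : ℕ} (α : Fin n → ℝ) (k : ℕ) : ℝ :=
  if h : k < n then α ⟨k, h⟩ else 0

lemma gfun_succ {n : ℕ} (α : Fin n → ℝ) (k : ℕ) :
    gfun α (k + 1) = gfun α k + astep α k := by
  classical
  unfold gfun astep
  rw [Finset.sum_filter, Finset.sum_filter]
  have h1 : ∀ j : Fin n, (if (j : ℕ) < k + 1 then α j else 0)
      = (if (j : ℕ) < k then α j else 0) + (if (j : ℕ) = k then α j else 0) := by
    intro j
    rcases lt_trichotomy (j : ℕ) k with h | h | h
    · simp [h, Nat.lt_succ_of_lt h, Nat.ne_of_lt h]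
    · simp [h]
    · simp [Nat.not_lt.mpr h, Nat.not_lt.mpr (Nat.le_of_lt h), Nat.ne_of_gt h]
  rw [Finset.sum_congr rfl (fun j _ => h1 j), Finset.sum_add_distrib]
  congr 1
  by_cases h : k < n
  · rw [dif_pos h, Finset.sum_eq_single (⟨k, h⟩ : Fin n)]
    · simp
    · intro b _ hb
      have : (b : ℕ) ≠ k := fun hc => hb (Fin.ext hc)
      simp [this]
    · simp
  · rw [dif_neg h, Finset.sum_eq_zero]
    intro j _
    have : (j : ℕ) ≠ k := fun hc => h (hc ▸ j.2)
    simp [this]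

lemma astep_antitone {n : ℕ} {α : Fin n → ℝ} (hdec : ∀ i j : Fin n, i ≤ j → α j ≤ α i)
    (hnonneg : ∀ i, 0 ≤ α i) {k l : ℕ} (h : k ≤ l) : astep α l ≤ astep α k := by
  unfold astep
  by_cases hl : l < n
  · have hk : k < n := lt_of_le_of_lt h hl
    rw [dif_pos hl, dif_pos hk]
    exact hdec ⟨k, hk⟩ ⟨l, hl⟩ h
  · rw [dif_neg hl]
    by_cases hk : k < n
    · rw [dif_pos hk]; exact hnonneg _
    · rw [dif_neg hk]

lemma gfun_super {n : ℕ} {α : Fin n → ℝ} (hdec : ∀ i j : Fin n, i ≤ j → α j ≤ α i)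
    (hnonneg : ∀ i, 0 ≤ α i) (t : ℕ) {a b : ℕ} (h : a ≤ b) :
    gfun α (b + t) + gfun α a ≤ gfun α (a + t) + gfun α b := by
  induction t with
  | zero => simp only [Nat.add_zero]; linarith
  | succ t ih =>
    have h1 : astep α (b + t) ≤ astep α (a + t) :=
      astep_antitone hdec hnonneg (Nat.add_le_add_right h t)
    have e1 : b + (t+1) = (b + t) + 1 := by omega
    have e2 : a + (t+1) = (a + t) + 1 := by omega
    rw [e1, e2, gfun_succ, gfun_succ]
    linarith

lemma gfun_submod {n : ℕ} {α : Fin n → ℝ} (hdec : ∀ i j : Fin n, i ≤ j → α j ≤ α i)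
    (hnonneg : ∀ i, 0 ≤ α i) {e f c1 c2 : ℕ} (hsum : e + f = c1 + c2)
    (h1 : e ≤ c1) (h2 : e ≤ c2) :
    gfun α f + gfun α e ≤ gfun α c1 + gfun α c2 := by
  rcases le_total c1 c2 with hc | hc
  · have ht : c1 + (c2 - e) = f := by omega
    have ht2 : e + (c2 - e) = c2 := by omega
    have := gfun_super hdec hnonneg (c2 - e) h1
    rw [ht, ht2] at this
    linarith
  · have ht : c2 + (c1 - e) = f := by omega
    have ht2 : e + (c1 - e) = c1 := by omega
    have := gfun_super hdec hnonneg (c1 - e) h2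
    rw [ht, ht2] at this
    linarith

lemma gfun_total {n : ℕ} (α : Fin n → ℝ) {k : ℕ} (hk : n ≤ k) : gfun α k = ∑ i, α i := by
  unfold gfun
  rw [Finset.filter_true_of_mem]
  intro j _
  exact lt_of_lt_of_le j.2 hk

lemma mem_homSIM_iff {n : ℕ} (α : Fin n → ℝ) (y : Fin (n + 1) → ℝ) :
    y ∈ homSIM α ↔ (∀ i : Fin n, 0 ≤ y i.castSucc) ∧
      (∀ I : Finset (Fin n), I.Nonempty → ∑ i ∈ I, y i.castSucc ≤ gfun α I.card) ∧
      (∑ i, y i = ∑ i, α i) := by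
  constructor
  · rintro ⟨x, hx, rfl⟩
    refine ⟨fun i => by simpa using hx.1 i, fun I hI => by simpa [Fin.snoc, gfun] using hx.2 I hI, ?_⟩
    rw [Fin.sum_univ_castSucc]
    simp [Fin.snoc]
  · rintro ⟨h1, h2, h3⟩
    refine ⟨fun i => y i.castSucc, ⟨h1, h2⟩, ?_⟩
    dsimp only
    funext k
    induction k using Fin.lastCases with
    | last =>
      rw [Fin.snoc_last]
      rw [Fin.sum_univ_castSucc] at h3
      linarith
    | cast i =>
      rw [Fin.snoc_castSucc]

lemma homSIM_nonneg {n : ℕ} {α : Fin n → ℝ} {y : Fin (n + 1) → ℝ} (hy : y ∈ homSIM α) :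
    ∀ k, 0 ≤ y k := by
  rw [mem_homSIM_iff] at hy
  intro k
  induction k using Fin.lastCases with
  | cast i => exact hy.1 i
  | last =>
    by_cases hn0 : (Finset.univ : Finset (Fin n)).Nonempty
    · have h4 := hy.2.1 Finset.univ hn0
      rw [Finset.card_univ, Fintype.card_fin, gfun_total α le_rfl] at h4
      have h5 := hy.2.2
      rw [Fin.sum_univ_castSucc] at h5
      linarith
    · have hn : n = 0 := by
        rcases Nat.eq_zero_or_pos n with h | h
        · exact h
        · exact absurd ⟨⟨0, h⟩, Finset.mem_univ _⟩ hn0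
      subst hn
      have h5 := hy.2.2
      simp only [Finset.univ_eq_empty, Finset.sum_empty] at h5
      rw [show ∑ i : Fin 1, y i = y (Fin.last 0) from by simp [Fin.last]] at h5
      rw [h5]

section Part3
variable {n : ℕ} {α : Fin n → ℝ} {m v w : Fin (n + 1) → ℝ}

lemma exists_map_eq {J : Finset (Fin (n + 1))} (h : Fin.last n ∉ J) :
    ∃ I : Finset (Fin n), I.map Fin.castSuccEmb = J ∧ I.card = J.card := by
  classical
  have hemb : ∀ x : Fin n, Fin.castSuccEmb x = Fin.castSucc x := fun _ => rfl
  have hmap : (J.preimage Fin.castSucc (Fin.castSucc_injective n).injOn).map Fin.castSuccEmb = J := by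
    ext k
    simp only [Finset.mem_map, Finset.mem_preimage, hemb]
    constructor
    · rintro ⟨i, hi, rfl⟩
      exact hi
    · intro hk
      have hkl : k ≠ Fin.last n := fun hc => h (hc ▸ hk)
      exact ⟨k.castPred hkl, by rwa [Fin.castSucc_castPred k hkl], Fin.castSucc_castPred k hkl⟩
  refine ⟨_, hmap, ?_⟩
  have hc := congrArg Finset.card hmap
  rwa [Finset.card_map] at hc

/-- Tight constraints at `m`. -/
def tightSet (α : Fin n → ℝ) (m : Fin (n + 1) → ℝ) (J : Finset (Fin (n + 1))) : Prop :=
  J = Finset.univ ∨ (Fin.last n ∉ J ∧ J.Nonempty ∧ ∑ k ∈ J, m k = gfun α J.card)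

lemma sum_le_of_mem (hm : m ∈ homSIM α) {J : Finset (Fin (n + 1))}
    (hlast : Fin.last n ∉ J) (hne : J.Nonempty) : ∑ k ∈ J, m k ≤ gfun α J.card := by
  obtain ⟨I, hmap, hcard⟩ := exists_map_eq hlast
  rw [mem_homSIM_iff] at hm
  have hIne : I.Nonempty := by
    rw [← Finset.card_pos, hcard, Finset.card_pos]; exact hne
  have := hm.2.1 I hIne
  rw [← hmap, Finset.sum_map, Finset.card_map]
  have hemb : ∀ x : Fin n, Fin.castSuccEmb x = Fin.castSucc x := fun _ => rfl
  simp only [hemb]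
  exact this

lemma tightSet_sum (hm : m ∈ homSIM α) {J : Finset (Fin (n + 1))} (hJ : tightSet α m J) :
    ∑ k ∈ J, m k = gfun α J.card := by
  rcases hJ with rfl | ⟨_, _, h⟩
  · rw [Finset.card_univ, Fintype.card_fin, gfun_total α (Nat.le_succ n)]
    exact (mem_homSIM_iff α m).mp hm |>.2.2
  · exact h

lemma tight_closure (hm : m ∈ homSIM α)
    (hdec : ∀ i j : Fin n, i ≤ j → α j ≤ α i) (hnonneg : ∀ i, 0 ≤ α i)
    {J1 J2 : Finset (Fin (n + 1))} (h1 : tightSet α m J1) (h2 : tightSet α m J2)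
    (hne : (J1 ∩ J2).Nonempty) : tightSet α m (J1 ∩ J2) ∧ tightSet α m (J1 ∪ J2) := by
  classical
  rcases h1 with rfl | ⟨hl1, hne1, ht1⟩
  · rw [Finset.univ_inter, Finset.union_eq_left.mpr (Finset.subset_univ _)]
    exact ⟨h2, Or.inl rfl⟩
  rcases h2 with rfl | ⟨hl2, hne2, ht2⟩
  · rw [Finset.inter_univ, Finset.union_eq_right.mpr (Finset.subset_univ _)]
    exact ⟨Or.inr ⟨hl1, hne1, ht1⟩, Or.inl rfl⟩
  have hli : Fin.last n ∉ J1 ∩ J2 := fun hc => hl1 (Finset.mem_inter.mp hc).1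
  have hlu : Fin.last n ∉ J1 ∪ J2 := fun hc => by
    rcases Finset.mem_union.mp hc with h | h
    · exact hl1 h
    · exact hl2 h
  have hneu : (J1 ∪ J2).Nonempty := hne1.mono Finset.subset_union_left
  have hub1 : ∑ k ∈ J1 ∩ J2, m k ≤ gfun α (J1 ∩ J2).card := sum_le_of_mem hm hli hne
  have hub2 : ∑ k ∈ J1 ∪ J2, m k ≤ gfun α (J1 ∪ J2).card := sum_le_of_mem hm hlu hneu
  have hsub : gfun α (J1 ∪ J2).card + gfun α (J1 ∩ J2).card ≤ gfun α J1.card + gfun α J2.card :=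
    gfun_submod hdec hnonneg (Finset.card_inter_add_card_union J1 J2)
      (Finset.card_le_card Finset.inter_subset_left)
      (Finset.card_le_card Finset.inter_subset_right)
  have hadd : ∑ k ∈ J1 ∪ J2, m k + ∑ k ∈ J1 ∩ J2, m k = ∑ k ∈ J1, m k + ∑ k ∈ J2, m k :=
    Finset.sum_union_inter
  constructor
  · exact Or.inr ⟨hli, hne, by linarith⟩
  · exact Or.inr ⟨hlu, hneu, by linarith⟩

lemma tight_diff_zero (hv : v ∈ homSIM α) (hw : w ∈ homSIM α)
    {J : Finset (Fin (n + 1))} (hm : m ∈ homSIM α) (hmid : ∀ k, m k = (v k + w k) / 2)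
    (hJ : tightSet α m J) : ∑ k ∈ J, (v - w) k = 0 := by
  have hsplit : ∀ u u' : Fin (n + 1) → ℝ, ∑ k ∈ J, (u - u') k = ∑ k ∈ J, u k - ∑ k ∈ J, u' k := by
    intro u u'
    simp [Finset.sum_sub_distrib]
  have hmsum : ∑ k ∈ J, m k = (∑ k ∈ J, v k + ∑ k ∈ J, w k) / 2 := by
    rw [← Finset.sum_add_distrib, Finset.sum_div]
    exact Finset.sum_congr rfl fun k _ => hmid k
  rcases hJ with rfl | ⟨hl, hne, ht⟩
  · rw [hsplit, ((mem_homSIM_iff α v).mp hv).2.2, ((mem_homSIM_iff α w).mp hw).2.2, sub_self]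
  · have hv' := sum_le_of_mem hv hl hne
    have hw' := sum_le_of_mem hw hl hne
    rw [hsplit]
    linarith

end Part3

section Part4
variable {n : ℕ} {α : Fin n → ℝ} {m : Fin (n + 1) → ℝ}

lemma exists_minimal_tight (hm : m ∈ homSIM α)
    (hdec : ∀ i j : Fin n, i ≤ j → α j ≤ α i) (hnonneg : ∀ i, 0 ≤ α i) :
    ∀ i : Fin (n + 1), ∃ J : Finset (Fin (n + 1)), tightSet α m J ∧ i ∈ J ∧
      ∀ J' : Finset (Fin (n + 1)), tightSet α m J' → i ∈ J' → J ⊆ J' := by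
  classical
  intro i
  set F : Finset (Finset (Fin (n + 1))) :=
    Finset.univ.filter (fun J => tightSet α m J ∧ i ∈ J) with hF
  have hFne : F.Nonempty := by
    refine ⟨Finset.univ, ?_⟩
    rw [hF, Finset.mem_filter]
    exact ⟨Finset.mem_univ _, Or.inl rfl, Finset.mem_univ _⟩
  obtain ⟨J, hJF, hJmin⟩ := Finset.exists_min_image F Finset.card hFne
  rw [hF, Finset.mem_filter] at hJF
  refine ⟨J, hJF.2.1, hJF.2.2, ?_⟩
  intro J' hJ't hiJ'
  have hone : (J ∩ J').Nonempty := ⟨i, Finset.mem_inter.mpr ⟨hJF.2.2, hiJ'⟩⟩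
  have hint : tightSet α m (J ∩ J') := (tight_closure hm hdec hnonneg hJF.2.1 hJ't hone).1
  have hmem : J ∩ J' ∈ F := by
    rw [hF, Finset.mem_filter]
    exact ⟨Finset.mem_univ _, hint, Finset.mem_inter.mpr ⟨hJF.2.2, hiJ'⟩⟩
  have hle : J.card ≤ (J ∩ J').card := hJmin _ hmem
  have : J ∩ J' = J := Finset.eq_of_subset_of_card_le Finset.inter_subset_left (by omega)
  intro k hk
  exact (Finset.mem_inter.mp (this ▸ hk)).2

lemma exists_same_pattern_pair (hm : m ∈ homSIM α)
    (hdec : ∀ i j : Fin n, i ≤ j → α j ≤ α i) (hnonneg : ∀ i, 0 ≤ α i)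
    {d : Fin (n + 1) → ℝ} (hd0 : ∀ J : Finset (Fin (n + 1)), tightSet α m J → ∑ k ∈ J, d k = 0)
    (hdne : ∃ i, d i ≠ 0) :
    ∃ i j : Fin (n + 1), i ≠ j ∧ d i ≠ 0 ∧ d j ≠ 0 ∧
      ∀ J : Finset (Fin (n + 1)), tightSet α m J → (i ∈ J ↔ j ∈ J) := by
  classical
  choose M hMt hMmem hMmin using exists_minimal_tight hm hdec hnonneg
  set S : Finset (Fin (n + 1)) := Finset.univ.filter (fun i => d i ≠ 0) with hS
  have hSne : S.Nonempty := by
    obtain ⟨i, hi⟩ := hdne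
    exact ⟨i, by rw [hS, Finset.mem_filter]; exact ⟨Finset.mem_univ _, hi⟩⟩
  obtain ⟨i, hiS, himin⟩ := Finset.exists_min_image S (fun i => (M i).card) hSne
  have hdi : d i ≠ 0 := by
    rw [hS, Finset.mem_filter] at hiS
    exact hiS.2
  have hsum : ∑ k ∈ M i, d k = 0 := hd0 _ (hMt i)
  have hj : ∃ j ∈ M i, j ≠ i ∧ d j ≠ 0 := by
    by_contra hc
    push_neg at hc
    have : ∑ k ∈ M i, d k = d i := by
      refine Finset.sum_eq_single i (fun k hk hki => ?_) (fun h => absurd (hMmem i) h)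
      by_contra hz
      exact hz (hc k hk hki)
    rw [this] at hsum
    exact hdi hsum
  obtain ⟨j, hjMi, hji, hdj⟩ := hj
  have hjS : j ∈ S := by rw [hS, Finset.mem_filter]; exact ⟨Finset.mem_univ _, hdj⟩
  have hMji : M j ⊆ M i := hMmin j (M i) (hMt i) hjMi
  have hcard : (M i).card ≤ (M j).card := himin j hjS
  have hMeq : M j = M i := Finset.eq_of_subset_of_card_le hMji hcard
  refine ⟨i, j, fun h => hji h.symm, hdi, hdj, ?_⟩
  intro J hJ
  constructor
  · intro hiJ
    exact hMmin i J hJ hiJ hjMi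
  · intro hjJ
    have : M j ⊆ J := hMmin j J hJ hjJ
    exact this (hMeq ▸ hMmem i : i ∈ M j)
end Part4

section Part5
variable {n : ℕ} {α : Fin n → ℝ} {m : Fin (n + 1) → ℝ}

lemma single_sum_eq {i j : Fin (n + 1)} (J : Finset (Fin (n + 1))) :
    ∑ k ∈ J, ((Pi.single i (1 : ℝ) - Pi.single j 1 : Fin (n + 1) → ℝ)) k
      = (if i ∈ J then (1 : ℝ) else 0) - (if j ∈ J then (1 : ℝ) else 0) := by
  classical
  simp only [Pi.sub_apply]
  rw [Finset.sum_sub_distrib]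
  congr 1 <;>
  · simp only [Pi.single_apply]
    rw [Finset.sum_ite_eq' J _ (fun _ => (1 : ℝ))]

lemma perturb_mem (hm : m ∈ homSIM α) {i j : Fin (n + 1)} (hij : i ≠ j)
    (hpat : ∀ J : Finset (Fin (n + 1)), tightSet α m J → (i ∈ J ↔ j ∈ J))
    (hmi : 0 < m i) (hmj : 0 < m j) :
    ∃ ε : ℝ, 0 < ε ∧ ∀ c : ℝ, |c| ≤ ε →
      (m + c • (Pi.single i (1 : ℝ) - Pi.single j 1)) ∈ homSIM α := by
  classical
  set d' : Fin (n + 1) → ℝ := Pi.single i (1 : ℝ) - Pi.single j 1 with hd'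
  set P : Finset (Fin n) → Prop :=
    fun I => I.Nonempty ∧ ∑ k ∈ I, m k.castSucc < gfun α I.card with hP
  set B : Finset ℝ := insert (m i) (insert (m j)
    ((Finset.univ.filter P).image (fun I => gfun α I.card - ∑ k ∈ I, m k.castSucc))) with hB
  have hBne : B.Nonempty := ⟨m i, Finset.mem_insert_self _ _⟩
  set ε : ℝ := B.min' hBne with hε
  have hεpos : 0 < ε := by
    rw [hε, Finset.lt_min'_iff]
    intro y hy
    rw [hB] at hy
    rcases Finset.mem_insert.mp hy with rfl | hy
    · exact hmi
    rcases Finset.mem_insert.mp hy with rfl | hy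
    · exact hmj
    obtain ⟨I, hI, rfl⟩ := Finset.mem_image.mp hy
    rw [Finset.mem_filter] at hI
    linarith [hI.2.2]
  have hεle : ∀ y ∈ B, ε ≤ y := fun y hy => Finset.min'_le B y hy
  have hεmi : ε ≤ m i := hεle _ (Finset.mem_insert_self _ _)
  have hεmj : ε ≤ m j := hεle _ (Finset.mem_insert.mpr (Or.inr (Finset.mem_insert_self _ _)))
  refine ⟨ε, hεpos, ?_⟩
  intro c hc
  have habs1 := abs_le.mp hc
  rw [mem_homSIM_iff]
  have happ : ∀ k, (m + c • d') k = m k + c * d' k := fun k => rfl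
  have hsum' : ∀ J : Finset (Fin (n + 1)), ∑ k ∈ J, d' k
      = (if i ∈ J then (1 : ℝ) else 0) - (if j ∈ J then (1 : ℝ) else 0) := by
    intro J
    rw [hd']
    exact single_sum_eq J
  have hd'i : d' i = 1 := by simp [hd', hij]
  have hd'j : d' j = -1 := by simp [hd', hij.symm]
  have hd'k : ∀ k, k ≠ i → k ≠ j → d' k = 0 := by
    intro k hki hkj
    simp [hd', Pi.single_apply, hki, hkj]
  refine ⟨?_, ?_, ?_⟩
  · -- nonnegativity
    intro k
    rw [happ]
    by_cases hki : k.castSucc = i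
    · rw [hki, hd'i]; linarith
    by_cases hkj : k.castSucc = j
    · rw [hkj, hd'j]; linarith [homSIM_nonneg hm j]
    · rw [hd'k _ hki hkj]
      simpa using homSIM_nonneg hm k.castSucc
  · -- subset constraints
    intro I hIne
    have hsplit : ∑ k ∈ I, (m + c • d') k.castSucc
        = ∑ k ∈ I, m k.castSucc + c * ∑ k ∈ I.map Fin.castSuccEmb, d' k := by
      rw [Finset.sum_map, Finset.mul_sum, ← Finset.sum_add_distrib]
      rfl
    set J : Finset (Fin (n + 1)) := I.map Fin.castSuccEmb with hJ
    have hJlast : Fin.last n ∉ J := by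
      rw [hJ]
      intro hc'
      obtain ⟨x, _, hx⟩ := Finset.mem_map.mp hc'
      exact (Fin.castSucc_lt_last x).ne hx
    have hJcard : J.card = I.card := by rw [hJ, Finset.card_map]
    have hJsum : ∑ k ∈ J, m k = ∑ k ∈ I, m k.castSucc := by
      rw [hJ, Finset.sum_map]; rfl
    rw [hsplit]
    by_cases ht : ∑ k ∈ I, m k.castSucc = gfun α I.card
    · -- tight case
      have hJt : tightSet α m J := Or.inr ⟨hJlast, (by
        obtain ⟨x, hx⟩ := hIne
        exact ⟨Fin.castSuccEmb x, Finset.mem_map_of_mem _ hx⟩), by rw [hJsum, hJcard, ht]⟩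
      have := hpat J hJt
      rw [hsum']
      by_cases hiJ : i ∈ J
      · rw [if_pos hiJ, if_pos (this.mp hiJ)]
        rw [ht]; ring_nf; exact le_refl _
      · rw [if_neg hiJ, if_neg (fun h => hiJ (this.mpr h))]
        rw [ht]; ring_nf; exact le_refl _
    · -- slack case
      have hub : ∑ k ∈ I, m k.castSucc ≤ gfun α I.card := by
        rw [mem_homSIM_iff] at hm
        exact hm.2.1 I hIne
      have hslack : ε ≤ gfun α I.card - ∑ k ∈ I, m k.castSucc := by
        apply hεle
        rw [hB]
        apply Finset.mem_insert.mpr; right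
        apply Finset.mem_insert.mpr; right
        exact Finset.mem_image.mpr ⟨I, Finset.mem_filter.mpr ⟨Finset.mem_univ _,
          hIne, lt_of_le_of_ne hub ht⟩, rfl⟩
      have hdb : c * ∑ k ∈ J, d' k ≤ ε := by
        rw [hsum']
        have h1 : ((if i ∈ J then (1:ℝ) else 0) - (if j ∈ J then (1:ℝ) else 0)) ≤ 1 := by
          split_ifs <;> norm_num
        have h2 : (-1 : ℝ) ≤ ((if i ∈ J then (1:ℝ) else 0) - (if j ∈ J then (1:ℝ) else 0)) := by
          split_ifs <;> norm_num
        nlinarith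
      linarith
  · -- total sum
    have : ∑ k, (m + c • d') k = ∑ k, m k + c * ∑ k, d' k := by
      rw [Finset.mul_sum, ← Finset.sum_add_distrib]; rfl
    rw [this, hsum', if_pos (Finset.mem_univ i), if_pos (Finset.mem_univ j)]
    rw [mem_homSIM_iff] at hm
    rw [hm.2.2]; ring
end Part5

/-- every edge of the homogeneous SIM-body is parallel to the difference of two
standard basis vectors; i.e., the homogeneous SIM-body is a generalized permutahedron. -/
theorem homogeneous_sim_body_generalized_permutahedron (n : ℕ) (hn : 1 ≤ n) (α : Fin n → ℝ)
    (hdec : ∀ i j : Fin n, i ≤ j → α j ≤ α i) (hnonneg : ∀ i, 0 ≤ α i) :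
    ∀ v w : Fin (n + 1) → ℝ, v ≠ w → v ∈ homSIM α → w ∈ homSIM α →
      IsExtreme ℝ (homSIM α) (segment ℝ v w) →
      ∃ i j : Fin (n + 1), i ≠ j ∧ ∃ c : ℝ,
        v - w = c • (Pi.single i (1 : ℝ) - Pi.single j (1 : ℝ)) := by
  classical
  intro v w hvw hv hw hext
  set d : Fin (n + 1) → ℝ := v - w with hd
  set m : Fin (n + 1) → ℝ := fun k => (v k + w k) / 2 with hm'
  have hmid : ∀ k, m k = (v k + w k) / 2 := fun k => rfl
  have hvmem := (mem_homSIM_iff α v).mp hv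
  have hwmem := (mem_homSIM_iff α w).mp hw
  have hm : m ∈ homSIM α := by
    rw [mem_homSIM_iff]
    refine ⟨fun i => ?_, fun I hI => ?_, ?_⟩
    · have := hvmem.1 i; have := hwmem.1 i
      rw [hmid]; linarith
    · have h1 := hvmem.2.1 I hI
      have h2 := hwmem.2.1 I hI
      have : ∑ i ∈ I, m i.castSucc = (∑ i ∈ I, v i.castSucc + ∑ i ∈ I, w i.castSucc) / 2 := by
        rw [← Finset.sum_add_distrib, Finset.sum_div]
      rw [this]; linarith
    · have : ∑ i, m i = (∑ i, v i + ∑ i, w i) / 2 := by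
        rw [← Finset.sum_add_distrib, Finset.sum_div]
      rw [this, hvmem.2.2, hwmem.2.2]; ring
  have hd0 : ∀ J : Finset (Fin (n + 1)), tightSet α m J → ∑ k ∈ J, d k = 0 :=
    fun J hJ => tight_diff_zero hv hw hm hmid hJ
  have hdapp : ∀ k, d k = v k - w k := fun k => rfl
  have hdne : ∃ k, d k ≠ 0 := by
    by_contra hc
    push_neg at hc
    apply hvw
    funext k
    have := hc k
    rw [hdapp] at this
    linarith
  set S : Finset (Fin (n + 1)) := Finset.univ.filter (fun k => d k ≠ 0) with hS
  have hSmem : ∀ k, k ∈ S ↔ d k ≠ 0 := by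
    intro k; rw [hS, Finset.mem_filter]; simp
  have htot : ∑ k ∈ S, d k = 0 := by
    rw [hS, Finset.sum_filter_of_ne (fun x _ h => h)]
    exact hd0 Finset.univ (Or.inl rfl)
  by_cases hbig : 3 ≤ S.card
  · -- contradiction case
    exfalso
    obtain ⟨i, j, hij, hdi, hdj, hpat⟩ :=
      exists_same_pattern_pair hm hdec hnonneg hd0 hdne
    have hmpos : ∀ k, d k ≠ 0 → 0 < m k := by
      intro k hk
      rw [hmid]
      have h1 := homSIM_nonneg hv k
      have h2 := homSIM_nonneg hw k
      rcases lt_or_eq_of_le h1 with h | h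
      · linarith
      rcases lt_or_eq_of_le h2 with h' | h'
      · linarith
      · exfalso; apply hk; rw [hdapp]; linarith
    obtain ⟨ε, hεpos, hεmem⟩ := perturb_mem hm hij hpat (hmpos i hdi) (hmpos j hdj)
    set e : Fin (n + 1) → ℝ := Pi.single i (1 : ℝ) - Pi.single j 1 with he
    have hppmem : (m + ε • e) ∈ homSIM α := hεmem ε (le_of_eq (abs_of_pos hεpos))
    have hpmmem : (m + (-ε) • e) ∈ homSIM α := hεmem (-ε) (le_of_eq (by rw [abs_neg]; exact abs_of_pos hεpos))
    have hmseg : m ∈ segment ℝ v w := by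
      refine ⟨1/2, 1/2, by norm_num, by norm_num, by norm_num, ?_⟩
      funext k
      show (1/2 : ℝ) * v k + (1/2 : ℝ) * w k = m k
      rw [hmid]; ring
    have hmopen : m ∈ openSegment ℝ (m + (-ε) • e) (m + ε • e) := by
      refine ⟨1/2, 1/2, by norm_num, by norm_num, by norm_num, ?_⟩
      funext k
      show (1/2 : ℝ) * (m k + (-ε) * e k) + (1/2 : ℝ) * (m k + ε * e k) = m k
      ring
    obtain ⟨hpm, hpp⟩ := And.intro (hext.2 hpmmem hppmem hmseg hmopen)
      (hext.right_mem_of_mem_openSegment hpmmem hppmem hmseg hmopen)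
    obtain ⟨a1, b1, _, _, hab1, he1⟩ := hpm
    obtain ⟨a2, b2, _, _, hab2, he2⟩ := hpp
    -- pick k0 in S, different from i and j
    have hk0 : ((S.erase i).erase j).Nonempty := by
      rw [← Finset.card_pos]
      have h1 := Finset.card_erase_le (a := i) (s := S)
      have h2 : S.card - 1 ≤ (S.erase i).card := Finset.pred_card_le_card_erase
      have h3 : (S.erase i).card - 1 ≤ ((S.erase i).erase j).card := Finset.pred_card_le_card_erase
      omega
    obtain ⟨k0, hk0mem⟩ := hk0
    have hk0j : k0 ≠ j := (Finset.mem_erase.mp hk0mem).1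
    have hk0i : k0 ≠ i := (Finset.mem_erase.mp (Finset.mem_erase.mp hk0mem).2).1
    have hk0S : k0 ∈ S := (Finset.mem_erase.mp (Finset.mem_erase.mp hk0mem).2).2
    have hdk0 : d k0 ≠ 0 := (hSmem k0).mp hk0S
    have heval : ∀ k, a1 * v k + b1 * w k = m k + (-ε) * e k := by
      intro k
      exact congrFun he1 k
    have heval2 : ∀ k, a2 * v k + b2 * w k = m k + ε * e k := by
      intro k
      exact congrFun he2 k
    have hsub : ∀ k, (a2 - a1) * d k = 2 * ε * e k := by
      intro k
      have h1 := heval k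
      have h2 := heval2 k
      have hb1 : b1 = 1 - a1 := by linarith
      have hb2 : b2 = 1 - a2 := by linarith
      rw [hb1] at h1
      rw [hb2] at h2
      rw [hdapp]
      nlinarith [h1, h2]
    have hek0 : e k0 = 0 := by
      rw [he]
      simp only [Pi.sub_apply]
      rw [Pi.single_apply, Pi.single_apply, if_neg hk0i, if_neg hk0j]
      ring
    have ha : a2 = a1 := by
      have := hsub k0
      rw [hek0] at this
      have : (a2 - a1) * d k0 = 0 := by linarith
      rcases mul_eq_zero.mp this with h | h
      · linarith
      · exact absurd h hdk0
    have hei : e i = 1 := by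
      rw [he]
      simp only [Pi.sub_apply]
      rw [Pi.single_apply, Pi.single_apply, if_pos rfl, if_neg hij]
      ring
    have := hsub i
    rw [hei, ha] at this
    have : 2 * ε = 0 := by linarith
    linarith
  · -- small support case
    have hSne : S.Nonempty := by
      obtain ⟨k, hk⟩ := hdne
      exact ⟨k, (hSmem k).mpr hk⟩
    have hc1 : S.card ≠ 1 := by
      intro h1
      obtain ⟨i, hi⟩ := Finset.card_eq_one.mp h1
      rw [hi, Finset.sum_singleton] at htot
      exact ((hSmem i).mp (hi ▸ Finset.mem_singleton_self i)) htot
    have hcard : S.card = 2 := by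
      have := Finset.card_pos.mpr hSne
      omega
    obtain ⟨i, j, hij, hSij⟩ := Finset.card_eq_two.mp hcard
    have hdi : d i ≠ 0 := (hSmem i).mp (hSij ▸ Finset.mem_insert_self i {j})
    have hsum2 : d i + d j = 0 := by
      rw [hSij, Finset.sum_insert (by simp [hij]), Finset.sum_singleton] at htot
      exact htot
    refine ⟨i, j, hij, d i, ?_⟩
    funext k
    simp only [Pi.smul_apply, Pi.sub_apply, smul_eq_mul]
    rw [Pi.single_apply, Pi.single_apply]
    by_cases hki : k = i
    · rw [if_pos hki, if_neg (hki ▸ hij), hki]; ring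
    by_cases hkj : k = j
    · rw [if_neg hki, if_pos hkj, hkj]
      linarith
    · rw [if_neg hki, if_neg hkj]
      have : k ∉ S := by
        rw [hSij]
        simp [hki, hkj]
      have hk0 : d k = 0 := by
        by_contra hc
        exact this ((hSmem k).mpr hc)
      rw [hk0]; ring
end

section
/- Let n ≥ 1 and let p be a price schedule for n items. Let I ⊆ [n] be such that the n-dimensional Lebesgue measure of the region D_I is positive. Then p_I < p_J for every subset J ⊆ [n] with J ⊋ I. -/
open Finset MeasureTheory

/-- The region `D_I` of a price schedule `p`: the set of valuations in the unit cube for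
which buying the bundle `I` maximizes the buyer's utility. -/
def region {n : ℕ} (p : Finset (Fin n) → ℝ) (I : Finset (Fin n)) : Set (Fin n → ℝ) :=
  {x | (∀ i, x i ∈ Set.Icc (0 : ℝ) 1) ∧
    ∀ J : Finset (Fin n), ∑ j ∈ J, x j - p J ≤ ∑ i ∈ I, x i - p I}

lemma hyperplane_vol_zero {n : ℕ} (j : Fin n) :
    volume {x : Fin n → ℝ | x j = 0} = 0 := by
  have : {x : Fin n → ℝ | x j = 0}
      = (LinearMap.ker (LinearMap.proj j : (Fin n → ℝ) →ₗ[ℝ] ℝ) : Set (Fin n → ℝ)) := by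
    ext x; simp [LinearMap.mem_ker]
  rw [this]
  apply MeasureTheory.Measure.addHaar_submodule
  intro h
  have h1 : (fun _ => (1:ℝ)) ∈ LinearMap.ker (LinearMap.proj j : (Fin n → ℝ) →ₗ[ℝ] ℝ) := by
    rw [h]; trivial
  simp at h1

/-- if the region `D_I` has positive `n`-dimensional Lebesgue measure, then
`p_I < p_J` for every strict superset `J ⊋ I`. -/
theorem price_strict_mono_of_pos_volume (n : ℕ) (hn : 1 ≤ n) (p : Finset (Fin n) → ℝ)
    (hp0 : p ∅ = 0) (I : Finset (Fin n)) (hvol : 0 < volume (region p I)) :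
    ∀ J : Finset (Fin n), I ⊂ J → p I < p J := by
  intro J hIJ
  by_contra h
  push_neg at h
  obtain ⟨j, hjJ, hjI⟩ := Finset.exists_of_ssubset hIJ
  have hsub : region p I ⊆ {x : Fin n → ℝ | x j = 0} := by
    rintro x ⟨hx1, hx2⟩
    have h1 := hx2 J
    have hsum : ∑ k ∈ J \ I, x k + ∑ i ∈ I, x i = ∑ k ∈ J, x k :=
      Finset.sum_sdiff hIJ.subset
    have h2 : ∑ k ∈ J \ I, x k ≤ p J - p I := by linarith
    have hnn : ∀ k ∈ J \ I, 0 ≤ x k := fun k _ => (hx1 k).1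
    have h3 : x j ≤ ∑ k ∈ J \ I, x k :=
      Finset.single_le_sum hnn (Finset.mem_sdiff.mpr ⟨hjJ, hjI⟩)
    have h4 : 0 ≤ x j := (hx1 j).1
    simp only [Set.mem_setOf_eq]
    linarith
  have : volume (region p I) ≤ volume {x : Fin n → ℝ | x j = 0} := measure_mono hsub
  rw [hyperplane_vol_zero j] at this
  exact absurd this hvol.not_ge
end

section
/- Let n ≥ 1 and let p be a price schedule for n items. Let I ⊆ [n] be such that vol_n(D_J) > 0 for every subset J ⊆ I. Then for every J ⊆ I, the coordinate projection of D_J onto the coordinates indexed by I satisfies π_I(D_J) = {x ∈ [0,1]^I : Σ_{j∈J} x_j − p_J ≥ Σ_{j∈K} x_j − p_K for all K ⊆ I}. -/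
open Finset MeasureTheory

/-- The coordinate projection `π_I` of a subset of `ℝⁿ` onto the coordinates in `I`. -/
def projSet {n : ℕ} (I : Finset (Fin n)) (S : Set (Fin n → ℝ)) : Set ({i // i ∈ I} → ℝ) :=
  (fun x (i : {i // i ∈ I}) => x i.1) '' S

lemma sum_filter_eq {n : ℕ} {I K : Finset (Fin n)} (hK : K ⊆ I) (x : Fin n → ℝ) :
    ∑ j ∈ Finset.univ.filter (fun j : {i // i ∈ I} => j.1 ∈ K), x j.1 = ∑ j ∈ K, x j := by
  refine Finset.sum_bij' (fun j _ => j.1) (fun j hj => ⟨j, hK hj⟩) ?_ ?_ ?_ ?_ ?_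
  · intro a ha; simpa using (Finset.mem_filter.mp ha).2
  · intro a ha; simp [ha]
  · intro a ha; rfl
  · intro a ha; rfl
  · intro a ha; rfl

/-- if all sub-bundle regions `D_J`, `J ⊆ I`, have positive volume, then for
every `J ⊆ I` the projection `π_I(D_J)` is cut out inside `[0,1]^I` by the inequalities
involving only bundles `K ⊆ I`. -/
theorem projection_shape (n : ℕ) (hn : 1 ≤ n) (p : Finset (Fin n) → ℝ) (hp0 : p ∅ = 0)
    (I : Finset (Fin n)) (hvol : ∀ J ⊆ I, 0 < volume (region p J)) :
    ∀ J ⊆ I, projSet I (region p J) =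
      {y : {i // i ∈ I} → ℝ | (∀ i, y i ∈ Set.Icc (0 : ℝ) 1) ∧
        ∀ K ⊆ I,
          ∑ j ∈ Finset.univ.filter (fun j : {i // i ∈ I} => j.1 ∈ K), y j - p K ≤
            ∑ j ∈ Finset.univ.filter (fun j : {i // i ∈ I} => j.1 ∈ J), y j - p J} := by
  intro J hJ
  ext y
  constructor
  · rintro ⟨x, ⟨hx01, hxle⟩, rfl⟩
    refine ⟨fun i => hx01 i.1, fun K hK => ?_⟩
    rw [sum_filter_eq hK x, sum_filter_eq hJ x]
    exact hxle K
  · rintro ⟨hy01, hyle⟩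
    classical
    set x : Fin n → ℝ := fun i => if h : i ∈ I then y ⟨i, h⟩ else 0 with hxdef
    have hproj : (fun (i : {i // i ∈ I}) => x i.1) = y := by
      funext i; simp [hxdef, i.2]
    have hsum : ∀ L ⊆ I,
        ∑ j ∈ Finset.univ.filter (fun j : {i // i ∈ I} => j.1 ∈ L), y j = ∑ j ∈ L, x j := by
      intro L hL
      rw [← sum_filter_eq hL x]
      exact Finset.sum_congr rfl fun j _ => by rw [← hproj]
    refine ⟨x, ⟨?_, ?_⟩, hproj⟩
    · intro i
      by_cases h : i ∈ I
      · simpa [hxdef, h] using hy01 ⟨i, h⟩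
      · simp [hxdef, h]
    · intro K
      -- zero extension: sum over K equals sum over K ∩ I
      have hKI : ∑ j ∈ K ∩ I, x j = ∑ j ∈ K, x j := by
        refine Finset.sum_subset Finset.inter_subset_left fun j hj hj' => ?_
        have : j ∉ I := fun h => hj' (Finset.mem_inter.mpr ⟨hj, h⟩)
        simp [hxdef, this]
      -- a point of region p (K ∩ I) shows p (K ∩ I) ≤ p K
      have hne : (region p (K ∩ I)).Nonempty := by
        rcases Set.eq_empty_or_nonempty (region p (K ∩ I)) with h | h
        · have := hvol (K ∩ I) Finset.inter_subset_right
          simp [h] at this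
        · exact h
      obtain ⟨z, hz01, hzle⟩ := hne
      have h1 := hzle K
      have h2 : ∑ j ∈ K ∩ I, z j ≤ ∑ j ∈ K, z j :=
        Finset.sum_le_sum_of_subset_of_nonneg Finset.inter_subset_left
          (fun j _ _ => (hz01 j).1)
      have hpKI : p (K ∩ I) ≤ p K := by linarith
      have hmain := hyle (K ∩ I) Finset.inter_subset_right
      rw [hsum (K ∩ I) Finset.inter_subset_right, hsum J hJ] at hmain
      linarith
end

section
/- Let n ≥ 1 and let p be a submodular price schedule for n items. Then for every I ⊆ [n], identifying ℝⁿ with ℝ^I × ℝ^{I^c} where I^c = [n]∖I, the region D_I factors as the product D_I = π_I(D_I) × π_{I^c}(D_I). Moreover, for every i ∈ I, the i-th upper boundary D_I^i = {x_{−i} : (1, x_{−i}) ∈ D_I} (where x_{−i} denotes the vector of all coordinates except the i-th, and (1, x_{−i}) the point with i-th coordinate 1 and the other coordinates given by x_{−i}) factors as D_I^i = π_{I∖{i}}(π_I(D_I)) × π_{I^c}(D_I). -/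
open Finset MeasureTheory

private lemma region_iff {n : ℕ} (p : Finset (Fin n) → ℝ)
    (hsub : ∀ I J : Finset (Fin n), p (I ∪ J) + p (I ∩ J) ≤ p I + p J)
    (I : Finset (Fin n)) (x : Fin n → ℝ) :
    x ∈ region p I ↔ (∀ i, x i ∈ Set.Icc (0 : ℝ) 1) ∧
      (∀ J ⊆ I, ∑ j ∈ J, x j - p J ≤ ∑ i ∈ I, x i - p I) ∧
      (∀ J, I ⊆ J → ∑ j ∈ J, x j - p J ≤ ∑ i ∈ I, x i - p I) := by
  constructor
  · rintro ⟨hb, h⟩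
    exact ⟨hb, fun J _ => h J, fun J _ => h J⟩
  · rintro ⟨hb, h1, h2⟩
    refine ⟨hb, fun J => ?_⟩
    have ha := h1 (J ∩ I) inter_subset_right
    have hc := h2 (J ∪ I) subset_union_right
    have hs := hsub J I
    have hsum : ∑ j ∈ J ∪ I, x j + ∑ j ∈ J ∩ I, x j = ∑ j ∈ J, x j + ∑ j ∈ I, x j :=
      Finset.sum_union_inter
    linarith

/-- for a submodular price schedule, the region `D_I` factors as the product
`π_I(D_I) × π_{I^c}(D_I)` (expressed pointwise under the identification
`ℝⁿ ≅ ℝ^I × ℝ^{I^c}`), and the `i`-th upper boundary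
`D_I^i = {x_{−i} : (1, x_{−i}) ∈ D_I}` factors as
`π_{I∖{i}}(π_I(D_I)) × π_{I^c}(D_I)`. -/
theorem region_product_factorization (n : ℕ) (hn : 1 ≤ n) (p : Finset (Fin n) → ℝ)
    (hp0 : p ∅ = 0)
    (hsub : ∀ I J : Finset (Fin n), p (I ∪ J) + p (I ∩ J) ≤ p I + p J)
    (I : Finset (Fin n)) :
    (∀ x : Fin n → ℝ, x ∈ region p I ↔
      ((fun i : {i // i ∈ I} => x i.1) ∈ projSet I (region p I) ∧
        (fun i : {i // i ∈ Iᶜ} => x i.1) ∈ projSet Iᶜ (region p I))) ∧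
    (∀ i : Fin n, ∀ hi : i ∈ I, ∀ y : {j : Fin n // j ≠ i} → ℝ,
      ((fun j : Fin n => if h : j = i then (1 : ℝ) else y ⟨j, h⟩) ∈ region p I ↔
        ((fun j : {j // j ∈ I.erase i} => y ⟨j.1, Finset.ne_of_mem_erase j.2⟩) ∈
            projSet (I.erase i) (region p I) ∧
          (fun j : {j // j ∈ Iᶜ} =>
              y ⟨j.1, by
                intro hji
                exact Finset.mem_compl.mp j.2 (by rw [hji]; exact hi)⟩) ∈
            projSet Iᶜ (region p I)))) := by
  constructor
  · intro x
    constructor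
    · intro hx
      exact ⟨⟨x, hx, rfl⟩, ⟨x, hx, rfl⟩⟩
    · rintro ⟨⟨y, hy, hyx⟩, ⟨z, hz, hzx⟩⟩
      have hyx' : ∀ j, j ∈ I → y j = x j := fun j hj => congrFun hyx ⟨j, hj⟩
      have hzx' : ∀ j, j ∉ I → z j = x j := fun j hj =>
        congrFun hzx ⟨j, Finset.mem_compl.mpr hj⟩
      have hy' := (region_iff p hsub I y).mp hy
      have hz' := (region_iff p hsub I z).mp hz
      rw [region_iff p hsub I]
      refine ⟨fun j => ?_, fun J hJ => ?_, fun J hJ => ?_⟩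
      · by_cases hj : j ∈ I
        · rw [← hyx' j hj]; exact hy'.1 j
        · rw [← hzx' j hj]; exact hz'.1 j
      · have e1 : ∑ j ∈ J, x j = ∑ j ∈ J, y j :=
          Finset.sum_congr rfl fun j hj => (hyx' j (hJ hj)).symm
        have e2 : ∑ j ∈ I, x j = ∑ j ∈ I, y j :=
          Finset.sum_congr rfl fun j hj => (hyx' j hj).symm
        rw [e1, e2]; exact hy'.2.1 J hJ
      · have e1 : ∑ j ∈ J \ I, x j = ∑ j ∈ J \ I, z j :=
          Finset.sum_congr rfl fun j hj => (hzx' j (Finset.mem_sdiff.mp hj).2).symm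
        have s1 : ∑ j ∈ J \ I, x j + ∑ j ∈ I, x j = ∑ j ∈ J, x j :=
          Finset.sum_sdiff hJ
        have s2 : ∑ j ∈ J \ I, z j + ∑ j ∈ I, z j = ∑ j ∈ J, z j :=
          Finset.sum_sdiff hJ
        have := hz'.2.2 J hJ
        linarith
  · intro i hi y
    set x : Fin n → ℝ := fun j => if h : j = i then (1 : ℝ) else y ⟨j, h⟩ with hxdef
    constructor
    · intro hx
      constructor
      · refine ⟨x, hx, funext fun j => ?_⟩
        have hji : j.1 ≠ i := Finset.ne_of_mem_erase j.2
        simp only [hxdef, dif_neg hji]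
      · refine ⟨x, hx, funext fun j => ?_⟩
        have hji : j.1 ≠ i := by
          intro h
          exact Finset.mem_compl.mp j.2 (h ▸ hi)
        simp only [hxdef, dif_neg hji]
    · rintro ⟨⟨w, hw, hwy⟩, ⟨z, hz, hzy⟩⟩
      have hwy' : ∀ j (hj : j ∈ I.erase i), w j = y ⟨j, Finset.ne_of_mem_erase hj⟩ :=
        fun j hj => congrFun hwy ⟨j, hj⟩
      have hzy' : ∀ j (hj : j ∈ Iᶜ), w j = w j := fun _ _ => rfl
      have hzy'' : ∀ j (hj : j ∉ I), z j = x j := by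
        intro j hj
        have hji : j ≠ i := fun h => hj (h ▸ hi)
        have := congrFun hzy ⟨j, Finset.mem_compl.mpr hj⟩
        simp only [hxdef, dif_neg hji]
        exact this
      have hw' := (region_iff p hsub I w).mp hw
      have hz' := (region_iff p hsub I z).mp hz
      rw [region_iff p hsub I]
      refine ⟨fun j => ?_, fun J hJ => ?_, fun J hJ => ?_⟩
      · by_cases hji : j = i
        · simp [hxdef, hji]
        · by_cases hjI : j ∈ I
          · have : x j = w j := by
              simp only [hxdef, dif_neg hji]
              exact (hwy' j (Finset.mem_erase.mpr ⟨hji, hjI⟩)).symm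
            rw [this]; exact hw'.1 j
          · rw [← hzy'' j hjI]; exact hz'.1 j
      · -- J ⊆ I: use w, with x i = 1 ≥ w i on I \ J
        have hle : ∀ j ∈ I, w j ≤ x j := by
          intro j hj
          by_cases hji : j = i
          · subst hji
            simp only [hxdef, dif_pos rfl]
            exact (hw'.1 j).2
          · simp only [hxdef, dif_neg hji]
            rw [hwy' j (Finset.mem_erase.mpr ⟨hji, hj⟩)]
        have e1 : ∑ j ∈ I \ J, w j ≤ ∑ j ∈ I \ J, x j :=
          Finset.sum_le_sum fun j hj => hle j (Finset.mem_sdiff.mp hj).1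
        have s1 : ∑ j ∈ I \ J, x j + ∑ j ∈ J, x j = ∑ j ∈ I, x j :=
          Finset.sum_sdiff hJ
        have s2 : ∑ j ∈ I \ J, w j + ∑ j ∈ J, w j = ∑ j ∈ I, w j :=
          Finset.sum_sdiff hJ
        have := hw'.2.1 J hJ
        linarith
      · have e1 : ∑ j ∈ J \ I, x j = ∑ j ∈ J \ I, z j :=
          Finset.sum_congr rfl fun j hj => (hzy'' j (Finset.mem_sdiff.mp hj).2).symm
        have s1 : ∑ j ∈ J \ I, x j + ∑ j ∈ I, x j = ∑ j ∈ J, x j :=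
          Finset.sum_sdiff hJ
        have s2 : ∑ j ∈ J \ I, z j + ∑ j ∈ I, z j = ∑ j ∈ J, z j :=
          Finset.sum_sdiff hJ
        have := hz'.2.2 J hJ
        linarith
end
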